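/- arXiv:0910.1884 — 8 statements merged into one kernel-verified Lean document; each statement's English description precedes it below -/
import Mathlib

section
/- If A is a set of positive integers with upper Banach density d*(A) > α for some 0 < α < 1, and B = A·A = {a·a' : a, a' ∈ A} is enumerated in increasing order as b_1 < b_2 < ..., then there exist infinitely many n such that b_{n+1} - b_n ≤ 16·α^{-3}. -/
/-- The upper Banach density of a set of natural numbers. -/
noncomputable def upperBanachDensity (A : Set ℕ) : ℝ :=
  Filter.limsup
    (fun K : ℕ => ⨆ x : ℕ, (Nat.card (A ∩ Set.Ioc x (x + K) : Set ℕ) : ℝ) / K)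
    Filter.atTop


lemma spread_lemma (x K e : ℕ) (U : Finset ℕ) (hU : ∀ u ∈ U, u ∈ Finset.Ioc x (x+K))
    (hgap : ∀ u ∈ U, ∀ w ∈ U, u < w → u + e + 1 ≤ w) :
    U.card ≤ (K-1)/(e+1) + 1 := by
  classical
  have key : ∀ u ∈ U, ∀ w ∈ U, u < w → (u - x - 1)/(e+1) < (w - x - 1)/(e+1) := by
    intro u hu w hw hlt
    have hu' := Finset.mem_Ioc.1 (hU u hu)
    have hw' := Finset.mem_Ioc.1 (hU w hw)
    have h0 := hgap u hu w hw hlt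
    have h1 : u - x - 1 + (e+1) ≤ w - x - 1 := by omega
    calc (u - x - 1)/(e+1) < (u - x - 1)/(e+1) + 1 := Nat.lt_succ_self _
      _ = (u - x - 1 + (e+1))/(e+1) := by rw [Nat.add_div_right _ (Nat.succ_pos e)]
      _ ≤ (w - x - 1)/(e+1) := Nat.div_le_div_right h1
  have := Finset.card_le_card_of_injOn (fun u => (u - x - 1)/(e+1))
    (fun u hu => by
      have hu' := Finset.mem_Ioc.1 (hU u hu)
      have : u - x - 1 ≤ K - 1 := by omega
      exact Finset.mem_range.2 (Nat.lt_succ_of_le (Nat.div_le_div_right this)))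
    (fun u hu w hw h => by
      by_contra hne
      rcases lt_or_gt_of_ne hne with hlt | hlt
      · exact absurd h (Nat.ne_of_lt (key u hu w hw hlt))
      · exact absurd h.symm (Nat.ne_of_lt (key w hw u hu hlt)))
  simpa using this

lemma core (α : ℝ) (hα0 : 0 < α) (hα1 : α < 1) (A : Set ℕ) (x K : ℕ)
    (hK : 8/α^2 + 4/α < (K:ℝ))
    (hcount : α * K ≤ ((A ∩ Set.Ioc x (x+K)).ncard : ℝ)) :
    ∃ u w g : ℕ, u ∈ A ∧ w ∈ A ∧ (u+g) ∈ A ∧ (w+g) ∈ A ∧ x < u ∧ u < w ∧ 0 < g ∧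
      ((g*(w-u) : ℕ) : ℝ) ≤ 16/α^3 := by
  classical
  set G : ℕ := ⌊2/α⌋₊ with hGdef
  set d : ℕ := ⌊16/(α^3*G)⌋₊ with hddef
  have hG1 : 1 ≤ G := Nat.le_floor (by rw [Nat.cast_one, le_div_iff₀ hα0]; linarith)
  have hGposR : (0:ℝ) < G := by exact_mod_cast hG1
  have hGle : (G:ℝ) ≤ 2/α := Nat.floor_le (by positivity)
  have hGgt : 2/α < (G:ℝ) + 1 := Nat.lt_floor_add_one _
  have hdle : (d:ℝ) ≤ 16/(α^3*G) := Nat.floor_le (by positivity)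
  have hdgt : 16/(α^3*(G:ℝ)) < (d:ℝ) + 1 := Nat.lt_floor_add_one _
  have hfin : (A ∩ Set.Ioc x (x+K)).Finite :=
    (Set.finite_Ioc x (x+K)).inter_of_right A
  set S : Finset ℕ := hfin.toFinset with hSdef
  have hmemS : ∀ t, t ∈ S ↔ t ∈ A ∧ t ∈ Set.Ioc x (x+K) := by
    intro t; rw [hSdef, Set.Finite.mem_toFinset]; exact Set.mem_inter_iff _ _ _
  have hcardS : α * K ≤ (S.card : ℝ) := by
    rwa [Set.ncard_eq_toFinset_card _ hfin] at hcount
  set P : ℕ → Prop := fun t => ∃ t', t' ∈ S ∧ t < t' ∧ t' ≤ t + G with hPdef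
  set S' : Finset ℕ := S.filter P with hS'def
  set f : ℕ → ℕ := fun t => if h : P t then Classical.choose h - t else 0 with hfdef
  have hf : ∀ t ∈ S', 1 ≤ f t ∧ f t ≤ G ∧ t + f t ∈ S := by
    intro t ht
    have hPt : P t := (Finset.mem_filter.1 ht).2
    obtain ⟨hmem, hlt, hle⟩ := Classical.choose_spec hPt
    simp only [hfdef, dif_pos hPt]
    refine ⟨by omega, by omega, ?_⟩
    have : t + (Classical.choose hPt - t) = Classical.choose hPt := by omega
    rwa [this]
  set Sbig : Finset ℕ := S \ S' with hSbigdef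
  have hSsub : ∀ u ∈ S, u ∈ Finset.Ioc x (x+K) := by
    intro u hu
    have := (hmemS u).1 hu
    exact Finset.mem_Ioc.2 this.2
  have hSbigcard : Sbig.card ≤ (K-1)/(G+1) + 1 := by
    apply spread_lemma x K G
    · intro u hu; exact hSsub u (Finset.mem_sdiff.1 hu).1
    · intro u hu w hw hlt
      obtain ⟨huS, huNS'⟩ := Finset.mem_sdiff.1 hu
      by_contra hcon
      exact huNS' (Finset.mem_filter.2 ⟨huS, ⟨w, (Finset.mem_sdiff.1 hw).1, hlt, by omega⟩⟩)
  have hsplit : S'.card + Sbig.card = S.card := by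
    have h1 : S' ⊆ S := Finset.filter_subset _ _
    have h2 : Sbig.card = S.card - S'.card := Finset.card_sdiff_of_subset h1
    have h3 := Finset.card_le_card h1
    omega
  set U : ℕ → Finset ℕ := fun g => S'.filter (fun t => f t = g) with hUdef
  have hcover : S' ⊆ (Finset.Icc 1 G).biUnion U := by
    intro t ht
    obtain ⟨h1, h2, _⟩ := hf t ht
    exact Finset.mem_biUnion.2 ⟨f t, Finset.mem_Icc.2 ⟨h1, h2⟩, Finset.mem_filter.2 ⟨ht, rfl⟩⟩
  have hsumle : S'.card ≤ ∑ g ∈ Finset.Icc 1 G, (U g).card :=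
    le_trans (Finset.card_le_card hcover) Finset.card_biUnion_le
  have hpig : ∃ g ∈ Finset.Icc 1 G, S'.card ≤ G * (U g).card := by
    apply Finset.exists_le_of_sum_le ⟨1, Finset.mem_Icc.2 ⟨le_refl 1, hG1⟩⟩
    calc ∑ _g ∈ Finset.Icc 1 G, S'.card = G * S'.card := by
          rw [Finset.sum_const, Nat.card_Icc, Nat.add_sub_cancel, smul_eq_mul]
      _ ≤ G * ∑ g ∈ Finset.Icc 1 G, (U g).card := Nat.mul_le_mul_left G hsumle
      _ = ∑ g ∈ Finset.Icc 1 G, G * (U g).card := by rw [Finset.mul_sum]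
  obtain ⟨g, hgIcc, hgcard⟩ := hpig
  have hg1 : 1 ≤ g := (Finset.mem_Icc.1 hgIcc).1
  have hgG : g ≤ G := (Finset.mem_Icc.1 hgIcc).2
  have hKpos : (0:ℝ) < K := by
    have : (0:ℝ) < 8/α^2 + 4/α := by positivity
    linarith
  -- the key counting inequality
  have claim : (K-1)/(d+1) + 1 < (U g).card := by
    by_contra hcon
    push_neg at hcon
    have hnat : S.card ≤ G * ((K-1)/(d+1) + 1) + ((K-1)/(G+1) + 1) := by
      calc S.card = S'.card + Sbig.card := hsplit.symm
        _ ≤ G * (U g).card + ((K-1)/(G+1) + 1) := Nat.add_le_add hgcard hSbigcard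
        _ ≤ G * ((K-1)/(d+1) + 1) + ((K-1)/(G+1) + 1) :=
            Nat.add_le_add_right (Nat.mul_le_mul_left G hcon) _
    have hQ1 : (((K-1)/(d+1) : ℕ) : ℝ) ≤ (K:ℝ)/((d:ℝ)+1) := by
      calc (((K-1)/(d+1) : ℕ) : ℝ) ≤ ((K-1 : ℕ):ℝ)/(((d:ℝ))+1) := by
            exact_mod_cast Nat.cast_div_le
        _ ≤ (K:ℝ)/((d:ℝ)+1) := by
            gcongr
            exact Nat.cast_le.2 (Nat.sub_le K 1)
    have hQ2 : (((K-1)/(G+1) : ℕ) : ℝ) ≤ (K:ℝ)/((G:ℝ)+1) := by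
      calc (((K-1)/(G+1) : ℕ) : ℝ) ≤ ((K-1 : ℕ):ℝ)/(((G:ℝ))+1) := by
            exact_mod_cast Nat.cast_div_le
        _ ≤ (K:ℝ)/((G:ℝ)+1) := by
            gcongr
            exact Nat.cast_le.2 (Nat.sub_le K 1)
    have hreal : α * K ≤ (G:ℝ) * ((K:ℝ)/((d:ℝ)+1) + 1) + ((K:ℝ)/((G:ℝ)+1) + 1) := by
      calc α * K ≤ (S.card : ℝ) := hcardS
        _ ≤ ((G * ((K-1)/(d+1) + 1) + ((K-1)/(G+1) + 1) : ℕ) : ℝ) := Nat.cast_le.2 hnat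
        _ = (G:ℝ) * ((((K-1)/(d+1):ℕ)):ℝ) + (G:ℝ) + ((((K-1)/(G+1):ℕ)):ℝ) + 1 := by
            push_cast; ring
        _ ≤ (G:ℝ) * ((K:ℝ)/((d:ℝ)+1)) + (G:ℝ) + (K:ℝ)/((G:ℝ)+1) + 1 := by gcongr
        _ = (G:ℝ) * ((K:ℝ)/((d:ℝ)+1) + 1) + ((K:ℝ)/((G:ℝ)+1) + 1) := by ring
    have ht1 : (K:ℝ)/((d:ℝ)+1) ≤ (K:ℝ)*(α^3*G)/16 := by
      have h1 : (K:ℝ)/((d:ℝ)+1) ≤ (K:ℝ)/(16/(α^3*G)) := by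
        have := hdgt.le
        gcongr
      have h2 : (K:ℝ)/(16/(α^3*(G:ℝ))) = (K:ℝ)*(α^3*G)/16 := div_div_eq_mul_div _ _ _
      linarith [h1, h2.le, h2.ge]
    have ht2 : (K:ℝ)/((G:ℝ)+1) ≤ (K:ℝ)*α/2 := by
      have h1 : (K:ℝ)/((G:ℝ)+1) ≤ (K:ℝ)/(2/α) := by
        have := hGgt.le
        gcongr
      have h2 : (K:ℝ)/(2/α) = (K:ℝ)*α/2 := div_div_eq_mul_div _ _ _
      linarith [h1, h2.le]
    have hGsq : (G:ℝ)*(G:ℝ) ≤ (2/α)*(2/α) := mul_le_mul hGle hGle hGposR.le (by positivity)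
    have hcontr : α*K ≤ α*K/4 + α*K/2 + 2/α + 1 := by
      calc α*K ≤ (G:ℝ)*((K:ℝ)/((d:ℝ)+1) + 1) + ((K:ℝ)/((G:ℝ)+1) + 1) := hreal
        _ ≤ (G:ℝ)*((K:ℝ)*(α^3*G)/16 + 1) + ((K:ℝ)*α/2 + 1) := by gcongr
        _ = (K:ℝ)*α^3*((G:ℝ)*(G:ℝ))/16 + G + K*α/2 + 1 := by ring
        _ ≤ (K:ℝ)*α^3*((2/α)*(2/α))/16 + 2/α + K*α/2 + 1 := by gcongr
        _ = α*K/4 + α*K/2 + 2/α + 1 := by field_simp; ring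
    have hK' : 8/α + 4 < α*K := by
      have := (mul_lt_mul_iff_right₀ hα0).2 hK
      have he : α * (8/α^2 + 4/α) = 8/α + 4 := by field_simp
      linarith [he ▸ this]
    have h9 : α*K/4 ≤ 2/α + 1 := by linarith
    have hq : (8:ℝ)/α = 4*(2/α) := by ring
    linarith
  -- extract a close pair in U g
  have hpair : ∃ u ∈ U g, ∃ w ∈ U g, u < w ∧ w ≤ u + d := by
    by_contra hcon
    push_neg at hcon
    have := spread_lemma x K d (U g)
      (fun u hu => hSsub u (Finset.filter_subset _ _ ((Finset.filter_subset _ _) hu)))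
      (fun u hu w hw hlt => by
        have := hcon u hu w hw hlt
        omega)
    omega
  obtain ⟨u, hu, w, hw, hlt, hwd⟩ := hpair
  have huS' : u ∈ S' := (Finset.mem_filter.1 hu).1
  have hwS' : w ∈ S' := (Finset.mem_filter.1 hw).1
  have hfu : f u = g := (Finset.mem_filter.1 hu).2
  have hfw : f w = g := (Finset.mem_filter.1 hw).2
  obtain ⟨_, _, huf⟩ := hf u huS'
  obtain ⟨_, _, hwf⟩ := hf w hwS'
  rw [hfu] at huf
  rw [hfw] at hwf
  have huA : u ∈ A := ((hmemS u).1 ((Finset.filter_subset _ _) huS')).1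
  have hwA : w ∈ A := ((hmemS w).1 ((Finset.filter_subset _ _) hwS')).1
  have hugA : u + g ∈ A := ((hmemS _).1 huf).1
  have hwgA : w + g ∈ A := ((hmemS _).1 hwf).1
  have hxu : x < u := ((hmemS u).1 ((Finset.filter_subset _ _) huS')).2.1
  refine ⟨u, w, g, huA, hwA, hugA, hwgA, hxu, hlt, hg1, ?_⟩
  have hnatb : g * (w - u) ≤ G * d := Nat.mul_le_mul hgG (by omega)
  calc ((g*(w-u) : ℕ) : ℝ) ≤ ((G*d : ℕ) : ℝ) := Nat.cast_le.2 hnatb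
    _ = (G:ℝ) * d := by push_cast; ring
    _ ≤ (G:ℝ) * (16/(α^3*G)) := by gcongr
    _ = 16/α^3 := by field_simp

lemma ncard_Ioc_nat (a b : ℕ) : (Set.Ioc a b).ncard = b - a := by
  rw [← Finset.coe_Ioc, Set.ncard_coe_finset, Nat.card_Ioc]

lemma count_le (A : Set ℕ) (a b : ℕ) : (A ∩ Set.Ioc a b).ncard ≤ b - a := by
  rw [← ncard_Ioc_nat a b]
  exact Set.ncard_le_ncard Set.inter_subset_right (Set.finite_Ioc a b)

lemma good_interval (α : ℝ) (hα0 : 0 < α) (A : Set ℕ)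
    (hd : α < upperBanachDensity A) (M K₀ : ℕ) :
    ∃ x K : ℕ, M ≤ x ∧ K₀ ≤ K ∧ α * K ≤ ((A ∩ Set.Ioc x (x+K)).ncard : ℝ) := by
  classical
  set D := upperBanachDensity A with hD
  set β := (α + D)/2 with hβ
  have hαβ : α < β := by rw [hβ]; linarith
  have hβD : β < D := by rw [hβ]; linarith
  have hβ0 : 0 < β := lt_trans hα0 hαβ
  have hβα : 0 < β - α := by linarith
  set f : ℕ → ℝ :=
    fun K : ℕ => ⨆ x : ℕ, (Nat.card (A ∩ Set.Ioc x (x + K) : Set ℕ) : ℝ) / K with hf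
  have hnn : ∀ K, 0 ≤ f K := fun K => Real.iSup_nonneg (fun x => by positivity)
  have hcb : Filter.IsCoboundedUnder (· ≤ ·) Filter.atTop f :=
    Filter.isCoboundedUnder_le_of_le Filter.atTop hnn
  have hfreq : ∃ᶠ K in Filter.atTop, β < f K :=
    Filter.frequently_lt_of_lt_limsup hcb hβD
  -- choose a large K
  set R : ℝ := (M + K₀ + M/(β-α) + M + 1)/β with hR
  obtain ⟨K, hKK₁, hKf⟩ := Filter.frequently_atTop.1 hfreq (K₀ + 1 + ⌈R⌉₊)
  have hK0K : K₀ + 1 ≤ K := le_trans (by omega) hKK₁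
  have hK1 : 1 ≤ K := by omega
  have hKpos : (0:ℝ) < K := by exact_mod_cast hK1
  have hβK : M + K₀ + M/(β-α) + M + 1 ≤ β * K := by
    have h1 : R ≤ (K:ℝ) := by
      calc R ≤ (⌈R⌉₊ : ℝ) := Nat.le_ceil R
        _ ≤ (K : ℝ) := by
            have : ⌈R⌉₊ ≤ K := le_trans (by omega) hKK₁
            exact_mod_cast this
    calc M + K₀ + M/(β-α) + (M:ℝ) + 1 = R * β := by rw [hR]; field_simp
      _ ≤ (K:ℝ) * β := mul_le_mul_of_nonneg_right h1 hβ0.le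
      _ = β * K := mul_comm _ _
  -- extract x with large count
  have hbdd : BddAbove (Set.range (fun x : ℕ =>
      (Nat.card (A ∩ Set.Ioc x (x + K) : Set ℕ) : ℝ) / K)) := by
    refine ⟨(K:ℝ), ?_⟩
    rintro y ⟨x, rfl⟩
    have h1 : Nat.card (A ∩ Set.Ioc x (x + K) : Set ℕ) ≤ K := by
      rw [Nat.card_coe_set_eq]
      have h := count_le A x (x+K)
      rwa [Nat.add_sub_cancel_left] at h
    calc (Nat.card (A ∩ Set.Ioc x (x + K) : Set ℕ) : ℝ) / K ≤ (K:ℝ)/K := by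
          gcongr
      _ ≤ K := by rw [div_self hKpos.ne']; exact_mod_cast hK1
  obtain ⟨x, hx⟩ := (lt_ciSup_iff hbdd).1 hKf
  rw [Nat.card_coe_set_eq] at hx
  have hcount : β * K < ((A ∩ Set.Ioc x (x+K)).ncard : ℝ) := (lt_div_iff₀ hKpos).1 hx
  by_cases hxM : M ≤ x
  · refine ⟨x, K, hxM, by omega, ?_⟩

    calc α * K ≤ β * K := mul_le_mul_of_nonneg_right hαβ.le hKpos.le
      _ ≤ _ := hcount.le
  · -- shift the interval
    push_neg at hxM
    set n := (A ∩ Set.Ioc x (x+K)).ncard with hn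
    have hcKn : (n:ℝ) ≤ K := by
      have h := count_le A x (x+K)
      rw [Nat.add_sub_cancel_left] at h
      exact_mod_cast h
    have hMK : (M:ℝ) < β * K := by linarith [div_nonneg (Nat.cast_nonneg M) hβα.le]
    have hMltK : M < K := by
      have : (M:ℝ) < K := lt_of_lt_of_le hMK (le_trans hcount.le hcKn)
      exact_mod_cast this
    set K' : ℕ := x + K - M with hK'
    have hMK' : M + K' = x + K := by omega
    set n' := (A ∩ Set.Ioc M (M+K')).ncard with hn'
    -- n ≤ M + n'
    have hsub : A ∩ Set.Ioc x (x+K) ⊆ Set.Ioc x M ∪ (A ∩ Set.Ioc M (M+K')) := by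
      intro t ⟨htA, ht1, ht2⟩
      rcases le_or_gt t M with h | h
      · exact Or.inl ⟨ht1, h⟩
      · exact Or.inr ⟨htA, h, by omega⟩
    have hnle : n ≤ M + n' := by
      calc n ≤ (Set.Ioc x M ∪ (A ∩ Set.Ioc M (M+K'))).ncard :=
            Set.ncard_le_ncard hsub
              ((Set.finite_Ioc x M).union ((Set.finite_Ioc M (M+K')).inter_of_right A))
        _ ≤ (Set.Ioc x M).ncard + n' := Set.ncard_union_le _ _
        _ ≤ M + n' := by rw [ncard_Ioc_nat]; omega
    have hn'K' : n' ≤ K' := by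
      have := count_le A M (M+K')
      omega
    have hn'R : (n':ℝ) ≥ β * K - M := by
      have h1 : (n:ℝ) ≤ M + n' := by exact_mod_cast Nat.cast_le.2 hnle
      linarith
    have hK'big : (K':ℝ) ≥ β * K - M := le_trans hn'R (by exact_mod_cast Nat.cast_le.2 hn'K')
    have hK'K : K' ≤ K := by omega
    have hMnn : (0:ℝ) ≤ (M:ℝ)/(β-α) := div_nonneg (Nat.cast_nonneg M) hβα.le
    have hM0 : (0:ℝ) ≤ (M:ℝ) := Nat.cast_nonneg M
    refine ⟨M, K', le_refl M, ?_, ?_⟩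
    · -- K₀ ≤ K'
      have : (K₀:ℝ) < K' := by linarith
      exact_mod_cast this.le
    · -- α * K' ≤ n'
      have h1 : (M:ℝ)/(β-α) ≤ K' := by linarith
      have h2 : (M:ℝ) ≤ (β-α) * K' := by
        rw [div_le_iff₀ hβα] at h1
        linarith
      have h3 : (K':ℝ) ≤ K := by exact_mod_cast Nat.cast_le.2 hK'K
      have h5 : β * K' ≤ β * K := mul_le_mul_of_nonneg_left h3 hβ0.le
      have h4 : β * K' - M ≤ (n':ℝ) := by linarith
      rw [← hn']
      linarith


/-- If `d*(A) > α` then the increasing enumeration `b` of `B = A·A`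
satisfies `b (n+1) - b n ≤ 16 α⁻³` infinitely often. -/
theorem stmt1 (α : ℝ) (hα0 : 0 < α) (hα1 : α < 1) (A : Set ℕ) (hA : 0 ∉ A)
    (hd : α < upperBanachDensity A)
    (b : ℕ → ℕ) (hb : StrictMono b)
    (hrange : ∀ m, m ∈ Set.range b ↔ ∃ a ∈ A, ∃ a' ∈ A, m = a * a') :
    ∀ N : ℕ, ∃ n, N ≤ n ∧ ((b (n + 1) : ℝ) - b n) ≤ 16 / α ^ 3 := by
  intro N
  set v : ℝ := 8/α^2 + 4/α with hv
  obtain ⟨x, K, hxM, hKK₀, hcount⟩ := good_interval α hα0 A hd (b N + 1) (⌈v⌉₊ + 1)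
  have hK : v < (K:ℝ) := by
    calc v ≤ (⌈v⌉₊ : ℝ) := Nat.le_ceil v
      _ < (⌈v⌉₊ : ℝ) + 1 := by linarith
      _ ≤ (K : ℝ) := by exact_mod_cast hKK₀
  obtain ⟨u, w, g, huA, hwA, hugA, hwgA, hxu, hlt, hg1, hb16⟩ :=
    core α hα0 hα1 A x K hK hcount
  obtain ⟨c, rfl⟩ := Nat.exists_eq_add_of_lt hlt
  have hwu : u + c + 1 - u = c + 1 := by omega
  rw [hwu] at hb16
  have hdiff : (u+c+1)*(u+g) = u*((u+c+1)+g) + g*(c+1) := by ring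
  have hgc1 : 1 ≤ g*(c+1) := Nat.one_le_iff_ne_zero.2 (by positivity)
  -- both products are in B
  obtain ⟨n₁, hn₁⟩ := (hrange (u*((u+c+1)+g))).2 ⟨u, huA, (u+c+1)+g, hwgA, rfl⟩
  obtain ⟨n₂, hn₂⟩ := (hrange ((u+c+1)*(u+g))).2 ⟨u+c+1, hwA, u+g, hugA, rfl⟩
  have hbNu : b N < u := by omega
  have huP : u ≤ u*((u+c+1)+g) := Nat.le_mul_of_pos_right u (by omega)
  have hNn₁ : N < n₁ := by
    have : b N < b n₁ := by omega
    exact hb.lt_iff_lt.1 this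
  have hn₁n₂ : n₁ < n₂ := by
    have : b n₁ < b n₂ := by omega
    exact hb.lt_iff_lt.1 this
  have hmono : b (n₁+1) ≤ b n₂ := hb.monotone (by omega)
  refine ⟨n₁, by omega, ?_⟩
  have hch : (b (n₁+1) : ℝ) ≤ (b n₁ : ℝ) + ((g*(c+1) : ℕ) : ℝ) := by
    have : b (n₁+1) ≤ b n₁ + g*(c+1) := by omega
    exact_mod_cast this
  linarith
end

section
/- For every 0 < α < 1 there exists a set A of positive integers with upper Banach density d*(A) > α such that any two distinct elements of the product set B = A·A differ by at least 2^{-12}·α^{-3}; that is, b_{n+1} - b_n ≫ α^{-3} for all n. -/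
lemma count_le_s2 (A : Set ℕ) (x K : ℕ) :
    Nat.card (A ∩ Set.Ioc x (x + K) : Set ℕ) ≤ K := by
  have h1 : (A ∩ Set.Ioc x (x + K)) ⊆ Set.Ioc x (x + K) := Set.inter_subset_right
  have h2 := Set.ncard_le_ncard h1 (Set.finite_Ioc x (x+K))
  rw [Nat.card_coe_set_eq]
  calc (A ∩ Set.Ioc x (x + K)).ncard ≤ (Set.Ioc x (x+K)).ncard := h2
    _ = K := by
        rw [Set.ncard_eq_toFinset_card' ]
        simp [Set.toFinset_Ioc]

lemma ubd_bddAbove (A : Set ℕ) (K : ℕ) :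
    (⨆ x : ℕ, (Nat.card (A ∩ Set.Ioc x (x + K) : Set ℕ) : ℝ) / K) ≤ 1 := by
  apply Real.iSup_le _ zero_le_one
  intro x
  rcases Nat.eq_zero_or_pos K with hK | hK
  · simp [hK]
  · rw [div_le_one (by exact_mod_cast hK)]
    exact_mod_cast count_le_s2 A x K

lemma density_ge (A : Set ℕ) (β : ℝ)
    (h : ∀ T : ℕ, ∃ K x : ℕ, T ≤ K ∧ 0 < K ∧
      β * K ≤ (Nat.card (A ∩ Set.Ioc x (x + K) : Set ℕ) : ℝ)) :
    β ≤ upperBanachDensity A := by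
  apply Filter.le_limsup_of_frequently_le
  · rw [Filter.frequently_atTop]
    intro T
    obtain ⟨K, x, hTK, hK, hcount⟩ := h T
    refine ⟨K, hTK, ?_⟩
    have hb : BddAbove (Set.range fun x : ℕ =>
        (Nat.card (A ∩ Set.Ioc x (x + K) : Set ℕ) : ℝ) / K) := by
      refine ⟨1, ?_⟩
      rintro y ⟨x', rfl⟩
      rcases Nat.eq_zero_or_pos K with hK0 | hK0
      · simp [hK0]
      · rw [div_le_one (by exact_mod_cast hK0)]
        exact_mod_cast count_le_s2 A x' K
    apply le_ciSup_of_le hb x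
    rw [le_div_iff₀ (by exact_mod_cast hK)]
    exact hcount
  · apply Filter.isBoundedUnder_of
    exact ⟨1, fun K => ubd_bddAbove A K⟩

/-- The easy construction `A = c·ℕ⁺`. -/
lemma easy_case (c : ℕ) (hc : 0 < c) (α : ℝ) (hα0 : 0 < α)
    (h1 : α < 1 / c) (h2 : 1 / (2 ^ 12 * α ^ 3) ≤ (c:ℝ)^2) :
    ∃ A : Set ℕ, 0 ∉ A ∧ α < upperBanachDensity A ∧
      ∀ m m' : ℕ, (∃ a ∈ A, ∃ a' ∈ A, m = a * a') →
        (∃ a ∈ A, ∃ a' ∈ A, m' = a * a') → m ≠ m' →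
        1 / (2 ^ 12 * α ^ 3) ≤ |(m : ℝ) - m'| := by
  refine ⟨{n | ∃ k, 0 < k ∧ n = c * k}, ?_, ?_, ?_⟩
  · rintro ⟨k, hk, hck⟩
    have := Nat.mul_pos hc hk
    omega
  · have hd : (1:ℝ)/c ≤ upperBanachDensity {n | ∃ k, 0 < k ∧ n = c * k} := by
      apply density_ge
      intro T
      refine ⟨c * (T+1), 0, ?_, by positivity, ?_⟩
      · calc T ≤ T + 1 := by omega
          _ ≤ c * (T+1) := Nat.le_mul_of_pos_left _ hc
      · have hsub : ↑(Finset.image (fun k => c * (k+1)) (Finset.range (T+1))) ⊆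
            ({n | ∃ k, 0 < k ∧ n = c * k} ∩ Set.Ioc 0 (0 + c * (T+1))) := by
          intro n hn
          simp only [Finset.coe_image, Set.mem_image, Finset.mem_coe, Finset.mem_range] at hn
          obtain ⟨k, hk, rfl⟩ := hn
          refine ⟨⟨k+1, by omega, rfl⟩, Nat.mul_pos hc (by omega), ?_⟩
          simp only [zero_add]
          exact Nat.mul_le_mul_left c (by omega)
        have hcard : (Finset.image (fun k => c * (k+1)) (Finset.range (T+1))).card = T+1 := by
          rw [Finset.card_image_of_injOn]
          · exact Finset.card_range (T+1)
          · intro a _ b _ hab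
            simp only at hab
            have := Nat.eq_of_mul_eq_mul_left hc hab
            omega
        have hn := Set.ncard_le_ncard hsub ((Set.finite_Ioc 0 (0 + c*(T+1))).inter_of_right _)
        rw [Set.ncard_coe_finset, hcard] at hn
        rw [Nat.card_coe_set_eq]
        have hn' : ((T+1 : ℕ) : ℝ) ≤
            (({n | ∃ k, 0 < k ∧ n = c * k} ∩ Set.Ioc 0 (0 + c * (T+1))).ncard : ℝ) := by
          exact_mod_cast hn
        have heq : (1:ℝ)/c * ((c * (T+1) : ℕ) : ℝ) = ((T+1 : ℕ) : ℝ) := by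
          push_cast
          field_simp
        rw [heq]
        exact hn'
    calc α < 1/c := h1
      _ ≤ _ := hd
  · rintro m m' ⟨a, ⟨k, hk, rfl⟩, a', ⟨k', hk', rfl⟩, rfl⟩
      ⟨b, ⟨l, hl, rfl⟩, b', ⟨l', hl', rfl⟩, rfl⟩ hne
    have hdvd : (c^2 : ℤ) ∣ ((c * k * (c * k') : ℕ) : ℤ) - ((c * l * (c * l') : ℕ) : ℤ) := by
      push_cast
      ring_nf
      exact dvd_sub ⟨k * k', by ring⟩ ⟨l * l', by ring⟩
    have hne' : ((c * k * (c * k') : ℕ) : ℤ) - ((c * l * (c * l') : ℕ) : ℤ) ≠ 0 := by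
      intro h
      apply hne
      have : ((c * k * (c * k') : ℕ) : ℤ) = ((c * l * (c * l') : ℕ) : ℤ) := by omega
      exact_mod_cast this
    have hle : (c^2 : ℤ) ≤ |((c * k * (c * k') : ℕ) : ℤ) - ((c * l * (c * l') : ℕ) : ℤ)| :=
      Int.le_of_dvd (abs_pos.mpr hne') ((dvd_abs _ _).mpr hdvd)
    have hle' : ((c:ℝ))^2 ≤ |((c * k * (c * k') : ℕ) : ℝ) - ((c * l * (c * l') : ℕ) : ℝ)| := by
      have : ((c^2 : ℤ) : ℝ) ≤ ((|((c * k * (c * k') : ℕ) : ℤ) - ((c * l * (c * l') : ℕ) : ℤ)| : ℤ) : ℝ) := by exact_mod_cast hle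
      push_cast at this
      exact_mod_cast this
    exact le_trans h2 hle'


/-- Erdős–Turán Sidon set element. -/
def fET (p i : ℕ) : ℕ := 2*p*i + i^2 % p

lemma div_mod_unique (M S S' x x' : ℕ) (hM : 0 < M) (hx : x < M) (hx' : x' < M)
    (h : M*S + x = M*S' + x') : S = S' ∧ x = x' := by
  have h1 : S = S' := by
    have h2 := congrArg (· / M) h
    simpa [Nat.mul_add_div hM, Nat.div_eq_of_lt hx, Nat.div_eq_of_lt hx'] using h2
  subst h1
  omega

lemma fET_ub (p i : ℕ) (hp : 0 < p) (hi : i < p) : fET p i + p + 1 ≤ 2*p^2 := by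
  have hr : i^2 % p < p := Nat.mod_lt _ hp
  have ha : 2*p*(i+1) ≤ 2*p*p := Nat.mul_le_mul_left _ (by omega)
  have ha' : 2*p*(i+1) = 2*p*i + 2*p := by ring
  have hpp : 2*p*p = 2*p^2 := by ring
  unfold fET
  omega

lemma fET_gap (p i j : ℕ) (hij : i < j) (hj : j < p) : fET p i + p + 1 ≤ fET p j := by
  have hp : 0 < p := by omega
  have hr : i^2 % p < p := Nat.mod_lt _ hp
  have ha : 2*p*(i+1) ≤ 2*p*j := Nat.mul_le_mul_left _ (by omega)
  have ha' : 2*p*(i+1) = 2*p*i + 2*p := by ring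
  unfold fET
  omega

lemma fET_inj (p i j : ℕ) (hi : i < p) (hj : j < p) (h : fET p i = fET p j) : i = j := by
  rcases lt_trichotomy i j with hc | hc | hc
  · have := fET_gap p i j hc hj; omega
  · exact hc
  · have := fET_gap p j i hc hi; omega

lemma cast_ne_of_lt {p a b : ℕ} (ha : a < p) (hb : b < p) (h : (a : ZMod p) = b) : a = b := by
  have h1 : (a : ZMod p).val = (b : ZMod p).val := by rw [h]
  rwa [ZMod.val_cast_of_lt ha, ZMod.val_cast_of_lt hb] at h1

lemma sidon (p : ℕ) (hp : p.Prime) (hp3 : 3 ≤ p) (i j i' j' : ℕ)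
    (hi : i < p) (hj : j < p) (hi' : i' < p) (hj' : j' < p)
    (h : fET p i + fET p j = fET p i' + fET p j') :
    (i = i' ∧ j = j') ∨ (i = j' ∧ j = i') := by
  haveI : Fact p.Prime := ⟨hp⟩
  have hp0 : 0 < p := by omega
  have hri : i^2 % p < p := Nat.mod_lt _ hp0
  have hrj : j^2 % p < p := Nat.mod_lt _ hp0
  have hri' : i'^2 % p < p := Nat.mod_lt _ hp0
  have hrj' : j'^2 % p < p := Nat.mod_lt _ hp0
  -- split into sum part and residue part
  have hsplit : (i + j) = (i' + j') ∧ (i^2 % p + j^2 % p) = (i'^2 % p + j'^2 % p) := by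
    apply div_mod_unique (2*p) _ _ _ _ (by omega) (by omega) (by omega)
    have e1 : 2*p*(i+j) = 2*p*i + 2*p*j := by ring
    have e2 : 2*p*(i'+j') = 2*p*i' + 2*p*j' := by ring
    unfold fET at h
    omega
  obtain ⟨hS, hR⟩ := hsplit
  have hsum : (i : ZMod p) + j = (i' : ZMod p) + j' := by
    have : ((i + j : ℕ) : ZMod p) = ((i' + j' : ℕ) : ZMod p) := by rw [hS]
    push_cast at this
    exact this
  have hsq : (i : ZMod p)^2 + (j : ZMod p)^2 = (i' : ZMod p)^2 + (j' : ZMod p)^2 := by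
    have : ((i^2 % p + j^2 % p : ℕ) : ZMod p) = ((i'^2 % p + j'^2 % p : ℕ) : ZMod p) := by
      rw [hR]
    push_cast [ZMod.natCast_mod] at this
    exact this
  have h2 : (2 : ZMod p) ≠ 0 := by
    intro h0
    have : ((2 : ℕ) : ZMod p) = 0 := by exact_mod_cast h0
    have := (ZMod.natCast_eq_zero_iff 2 p).mp this
    have := Nat.le_of_dvd (by norm_num) this
    omega
  set I := (i : ZMod p)
  set J := (j : ZMod p)
  set I' := (i' : ZMod p)
  set J' := (j' : ZMod p)
  have hkey : (I - J - (I' - J')) * (I - J + (I' - J')) = 0 := by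
    linear_combination 2 * hsq - (I + J + I' + J') * hsum
  rcases mul_eq_zero.mp hkey with hc | hc
  · left
    have hII : (2 : ZMod p) * I = 2 * I' := by linear_combination hsum + hc
    have : I = I' := mul_left_cancel₀ h2 hII
    have hii : i = i' := cast_ne_of_lt hi hi' this
    exact ⟨hii, by omega⟩
  · right
    have hIJ : (2 : ZMod p) * I = 2 * J' := by linear_combination hsum + hc
    have : I = J' := mul_left_cancel₀ h2 hIJ
    have hij : i = j' := cast_ne_of_lt hi hj' this
    exact ⟨hij, by omega⟩


lemma abs_add_ge (X Y g : ℤ) (h : g + |Y| ≤ |X|) : g ≤ |X + Y| := by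
  have h2 : |X| ≤ |X + Y| + |Y| := by
    calc |X| = |(X + Y) + (-Y)| := by ring_nf
      _ ≤ |X + Y| + |(-Y)| := abs_add_le _ _
      _ = |X + Y| + |Y| := by rw [abs_neg]
  linarith

lemma key_calc (Q c e k l k' l' : ℤ) (hsum : k + l = k' + l') :
    (c + Q*k)*(e + Q*l) - (c + Q*k')*(e + Q*l') =
      Q*(k - k')*((e - c) + Q*((k - k') + l - k)) := by
  have h : l' = l + (k - k') := by linarith
  subst h
  ring

lemma inner_gap (pz Q c e k l k' l' : ℤ) (hQ : Q = 8*pz^2) (hp : 1 ≤ pz)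
    (hce : c ≠ e → pz ≤ |e - c|) (hbound : |e - c| ≤ 2*pz^2)
    (hsum : k + l = k' + l')
    (hne : (c + Q*k)*(e + Q*l) ≠ (c + Q*k')*(e + Q*l')) :
    Q*pz ≤ |(c + Q*k)*(e + Q*l) - (c + Q*k')*(e + Q*l')| := by
  have hQpos : 0 < Q := by nlinarith
  rw [key_calc Q c e k l k' l' hsum]
  set D := k - k' with hD
  set M := (k - k') + l - k with hM
  have hDne : D ≠ 0 := by
    intro h0
    apply hne
    have h1 : k = k' := by omega
    have h2 : l = l' := by omega
    rw [h1, h2]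
  have hDa : 1 ≤ |D| := by
    rcases abs_cases D with ⟨h1, _⟩ | ⟨h1, _⟩ <;> omega
  rcases eq_or_ne M 0 with hM0 | hM0
  · rw [hM0, mul_zero, add_zero]
    have hcene : c ≠ e := by
      intro h0
      apply hne
      have hk' : k' = l := by omega
      have hl' : l' = k := by omega
      rw [h0, hk', hl']
      ring
    have hec : pz ≤ |e - c| := hce hcene
    rw [abs_mul, abs_mul, abs_of_pos hQpos]
    calc Q * pz = Q * 1 * pz := by ring
      _ ≤ Q * |D| * |e - c| := by
          apply mul_le_mul
          · exact mul_le_mul_of_nonneg_left hDa (le_of_lt hQpos)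
          · exact hec
          · linarith
          · positivity
  · have hMa : 1 ≤ |M| := by
      rcases abs_cases M with ⟨h1, _⟩ | ⟨h1, _⟩ <;> omega
    have hQM : Q ≤ |Q * M| := by
      rw [abs_mul, abs_of_pos hQpos]
      nlinarith
    have hin : pz ≤ |(e - c) + Q*M| := by
      rw [add_comm]
      apply abs_add_ge _ _ _ ?_
      nlinarith [hQM]
    rw [abs_mul, abs_mul, abs_of_pos hQpos]
    calc Q * pz = Q * 1 * pz := by ring
      _ ≤ Q * |D| * |(e - c) + Q*M| := by
          apply mul_le_mul
          · exact mul_le_mul_of_nonneg_left hDa (le_of_lt hQpos)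
          · exact hin
          · linarith
          · positivity


def Qc (p : ℕ) : ℕ := 8*p^2
def Cc (p : ℕ) : ℕ := Qc p * p + Qc p + 9
def Nb (p t : ℕ) : ℕ := (Cc p)^(5^t)

lemma Cc_ge9 (p : ℕ) : 9 ≤ Cc p := by unfold Cc; omega
lemma Q_le_C (p : ℕ) : Qc p ≤ Cc p := by unfold Cc; omega
lemma g_le_C (p : ℕ) : Qc p * p ≤ Cc p := by unfold Cc; omega
lemma Q_pos (p : ℕ) (hp : 1 ≤ p) : 0 < Qc p := by unfold Qc; positivity

lemma Qt_le_Ct (p t : ℕ) (ht : 1 ≤ t) : Qc p * t ≤ (Cc p)^t := by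
  induction t with
  | zero => omega
  | succ n ih =>
    rcases Nat.eq_zero_or_pos n with hn | hn
    · subst hn
      simpa using Q_le_C p
    · have h1 := ih hn
      have h2 : Qc p * (n+1) = Qc p * n + Qc p := by ring
      have h3 : (Cc p)^(n+1) = (Cc p)^n * Cc p := by ring
      have h4 : (Cc p)^n * 2 ≤ (Cc p)^n * Cc p :=
        Nat.mul_le_mul_left _ (by have := Cc_ge9 p; omega)
      have h5 : Qc p ≤ (Cc p)^n := le_trans (Q_le_C p)
        (Nat.le_self_pow (by omega) _)
      omega

lemma master (p a b : ℕ) (hab : a + 2 ≤ b) : 4*(Cc p)^a + Qc p * p ≤ (Cc p)^b := by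
  have hC := Cc_ge9 p
  have h1 : Qc p * p ≤ (Cc p)^(a+1) := le_trans (g_le_C p) (Nat.le_self_pow (by omega) _)
  have h2 : (Cc p)^(a+1) = (Cc p)^a * Cc p := by ring
  have h3 : (Cc p)^(a+2) = (Cc p)^a * (Cc p * Cc p) := by ring
  have h4 : (Cc p)^a * (4 + Cc p) ≤ (Cc p)^a * (Cc p * Cc p) := by
    apply Nat.mul_le_mul_left
    nlinarith
  have h5 : (Cc p)^(a+2) ≤ (Cc p)^b := Nat.pow_le_pow_right (by omega) hab
  nlinarith [Nat.one_le_pow a (Cc p) (show 0 < Cc p by omega)]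

lemma five_pow_ge (t : ℕ) : t + 1 ≤ 5^t := by have := Nat.lt_pow_self (n := t) (by norm_num : (1:ℕ) < 5); omega

lemma M4 (t : ℕ) (ht : 1 ≤ t) : 2*t + 2 ≤ 5^t := by
  induction t with
  | zero => omega
  | succ n ih =>
    rcases Nat.eq_zero_or_pos n with hn | hn
    · subst hn; norm_num
    · have h1 := ih hn
      have h2 : 5^(n+1) = 5 * 5^n := by ring
      omega

lemma M3aux (s : ℕ) : s + 3 ≤ 4 * 5^s := by
  induction s with
  | zero => norm_num
  | succ n ih =>
    have h3 : 5^(n+1) = 5 * 5^n := by ring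
    omega

lemma M3 (t t' : ℕ) (h : t < t') : 5^t + t' + 2 ≤ 5^t' := by
  obtain ⟨s, rfl⟩ : ∃ s, t' = s + 1 := ⟨t' - 1, by omega⟩
  have h1 : 5^t ≤ 5^s := Nat.pow_le_pow_right (by norm_num) (by omega)
  have h2 := M3aux s
  have h3 : 5^(s+1) = 5^s + 4 * 5^s := by ring
  omega

lemma M6 (t r : ℕ) (h : t < r) : 5^t + 2 ≤ 5^r := by
  have := M3 t r h
  omega

lemma M5 (t' r r' : ℕ) (hr : 1 ≤ r) (h : t' < r') : 2*5^t' + 2 ≤ 5^r + 5^r' := by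
  have h1 : 5^(t'+1) ≤ 5^r' := Nat.pow_le_pow_right (by norm_num) (by omega)
  have h2 : 5^(t'+1) = 5*5^t' := by ring
  have h3 : 1 ≤ 5^r := Nat.one_le_pow _ _ (by norm_num)
  have h4 : 1 ≤ 5^t' := Nat.one_le_pow _ _ (by norm_num)
  omega

lemma N_mono (p t t' : ℕ) (h : t ≤ t') : Nb p t ≤ Nb p t' := by
  unfold Nb
  exact Nat.pow_le_pow_right (by have := Cc_ge9 p; omega) (Nat.pow_le_pow_right (by norm_num) h)

lemma C_le_N (p t : ℕ) : Cc p ≤ Nb p t := by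
  unfold Nb
  calc Cc p = (Cc p)^1 := by ring
    _ ≤ _ := Nat.pow_le_pow_right (by have := Cc_ge9 p; omega) (Nat.one_le_pow _ _ (by norm_num))

lemma N_pos (p t : ℕ) : 0 < Nb p t := lt_of_lt_of_le (by have := Cc_ge9 p; omega) (C_le_N p t)

/-- `Q*t ≤ N t` -/
lemma Qt_le_N (p t : ℕ) (ht : 1 ≤ t) : Qc p * t ≤ Nb p t := by
  calc Qc p * t ≤ (Cc p)^t := Qt_le_Ct p t ht
    _ ≤ Nb p t := Nat.pow_le_pow_right (by have := Cc_ge9 p; omega) (by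
        have := five_pow_ge t; omega)

/-- `(Q t)^2 + g ≤ N t` -/
lemma R1 (p t : ℕ) (ht : 1 ≤ t) : (Qc p * t)^2 + Qc p * p ≤ Nb p t := by
  have h1 : (Qc p * t)^2 ≤ ((Cc p)^t)^2 := Nat.pow_le_pow_left (Qt_le_Ct p t ht) 2
  have h2 : ((Cc p)^t)^2 = (Cc p)^(2*t) := by rw [← Nat.pow_mul]; ring_nf
  have h3 := master p (2*t) (5^t) (by have := M4 t ht; omega)
  have h4 : Nb p t = (Cc p)^(5^t) := rfl
  omega

/-- case-2 bound: for t < t', `2*N t * C^t' + g ≤ N t'` -/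
lemma R2 (p t t' : ℕ) (ht : 1 ≤ t) (h : t < t') :
    2*(Nb p t * ((Cc p)^t')) + Qc p * p ≤ Nb p t' := by
  have h1 : Nb p t * (Cc p)^t' = (Cc p)^(5^t + t') := by
    unfold Nb; rw [← Nat.pow_add]
  have h2 := master p (5^t + t') (5^t') (M3 t t' h)
  have h4 : Nb p t' = (Cc p)^(5^t') := rfl
  omega

/-- case-1 bound (t' < r'): `4*(N t')^2 + g ≤ N r * N r'` -/
lemma R3 (p t' r r' : ℕ) (hr : 1 ≤ r) (h : t' < r') :
    4*(Nb p t')^2 + Qc p * p ≤ Nb p r * Nb p r' := by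
  have h1 : (Nb p t')^2 = (Cc p)^(2*5^t') := by
    unfold Nb; rw [← Nat.pow_mul]; ring_nf
  have h2 : Nb p r * Nb p r' = (Cc p)^(5^r + 5^r') := by
    unfold Nb; rw [← Nat.pow_add]
  have h3 := master p (2*5^t') (5^r + 5^r') (M5 t' r r' hr h)
  omega

/-- case-1 bound (t' = r', t < r): `4*N t + g ≤ N r` -/
lemma R4 (p t r : ℕ) (h : t < r) : 4*(Nb p t) + Qc p * p ≤ Nb p r := by
  have h1 := master p (5^t) (5^r) (M6 t r h)
  unfold Nb
  omega


def wv (p i k : ℕ) : ℕ := 1 + fET p i + Qc p * k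
def IsElt (p t a : ℕ) : Prop := ∃ i, i < p ∧ ∃ k, k < t ∧ a = Nb p t + wv p i k
def mainSet (p : ℕ) : Set ℕ := {n | ∃ t, 1 ≤ t ∧ IsElt p t n}

lemma fET_ub' (p : ℕ) : ∀ i, 0 < p → i < p → fET p i + p + 1 ≤ 2*p^2 :=
  fun i h1 h2 => fET_ub p i h1 h2
lemma fET_gap' (p : ℕ) : ∀ i j, i < j → j < p → fET p i + p + 1 ≤ fET p j :=
  fun i j h1 h2 => fET_gap p i j h1 h2
lemma fET_inj' (p : ℕ) : ∀ i j, i < p → j < p → fET p i = fET p j → i = j :=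
  fun i j h1 h2 h3 => fET_inj p i j h1 h2 h3
lemma sidon' (p : ℕ) : p.Prime → 3 ≤ p → ∀ i j i' j' : ℕ, i < p → j < p → i' < p → j' < p →
    fET p i + fET p j = fET p i' + fET p j' → (i = i' ∧ j = j') ∨ (i = j' ∧ j = i') :=
  fun hp hp3 i j i' j' hi hj hi' hj' h => sidon p hp hp3 i j i' j' hi hj hi' hj' h
lemma div_mod_unique' : ∀ (M S S' x x' : ℕ), 0 < M → x < M → x' < M →
    M*S + x = M*S' + x' → S = S' ∧ x = x' :=
  fun M S S' x x' h1 h2 h3 h4 => div_mod_unique M S S' x x' h1 h2 h3 h4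
lemma inner_gap' : ∀ (pz Q c e k l k' l' : ℤ), Q = 8*pz^2 → 1 ≤ pz →
    (c ≠ e → pz ≤ |e - c|) → |e - c| ≤ 2*pz^2 → k + l = k' + l' →
    (c + Q*k)*(e + Q*l) ≠ (c + Q*k')*(e + Q*l') →
    Q*pz ≤ |(c + Q*k)*(e + Q*l) - (c + Q*k')*(e + Q*l')| :=
  fun pz Q c e k l k' l' h1 h2 h3 h4 h5 h6 => inner_gap pz Q c e k l k' l' h1 h2 h3 h4 h5 h6
lemma abs_add_ge' : ∀ (X Y g : ℤ), g + |Y| ≤ |X| → g ≤ |X + Y| :=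
  fun X Y g h => abs_add_ge X Y g h
lemma Cc_ge9' (p : ℕ) : 9 ≤ Cc p := Cc_ge9 p
lemma g_le_C' (p : ℕ) : Qc p * p ≤ Cc p := g_le_C p
lemma Qt_le_Ct' (p : ℕ) : ∀ t, 1 ≤ t → Qc p * t ≤ (Cc p)^t := fun t ht => Qt_le_Ct p t ht
lemma N_mono' (p : ℕ) : ∀ t t', t ≤ t' → Nb p t ≤ Nb p t' := fun t t' h => N_mono p t t' h
lemma C_le_N' (p : ℕ) : ∀ t, Cc p ≤ Nb p t := fun t => C_le_N p t
lemma Qt_le_N' (p : ℕ) : ∀ t, 1 ≤ t → Qc p * t ≤ Nb p t := fun t ht => Qt_le_N p t ht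
lemma N_pos' (p : ℕ) : ∀ t, (0:ℤ) < ((Nb p t : ℕ) : ℤ) := fun t => by
  exact_mod_cast N_pos p t
lemma N_pos'' (p : ℕ) : ∀ t, 0 < Nb p t := fun t => N_pos p t
lemma R1' (p : ℕ) : ∀ t, 1 ≤ t → (Qc p * t)^2 + Qc p * p ≤ Nb p t := fun t ht => R1 p t ht
lemma R2' (p : ℕ) : ∀ t t', 1 ≤ t → t < t' → 2*(Nb p t * ((Cc p)^t')) + Qc p * p ≤ Nb p t' :=
  fun t t' h1 h2 => R2 p t t' h1 h2
lemma R3' (p : ℕ) : ∀ t' r r', 1 ≤ r → t' < r' → 4*(Nb p t')^2 + Qc p * p ≤ Nb p r * Nb p r' :=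
  fun a b c h1 h2 => R3 p a b c h1 h2
lemma R4' (p : ℕ) : ∀ t r, t < r → 4*(Nb p t) + Qc p * p ≤ Nb p r := fun t r h => R4 p t r h

section WithPrev
variable (p : ℕ)
variable (hp : p.Prime) (hp3 : 3 ≤ p)

lemma wv_pos (i k : ℕ) : 1 ≤ wv p i k := by unfold wv; omega

lemma wv_ub {i k t : ℕ} (hi : i < p) (hk : k < t) : wv p i k ≤ Qc p * t - 1 := by
  have hf := fET_ub' p i (by omega) hi
  have h1 : Qc p * (k+1) ≤ Qc p * t := Nat.mul_le_mul_left _ (by omega)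
  have h2 : Qc p * (k+1) = Qc p * k + Qc p := by ring
  have h3 : Qc p = 8*p^2 := rfl
  have h4 : 1 ≤ p^2 := Nat.one_le_pow _ _ (by omega)
  unfold wv
  omega

include hp hp3 in
lemma samesum_gap (i j i' j' k l k' l' : ℕ) (hi : i < p) (hj : j < p)
    (hi' : i' < p) (hj' : j' < p)
    (hsum : wv p i k + wv p j l = wv p i' k' + wv p j' l')
    (hne : wv p i k * wv p j l ≠ wv p i' k' * wv p j' l') :
    (Qc p * p : ℤ) ≤ |(wv p i k : ℤ) * (wv p j l : ℤ) - (wv p i' k' : ℤ) * (wv p j' l' : ℤ)| := by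
  have hp0 : 0 < p := by omega
  have hQ8 : Qc p = 8*p^2 := rfl
  have hp2 : 1 ≤ p^2 := Nat.one_le_pow _ _ hp0
  set c := 1 + fET p i with hc
  set e := 1 + fET p j with he
  set c' := 1 + fET p i' with hc'
  set e' := 1 + fET p j' with he'
  have hcub := fET_ub' p i hp0 hi
  have heub := fET_ub' p j hp0 hj
  have hc'ub := fET_ub' p i' hp0 hi'
  have he'ub := fET_ub' p j' hp0 hj'
  -- split the sum
  have hsplit : (k + l) = (k' + l') ∧ (c + e) = (c' + e') := by
    apply div_mod_unique' (Qc p) _ _ _ _ (by omega) (by omega) (by omega)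
    have e1 : Qc p * (k+l) = Qc p * k + Qc p * l := by ring
    have e2 : Qc p * (k'+l') = Qc p * k' + Qc p * l' := by ring
    unfold wv at hsum
    omega
  obtain ⟨hS, hce⟩ := hsplit
  have hfsum : fET p i + fET p j = fET p i' + fET p j' := by omega
  have hwc : (wv p i k : ℤ) = (c : ℤ) + (Qc p : ℤ) * k := by
    simp only [hc, wv]; push_cast; ring
  have hwe : (wv p j l : ℤ) = (e : ℤ) + (Qc p : ℤ) * l := by
    simp only [he, wv]; push_cast; ring
  have hwc' : (wv p i' k' : ℤ) = (c' : ℤ) + (Qc p : ℤ) * k' := by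
    simp only [hc', wv]; push_cast; ring
  have hwe' : (wv p j' l' : ℤ) = (e' : ℤ) + (Qc p : ℤ) * l' := by
    simp only [he', wv]; push_cast; ring
  have hQz : (Qc p : ℤ) = 8*(p:ℤ)^2 := by rw [hQ8]; push_cast; ring
  have hbnd : |(e : ℤ) - c| ≤ 2*(p:ℤ)^2 := by
    rw [abs_le]
    constructor
    · have : (c : ℤ) ≤ 2*(p:ℤ)^2 := by push_cast; omega
      have he1 : (1 : ℤ) ≤ e := by push_cast; omega
      linarith
    · have : (e : ℤ) ≤ 2*(p:ℤ)^2 := by push_cast; omega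
      have hc1 : (1 : ℤ) ≤ c := by push_cast; omega
      linarith
  rcases sidon' p hp hp3 i j i' j' hi hj hi' hj' hfsum with ⟨hii, hjj⟩ | ⟨hij, hji⟩
  · -- c' = c, e' = e
    have hcc : c' = c := by rw [hc', hc, hii]
    have hee : e' = e := by rw [he', he, hjj]
    rw [hwc, hwe, hwc', hwe', hcc, hee]
    apply inner_gap' (p:ℤ) _ _ _ _ _ _ _ hQz (by exact_mod_cast hp0)
    · intro hcne
      have hine : i ≠ j := by
        intro h; apply hcne; rw [hc, he, h]
      have : p + 1 ≤ fET p j ∨ fET p j + p + 1 ≤ fET p i + p + 1 := by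
        rcases lt_trichotomy i j with h | h | h
        · have := fET_gap' p i j h hj; omega
        · exact absurd h hine
        · have := fET_gap' p j i h hi; omega
      rcases lt_trichotomy i j with h | h | h
      · have hg := fET_gap' p i j h hj
        have : (e : ℤ) - c = (fET p j : ℤ) - fET p i := by rw [hc, he]; push_cast; ring
        rw [this, abs_of_nonneg (by push_cast; omega)]
        push_cast; omega
      · exact absurd h hine
      · have hg := fET_gap' p j i h hi
        have : (e : ℤ) - c = (fET p j : ℤ) - fET p i := by rw [hc, he]; push_cast; ring
        rw [this, abs_of_nonpos (by push_cast; omega)]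
        push_cast; omega
    · exact hbnd
    · push_cast; omega
    · rw [← hwc, ← hwe, ← hwc', ← hwe', ← hcc, ← hee] at *
      intro h
      apply hne
      exact_mod_cast h
  · -- c' = e, e' = c : swap the second pair
    have hcc : c' = e := by rw [hc', he, hji]
    have hee : e' = c := by rw [he', hc, hij]
    have hswap : (wv p i' k' : ℤ) * (wv p j' l' : ℤ) =
        ((c:ℤ) + (Qc p : ℤ) * l')*((e:ℤ) + (Qc p : ℤ) * k') := by
      rw [hwc', hwe', hcc, hee]; ring
    rw [hwc, hwe, hswap]
    apply inner_gap' (p:ℤ) _ _ _ _ _ _ _ hQz (by exact_mod_cast hp0)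
    · intro hcne
      have hine : i ≠ j := by
        intro h; apply hcne; rw [hc, he, h]
      rcases lt_trichotomy i j with h | h | h
      · have hg := fET_gap' p i j h hj
        have : (e : ℤ) - c = (fET p j : ℤ) - fET p i := by rw [hc, he]; push_cast; ring
        rw [this, abs_of_nonneg (by push_cast; omega)]
        push_cast; omega
      · exact absurd h hine
      · have hg := fET_gap' p j i h hi
        have : (e : ℤ) - c = (fET p j : ℤ) - fET p i := by rw [hc, he]; push_cast; ring
        rw [this, abs_of_nonpos (by push_cast; omega)]
        push_cast; omega
    · exact hbnd
    · push_cast; omega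
    · rw [← hswap, ← hwc, ← hwe]
      intro h
      apply hne
      exact_mod_cast h

include hp hp3 in
lemma same_block_gap (t : ℕ) (ht : 1 ≤ t) (a a' b b' : ℕ)
    (ha : IsElt p t a) (ha' : IsElt p t a') (hb : IsElt p t b) (hb' : IsElt p t b')
    (hne : a * a' ≠ b * b') :
    (Qc p * p : ℤ) ≤ |(a : ℤ) * (a' : ℤ) - (b : ℤ) * (b' : ℤ)| := by
  obtain ⟨i1, hi1, k1, hk1, rfl⟩ := ha
  obtain ⟨i2, hi2, k2, hk2, rfl⟩ := ha'
  obtain ⟨i3, hi3, k3, hk3, rfl⟩ := hb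
  obtain ⟨i4, hi4, k4, hk4, rfl⟩ := hb'
  set N := Nb p t with hN
  set u := wv p i1 k1 with hu
  set u' := wv p i2 k2 with hu'
  set v := wv p i3 k3 with hv
  set v' := wv p i4 k4 with hv'
  have hub : u ≤ Qc p * t - 1 := wv_ub p hi1 hk1
  have hub' : u' ≤ Qc p * t - 1 := wv_ub p hi2 hk2
  have hvb : v ≤ Qc p * t - 1 := wv_ub p hi3 hk3
  have hvb' : v' ≤ Qc p * t - 1 := wv_ub p hi4 hk4
  have hu1 : 1 ≤ u := wv_pos p i1 k1
  have hu1' : 1 ≤ u' := wv_pos p i2 k2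
  have hv1 : 1 ≤ v := wv_pos p i3 k3
  have hv1' : 1 ≤ v' := wv_pos p i4 k4
  have hkey : ((N + u : ℕ) : ℤ) * ((N + u' : ℕ) : ℤ) - ((N + v : ℕ) : ℤ) * ((N + v' : ℕ) : ℤ)
      = (N : ℤ) * (((u:ℤ) + u') - ((v:ℤ) + v')) + (((u*u' : ℕ) : ℤ) - ((v*v' : ℕ) : ℤ)) := by
    push_cast; ring
  rw [hkey]
  rcases eq_or_ne (u + u') (v + v') with hsum | hsum
  · have hz : (((u:ℤ) + u') - ((v:ℤ) + v')) = 0 := by omega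
    rw [hz, mul_zero, zero_add]
    have hpne : u * u' ≠ v * v' := by
      intro h
      apply hne
      have e1 : (N + u) * (N + u') = N*N + N*(u + u') + u*u' := by ring
      have e2 : (N + v) * (N + v') = N*N + N*(u + u') + v*v' := by rw [hsum]; ring
      omega
    have hres := samesum_gap p hp hp3 i1 i2 i3 i4 k1 k2 k3 k4 hi1 hi2 hi3 hi4
      (by rw [← hu, ← hu', ← hv, ← hv']; exact hsum)
      (by rw [← hu, ← hu', ← hv, ← hv']; exact hpne)
    rw [← hu, ← hu', ← hv, ← hv'] at hres
    have : (wv p i1 k1 : ℤ) * (wv p i2 k2 : ℤ) - (wv p i3 k3 : ℤ) * (wv p i4 k4 : ℤ)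
        = ((u*u' : ℕ) : ℤ) - ((v*v' : ℕ) : ℤ) := by
      rw [← hu, ← hu', ← hv, ← hv']; push_cast; ring
    rw [← this]
    exact samesum_gap p hp hp3 i1 i2 i3 i4 k1 k2 k3 k4 hi1 hi2 hi3 hi4 hsum hpne
  · -- different sums: the N·Δs term dominates
    apply abs_add_ge'
    have hQt1 : 1 ≤ Qc p * t := by
      calc 1 ≤ u := hu1
        _ ≤ Qc p * t - 1 := hub
        _ ≤ Qc p * t := by omega
    have h1 : (N : ℤ) ≤ |(N : ℤ) * (((u:ℤ) + u') - ((v:ℤ) + v'))| := by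
      rw [abs_mul, abs_of_nonneg (by positivity : (0:ℤ) ≤ (N:ℤ))]
      have hone : 1 ≤ |((u:ℤ) + u') - ((v:ℤ) + v')| := by
        rcases abs_cases (((u:ℤ) + u') - ((v:ℤ) + v')) with ⟨h2, _⟩ | ⟨h2, _⟩ <;> omega
      calc (N:ℤ) = (N:ℤ) * 1 := by ring
        _ ≤ _ := mul_le_mul_of_nonneg_left hone (by positivity)
    have huu : u * u' ≤ (Qc p * t)^2 := by
      calc u * u' ≤ (Qc p * t) * (Qc p * t) := Nat.mul_le_mul (by omega) (by omega)
        _ = (Qc p * t)^2 := by ring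
    have hvv : v * v' ≤ (Qc p * t)^2 := by
      calc v * v' ≤ (Qc p * t) * (Qc p * t) := Nat.mul_le_mul (by omega) (by omega)
        _ = (Qc p * t)^2 := by ring
    have h2 : |((u*u' : ℕ) : ℤ) - ((v*v' : ℕ) : ℤ)| ≤ (((Qc p * t)^2 : ℕ) : ℤ) := by
      rw [abs_le]
      omega
    have h3 := R1' p t ht
    have h3' : (((Qc p * t)^2 : ℕ) : ℤ) + ((Qc p * p : ℕ) : ℤ) ≤ (N : ℤ) := by
      rw [hN]
      exact_mod_cast h3
    have : ((Qc p * p : ℕ) : ℤ) = (Qc p * p : ℤ) := by push_cast; ring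
    linarith [h1, h2, h3']

include hp hp3 in
lemma pair_gap (t t' : ℕ) (ht : 1 ≤ t) (htt : t < t') (a a' b b' : ℕ)
    (ha : IsElt p t a) (ha' : IsElt p t' a') (hb : IsElt p t b) (hb' : IsElt p t' b')
    (hne : a * a' ≠ b * b') :
    (Qc p * p : ℤ) ≤ |(a : ℤ) * (a' : ℤ) - (b : ℤ) * (b' : ℤ)| := by
  have ht' : 1 ≤ t' := by omega
  obtain ⟨i1, hi1, k1, hk1, rfl⟩ := ha
  obtain ⟨i2, hi2, k2, hk2, rfl⟩ := ha'
  obtain ⟨i3, hi3, k3, hk3, rfl⟩ := hb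
  obtain ⟨i4, hi4, k4, hk4, rfl⟩ := hb'
  set w := wv p i1 k1 with hw
  set w' := wv p i2 k2 with hw'
  set v := wv p i3 k3 with hv
  set v' := wv p i4 k4 with hv'
  have hwb : w ≤ Qc p * t - 1 := wv_ub p hi1 hk1
  have hwb' : w' ≤ Qc p * t' - 1 := wv_ub p hi2 hk2
  have hvb : v ≤ Qc p * t - 1 := wv_ub p hi3 hk3
  have hvb' : v' ≤ Qc p * t' - 1 := wv_ub p hi4 hk4
  have hw1 : 1 ≤ w := wv_pos p i1 k1
  have hw1' : 1 ≤ w' := wv_pos p i2 k2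
  have hv1 : 1 ≤ v := wv_pos p i3 k3
  have hv1' : 1 ≤ v' := wv_pos p i4 k4
  have hgC := g_le_C' p
  have hCN := C_le_N' p t
  rcases eq_or_ne w v with hwv | hwv
  · -- first coordinates equal
    have hne' : w' ≠ v' := by
      intro h; apply hne; rw [hwv, h]
    have hkey : ((Nb p t + w : ℕ) : ℤ) * ((Nb p t' + w' : ℕ) : ℤ)
        - ((Nb p t + v : ℕ) : ℤ) * ((Nb p t' + v' : ℕ) : ℤ)
        = ((Nb p t + w : ℕ) : ℤ) * ((w' : ℤ) - (v' : ℤ)) := by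
      rw [hwv]; push_cast; ring
    rw [hkey, abs_mul]
    have h1 : ((Nb p t : ℕ) : ℤ) ≤ |((Nb p t + w : ℕ) : ℤ)| := by
      rw [abs_of_nonneg (by positivity)]
      push_cast; omega
    have h2 : 1 ≤ |(w' : ℤ) - (v' : ℤ)| := by
      rcases abs_cases ((w' : ℤ) - (v' : ℤ)) with ⟨h3, _⟩ | ⟨h3, _⟩ <;> omega
    calc (Qc p * p : ℤ) ≤ ((Nb p t : ℕ) : ℤ) := by exact_mod_cast le_trans hgC hCN
      _ = ((Nb p t : ℕ) : ℤ) * 1 := by ring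
      _ ≤ _ := mul_le_mul h1 h2 (by norm_num) (abs_nonneg _)
  · -- first coordinates differ: N t' term dominates
    have hkey : ((Nb p t + w : ℕ) : ℤ) * ((Nb p t' + w' : ℕ) : ℤ)
        - ((Nb p t + v : ℕ) : ℤ) * ((Nb p t' + v' : ℕ) : ℤ)
        = ((Nb p t' : ℕ) : ℤ) * ((w : ℤ) - (v : ℤ))
          + (((Nb p t : ℕ) : ℤ) * ((w' : ℤ) - (v' : ℤ))
            + (((w*w' : ℕ) : ℤ) - ((v*v' : ℕ) : ℤ))) := by
      push_cast; ring
    rw [hkey]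
    apply abs_add_ge'
    have h1 : ((Nb p t' : ℕ) : ℤ) ≤ |((Nb p t' : ℕ) : ℤ) * ((w : ℤ) - (v : ℤ))| := by
      rw [abs_mul, abs_of_nonneg (by positivity : (0:ℤ) ≤ ((Nb p t' : ℕ) : ℤ))]
      have hone : 1 ≤ |(w : ℤ) - (v : ℤ)| := by
        rcases abs_cases ((w : ℤ) - (v : ℤ)) with ⟨h3, _⟩ | ⟨h3, _⟩ <;> omega
      calc ((Nb p t' : ℕ) : ℤ) = ((Nb p t' : ℕ) : ℤ) * 1 := by ring
        _ ≤ _ := mul_le_mul_of_nonneg_left hone (by positivity)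
    -- bound the Y part
    have hA : |((Nb p t : ℕ) : ℤ) * ((w' : ℤ) - (v' : ℤ))| ≤ ((Nb p t * (Qc p * t') : ℕ) : ℤ) := by
      rw [abs_mul, abs_of_nonneg (by positivity : (0:ℤ) ≤ ((Nb p t : ℕ) : ℤ))]
      have h3 : |(w' : ℤ) - (v' : ℤ)| ≤ ((Qc p * t' : ℕ) : ℤ) := by
        rcases abs_cases ((w' : ℤ) - (v' : ℤ)) with ⟨h3, _⟩ | ⟨h3, _⟩ <;> omega
      push_cast
      have := mul_le_mul_of_nonneg_left h3 (by positivity : (0:ℤ) ≤ ((Nb p t : ℕ) : ℤ))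
      push_cast at this
      linarith
    have hww : w * w' ≤ (Qc p * t) * (Qc p * t') := Nat.mul_le_mul (by omega) (by omega)
    have hvv : v * v' ≤ (Qc p * t) * (Qc p * t') := Nat.mul_le_mul (by omega) (by omega)
    have hB : |((w*w' : ℕ) : ℤ) - ((v*v' : ℕ) : ℤ)| ≤ (((Qc p * t) * (Qc p * t') : ℕ) : ℤ) := by
      rw [abs_le]; omega
    have hY : |((Nb p t : ℕ) : ℤ) * ((w' : ℤ) - (v' : ℤ))
        + (((w*w' : ℕ) : ℤ) - ((v*v' : ℕ) : ℤ))|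
        ≤ ((Nb p t * (Qc p * t') : ℕ) : ℤ) + (((Qc p * t) * (Qc p * t') : ℕ) : ℤ) :=
      le_trans (abs_add_le _ _) (add_le_add hA hB)
    -- numeric: N t * Qt' + Qt*Qt' + g ≤ N t'
    have hnum : Nb p t * (Qc p * t') + (Qc p * t) * (Qc p * t') + Qc p * p ≤ Nb p t' := by
      have e1 : Qc p * t' ≤ (Cc p)^t' := Qt_le_Ct' p t' ht'
      have e2 : Qc p * t ≤ Nb p t := Qt_le_N' p t ht
      have e3 : Nb p t * (Qc p * t') ≤ Nb p t * (Cc p)^t' := Nat.mul_le_mul_left _ e1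
      have e4 : (Qc p * t) * (Qc p * t') ≤ Nb p t * (Cc p)^t' := Nat.mul_le_mul e2 e1
      have e5 := R2' p t t' ht htt
      omega
    have hnum' : ((Nb p t * (Qc p * t') : ℕ) : ℤ) + (((Qc p * t) * (Qc p * t') : ℕ) : ℤ)
        + ((Qc p * p : ℕ) : ℤ) ≤ ((Nb p t' : ℕ) : ℤ) := by exact_mod_cast hnum
    have hgz : ((Qc p * p : ℕ) : ℤ) = (Qc p * p : ℤ) := by push_cast; ring
    linarith [h1, hY, hnum']

include hp3 in
lemma lex_gap (t t' r r' : ℕ) (ht : 1 ≤ t) (hr : 1 ≤ r) (htt' : t ≤ t') (hrr' : r ≤ r')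
    (hlex : t' < r' ∨ (t' = r' ∧ t < r)) (a a' b b' : ℕ)
    (ha : IsElt p t a) (ha' : IsElt p t' a') (hb : IsElt p r b) (hb' : IsElt p r' b') :
    a * a' + Qc p * p ≤ b * b' := by
  obtain ⟨i1, hi1, k1, hk1, rfl⟩ := ha
  obtain ⟨i2, hi2, k2, hk2, rfl⟩ := ha'
  obtain ⟨i3, hi3, k3, hk3, rfl⟩ := hb
  obtain ⟨i4, hi4, k4, hk4, rfl⟩ := hb'
  have ht' : 1 ≤ t' := by omega
  have hub1 : Nb p t + wv p i1 k1 ≤ 2 * Nb p t := by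
    have := wv_ub p hi1 hk1
    have := Qt_le_N' p t ht
    omega
  have hub2 : Nb p t' + wv p i2 k2 ≤ 2 * Nb p t' := by
    have := wv_ub p hi2 hk2
    have := Qt_le_N' p t' ht'
    omega
  have hm : (Nb p t + wv p i1 k1) * (Nb p t' + wv p i2 k2) ≤ 4 * (Nb p t * Nb p t') := by
    calc (Nb p t + wv p i1 k1) * (Nb p t' + wv p i2 k2) ≤ (2 * Nb p t) * (2 * Nb p t') :=
          Nat.mul_le_mul hub1 hub2
      _ = 4 * (Nb p t * Nb p t') := by ring
  have hm' : Nb p r * Nb p r' + 1 ≤ (Nb p r + wv p i3 k3) * (Nb p r' + wv p i4 k4) := by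
    have h3 := wv_pos p i3 k3
    have h4 := wv_pos p i4 k4
    calc Nb p r * Nb p r' + 1 ≤ Nb p r * Nb p r' + Nb p r * wv p i4 k4 := by
          have : 1 ≤ Nb p r * wv p i4 k4 := Nat.one_le_iff_ne_zero.mpr
            (Nat.mul_ne_zero (by have := N_pos'' p r; omega) (by omega))
          omega
      _ ≤ (Nb p r + wv p i3 k3) * (Nb p r' + wv p i4 k4) := by
          have e : (Nb p r + wv p i3 k3) * (Nb p r' + wv p i4 k4)
              = Nb p r * Nb p r' + Nb p r * wv p i4 k4
                + (wv p i3 k3 * Nb p r' + wv p i3 k3 * wv p i4 k4) := by ring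
          omega
  rcases hlex with hcase | ⟨hteq, htr⟩
  · -- t' < r'
    have h1 : Nb p t * Nb p t' ≤ Nb p t' * Nb p t' :=
      Nat.mul_le_mul_right _ (N_mono' p t t' htt')
    have h2 : Nb p t' * Nb p t' = (Nb p t')^2 := by ring
    have h3 := R3' p t' r r' hr hcase
    omega
  · -- t' = r', t < r
    subst hteq
    have h4 := R4' p t r htr
    have h5 : (4 * Nb p t + Qc p * p) * Nb p t' ≤ Nb p r * Nb p t' :=
      Nat.mul_le_mul_right _ h4
    have h6 : 1 ≤ Nb p t' := by have := N_pos'' p t'; omega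
    have h7 : (4 * Nb p t + Qc p * p) * Nb p t'
        = 4 * (Nb p t * Nb p t') + (Qc p * p) * Nb p t' := by ring
    have h8 : Qc p * p ≤ (Qc p * p) * Nb p t' := Nat.le_mul_of_pos_right _ (by omega)
    omega

include hp hp3 in
lemma product_gap (m m' : ℕ)
    (hm : ∃ a, a ∈ mainSet p ∧ ∃ a', a' ∈ mainSet p ∧ m = a * a')
    (hm' : ∃ b, b ∈ mainSet p ∧ ∃ b', b' ∈ mainSet p ∧ m' = b * b')
    (hne : m ≠ m') :
    (Qc p * p : ℤ) ≤ |(m : ℤ) - (m' : ℤ)| := by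
  -- sorted representations
  have sort : ∀ x y : ℕ, x ∈ mainSet p → y ∈ mainSet p →
      ∃ t t' a a', 1 ≤ t ∧ t ≤ t' ∧ IsElt p t a ∧ IsElt p t' a' ∧ x * y = a * a' := by
    intro x y hx hy
    obtain ⟨t1, ht1, hx1⟩ := hx
    obtain ⟨t2, ht2, hy1⟩ := hy
    rcases le_total t1 t2 with h | h
    · exact ⟨t1, t2, x, y, ht1, h, hx1, hy1, rfl⟩
    · exact ⟨t2, t1, y, x, ht2, h, hy1, hx1, Nat.mul_comm x y⟩
  obtain ⟨a, hA, a', hA', rfl⟩ := hm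
  obtain ⟨b, hB, b', hB', rfl⟩ := hm'
  obtain ⟨t, t', x, x', ht, htt', hx, hx', hxe⟩ := sort a a' hA hA'
  obtain ⟨r, r', y, y', hr, hrr', hy, hy', hye⟩ := sort b b' hB hB'
  rw [hxe, hye]
  rw [hxe, hye] at hne
  rcases lt_trichotomy t' r' with hc | hc | hc
  · have := lex_gap p hp3 t t' r r' ht hr htt' hrr' (Or.inl hc) x x' y y' hx hx' hy hy'
    have hz : ((x * x' : ℕ) : ℤ) + ((Qc p * p : ℕ) : ℤ) ≤ ((y * y' : ℕ) : ℤ) := by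
      exact_mod_cast this
    rcases abs_cases (((x * x' : ℕ) : ℤ) - ((y * y' : ℕ) : ℤ)) with ⟨h3, h4⟩ | ⟨h3, h4⟩ <;>
      rw [h3] <;> push_cast at hz h4 ⊢ <;> linarith
  · rcases lt_trichotomy t r with hc2 | hc2 | hc2
    · have := lex_gap p hp3 t t' r r' ht hr htt' hrr' (Or.inr ⟨hc, hc2⟩) x x' y y' hx hx' hy hy'
      have hz : ((x * x' : ℕ) : ℤ) + ((Qc p * p : ℕ) : ℤ) ≤ ((y * y' : ℕ) : ℤ) := by
        exact_mod_cast this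
      rcases abs_cases (((x * x' : ℕ) : ℤ) - ((y * y' : ℕ) : ℤ)) with ⟨h3, h4⟩ | ⟨h3, h4⟩ <;>
        rw [h3] <;> push_cast at hz h4 ⊢ <;> linarith
    · -- t = r and t' = r' : same pair of blocks
      subst hc
      subst hc2
      rcases eq_or_lt_of_le htt' with hsame | hlt
      · subst hsame
        have := same_block_gap p hp hp3 t ht x x' y y' hx hx' hy hy'
          (by exact_mod_cast hne)
        push_cast
        push_cast at this
        exact this
      · have := pair_gap p hp hp3 t t' ht hlt x x' y y' hx hx' hy hy'
          (by exact_mod_cast hne)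
        push_cast
        push_cast at this
        exact this
    · have := lex_gap p hp3 r r' t t' hr ht hrr' htt' (Or.inr ⟨hc.symm, hc2⟩) y y' x x' hy hy' hx hx'
      have hz : ((y * y' : ℕ) : ℤ) + ((Qc p * p : ℕ) : ℤ) ≤ ((x * x' : ℕ) : ℤ) := by
        exact_mod_cast this
      rcases abs_cases (((x * x' : ℕ) : ℤ) - ((y * y' : ℕ) : ℤ)) with ⟨h3, h4⟩ | ⟨h3, h4⟩ <;>
        rw [h3] <;> push_cast at hz h4 ⊢ <;> linarith
  · have := lex_gap p hp3 r r' t t' hr ht hrr' htt' (Or.inl hc) y y' x x' hy hy' hx hx'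
    have hz : ((y * y' : ℕ) : ℤ) + ((Qc p * p : ℕ) : ℤ) ≤ ((x * x' : ℕ) : ℤ) := by
      exact_mod_cast this
    rcases abs_cases (((x * x' : ℕ) : ℤ) - ((y * y' : ℕ) : ℤ)) with ⟨h3, h4⟩ | ⟨h3, h4⟩ <;>
      rw [h3] <;> push_cast at hz h4 ⊢ <;> linarith

end WithPrev


lemma wv_pos' (p : ℕ) : ∀ i k, 1 ≤ wv p i k := fun i k => wv_pos p i k
lemma wv_ub' (p : ℕ) : ∀ {i k t : ℕ}, i < p → k < t → wv p i k ≤ Qc p * t - 1 :=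
  fun hi hk => wv_ub p hi hk
lemma product_gap' (p : ℕ) : p.Prime → 3 ≤ p → ∀ (m m' : ℕ),
    (∃ a, a ∈ mainSet p ∧ ∃ a', a' ∈ mainSet p ∧ m = a * a') →
    (∃ b, b ∈ mainSet p ∧ ∃ b', b' ∈ mainSet p ∧ m' = b * b') →
    m ≠ m' → (Qc p * p : ℤ) ≤ |(m : ℤ) - (m' : ℤ)| :=
  fun hp hp3 m m' h1 h2 h3 => product_gap p hp hp3 m m' h1 h2 h3
lemma density_ge' : ∀ (A : Set ℕ) (β : ℝ),
    (∀ T : ℕ, ∃ K x : ℕ, T ≤ K ∧ 0 < K ∧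
      β * K ≤ (Nat.card (A ∩ Set.Ioc x (x + K) : Set ℕ) : ℝ)) →
    β ≤ Filter.limsup
      (fun K : ℕ => ⨆ x : ℕ, (Nat.card (A ∩ Set.Ioc x (x + K) : Set ℕ) : ℝ) / K)
      Filter.atTop :=
  fun A β h => density_ge A β h

section S
variable (p : ℕ)

lemma main_count (hp3 : 3 ≤ p) (t : ℕ) (ht : 1 ≤ t) :
    p * t ≤ Nat.card ((mainSet p) ∩ Set.Ioc (Nb p t) (Nb p t + Qc p * t) : Set ℕ) := by
  have hp0 : 0 < p := by omega
  set F := (Finset.range p ×ˢ Finset.range t).image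
    (fun z : ℕ × ℕ => Nb p t + wv p z.1 z.2) with hF
  have hinj : Set.InjOn (fun z : ℕ × ℕ => Nb p t + wv p z.1 z.2)
      ↑(Finset.range p ×ˢ Finset.range t) := by
    rintro ⟨i, k⟩ hik ⟨i', k'⟩ hik' heq
    simp only [Finset.coe_product, Set.mem_prod, Finset.mem_coe, Finset.mem_range] at hik hik'
    simp only at heq
    have heq2 : fET p i + Qc p * k = fET p i' + Qc p * k' := by
      unfold wv at heq; omega
    have hfu := fET_ub' p i hp0 hik.1
    have hfu' := fET_ub' p i' hp0 hik'.1
    have hQ : Qc p = 8*p^2 := rfl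
    have hp2 : 1 ≤ p^2 := Nat.one_le_pow _ _ hp0
    have := div_mod_unique' (Qc p) k k' (fET p i) (fET p i')
      (by omega) (by omega) (by omega) (by omega)
    obtain ⟨hkk, hff⟩ := this
    have := fET_inj' p i i' hik.1 hik'.1 hff
    simp [this, hkk]
  have hsub : ↑F ⊆ ((mainSet p) ∩ Set.Ioc (Nb p t) (Nb p t + Qc p * t)) := by
    intro n hn
    rw [hF] at hn
    simp only [Finset.coe_image, Set.mem_image, Finset.mem_coe, Finset.mem_product,
      Finset.mem_range] at hn
    obtain ⟨⟨i, k⟩, ⟨hi, hk⟩, rfl⟩ := hn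
    dsimp only
    constructor
    · exact ⟨t, ht, i, hi, k, hk, rfl⟩
    · constructor
      · exact Nat.lt_add_of_pos_right (wv_pos' p i k)
      · exact Nat.add_le_add_left (le_trans (wv_ub' p hi hk) (Nat.sub_le _ _)) _
  have hcard : F.card = p * t := by
    rw [hF, Finset.card_image_of_injOn hinj, Finset.card_product,
      Finset.card_range, Finset.card_range]
  have hle := Set.ncard_le_ncard hsub
    (((Set.finite_Ioc (Nb p t) (Nb p t + Qc p * t))).inter_of_right _)
  rw [Set.ncard_coe_finset, hcard] at hle
  rw [Nat.card_coe_set_eq]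
  exact hle

lemma main_case (α : ℝ) (hα0 : 0 < α) (hα32 : α < 1/32) :
    ∃ A : Set ℕ, 0 ∉ A ∧
      α < Filter.limsup
        (fun K : ℕ => ⨆ x : ℕ, (Nat.card (A ∩ Set.Ioc x (x + K) : Set ℕ) : ℝ) / K)
        Filter.atTop ∧
      ∀ m m' : ℕ, (∃ a ∈ A, ∃ a' ∈ A, m = a * a') →
        (∃ a ∈ A, ∃ a' ∈ A, m' = a * a') → m ≠ m' →
        1 / (2 ^ 12 * α ^ 3) ≤ |(m : ℝ) - m'| := by
  set n₀ := ⌈1/(32*α)⌉₊ with hn₀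
  have h32α : 0 < 32*α := by linarith
  have hn₀1 : 1 < n₀ := by
    rw [hn₀, Nat.lt_ceil]
    rw [lt_div_iff₀ h32α]
    push_cast
    linarith
  obtain ⟨p, hp, hn₀p, hp2n₀⟩ := Nat.bertrand n₀ (by omega)
  have hp3 : 3 ≤ p := by omega
  have hp0 : 0 < p := by omega
  have hgtp : 1/(32*α) < (p:ℝ) := by
    calc 1/(32*α) ≤ (n₀ : ℝ) := Nat.le_ceil _
      _ < (p:ℝ) := by exact_mod_cast hn₀p
  have hceil : (n₀ : ℝ) < 1/(32*α) + 1 := Nat.ceil_lt_add_one (by positivity)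
  have hplt : (p:ℝ) ≤ 2*(n₀:ℝ) := by exact_mod_cast hp2n₀
  have h8 : 8*(p:ℝ)*α < 1 := by
    have h1 : (p:ℝ) < 2/(32*α) + 2 := by
      calc (p:ℝ) ≤ 2*(n₀:ℝ) := hplt
        _ < 2*(1/(32*α) + 1) := by linarith
        _ = 2/(32*α) + 2 := by ring
    have h2 : 8*(p:ℝ)*α < 8*α*(2/(32*α) + 2) := by
      have := mul_pos (show (0:ℝ) < 8*α by linarith) (show (0:ℝ) < 1 by norm_num)
      nlinarith
    have h3 : 8*α*(2/(32*α) + 2) = 1/2 + 16*α := by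
      field_simp
      ring
    rw [h3] at h2
    linarith
  have hQcast : ((Qc p : ℕ) : ℝ) = 8*(p:ℝ)^2 := by
    show ((8*p^2 : ℕ) : ℝ) = _
    push_cast
    ring
  have hQpos : (0:ℝ) < ((Qc p : ℕ) : ℝ) := by rw [hQcast]; positivity
  refine ⟨mainSet p, ?_, ?_, ?_⟩
  · rintro ⟨t, ht, i, hi, k, hk, h0⟩
    have := wv_pos' p i k
    omega
  · have hβ : α < (p:ℝ)/((Qc p : ℕ) : ℝ) := by
      rw [lt_div_iff₀ hQpos, hQcast]
      nlinarith
    calc α < (p:ℝ)/((Qc p : ℕ) : ℝ) := hβ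
      _ ≤ _ := by
        apply density_ge'
        intro T
        refine ⟨Qc p * (T+1), Nb p (T+1), ?_, ?_, ?_⟩
        · have h1 : 1 ≤ Qc p := by
            show 1 ≤ 8*p^2
            have := Nat.one_le_pow 2 p hp0
            omega
          calc T ≤ T + 1 := by omega
            _ ≤ Qc p * (T+1) := Nat.le_mul_of_pos_left _ (by omega)
        · have h1 : 1 ≤ Qc p := by
            show 1 ≤ 8*p^2
            have := Nat.one_le_pow 2 p hp0
            omega
          positivity
        · have hcount := main_count p hp3 (T+1) (by omega)
          have heq : (p:ℝ)/((Qc p : ℕ) : ℝ) * ((Qc p * (T+1) : ℕ) : ℝ)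
              = ((p * (T+1) : ℕ) : ℝ) := by
            push_cast
            field_simp
          rw [heq]
          exact_mod_cast hcount
  · intro m m' hm hm' hne
    have hg := product_gap' p hp hp3 m m' (by
        obtain ⟨a, ha, a', ha', he⟩ := hm
        exact ⟨a, ha, a', ha', he⟩) (by
        obtain ⟨b, hb, b', hb', he⟩ := hm'
        exact ⟨b, hb, b', hb', he⟩) hne
    have hgr : ((Qc p * p : ℕ) : ℝ) ≤ |(m : ℝ) - (m' : ℝ)| := by
      have h1 : (((Qc p : ℕ) * (p:ℕ) : ℤ) : ℝ) ≤ ((|(m : ℤ) - (m' : ℤ)| : ℤ) : ℝ) := by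
        exact_mod_cast hg
      push_cast at h1
      push_cast
      exact h1
    have hfin : 1 / (2 ^ 12 * α ^ 3) ≤ ((Qc p * p : ℕ) : ℝ) := by
      have hgeq : ((Qc p * p : ℕ) : ℝ) = 8*(p:ℝ)^3 := by
        push_cast [hQcast]
        push_cast
        ring
      rw [hgeq]
      have h1 : (1:ℝ) ≤ 32*α*p := by
        rw [div_lt_iff₀ h32α] at hgtp
        nlinarith
      have h2 : (1:ℝ) ≤ (32*α*p)^3 := one_le_pow₀ h1
      have h3 : (32*α*(p:ℝ))^3 = 2^12 * α^3 * (8*(p:ℝ)^3) := by ring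
      rw [div_le_iff₀ (by positivity)]
      nlinarith
    linarith
end S


/-- For every `0 < α < 1` there is a set `A` with `d*(A) > α` such that any two
distinct elements of `B = A·A` differ by at least `2⁻¹² α⁻³`. -/
theorem stmt2 (α : ℝ) (hα0 : 0 < α) (hα1 : α < 1) :
    ∃ A : Set ℕ, 0 ∉ A ∧ α < upperBanachDensity A ∧
      ∀ m m' : ℕ, (∃ a ∈ A, ∃ a' ∈ A, m = a * a') →
        (∃ a ∈ A, ∃ a' ∈ A, m' = a * a') → m ≠ m' →
        1 / (2 ^ 12 * α ^ 3) ≤ |(m : ℝ) - m'| := by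
  rcases lt_or_ge α (1/32) with h32 | h32
  · obtain ⟨A, h1, h2, h3⟩ := main_case α hα0 h32
    exact ⟨A, h1, h2, h3⟩
  · rcases lt_or_ge α (1/16) with h16 | h16
    · apply easy_case 8 (by norm_num) α hα0
      · push_cast
        linarith
      · rw [div_le_iff₀ (by positivity)]
        have hc : (1/32 : ℝ)^3 ≤ α^3 := by
          apply pow_le_pow_left₀ (by norm_num) h32
        push_cast
        nlinarith
    · apply easy_case 1 (by norm_num) α hα0
      · push_cast
        linarith
      · rw [div_le_iff₀ (by positivity)]
        have hc : (1/16 : ℝ)^3 ≤ α^3 := by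
          apply pow_le_pow_left₀ (by norm_num) h16
        push_cast
        nlinarith
end

section
/- For every 0 < α < 1 and every integer t ≥ 2, there exists a set A of positive integers with upper Banach density d*(A) > α such that b_{n+t} - b_n ≥ 2^{-22}·t²·α^{-4} for every n, where b_1 < b_2 < ... is the increasing enumeration of B = A·A. -/
open Finset
open scoped Classical

/-- Counting lemma: a finset of naturals, all in one residue class mod `M`,
all inside an interval of length `X`, has at most `X/M + 1` elements. -/
lemma countAP (V : Finset ℕ) (d : ℤ) (M X w : ℕ) (hM : 0 < M)
    (hcl : ∀ v ∈ V, (v : ℤ) ≡ d [ZMOD (M : ℤ)])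
    (hiv : ∀ v ∈ V, w ≤ v ∧ v ≤ w + X) :
    V.card ≤ X / M + 1 := by
  have : V.card ≤ (Finset.range (X / M + 1)).card := by
    apply Finset.card_le_card_of_injOn (fun v => (v - w) / M)
    · intro v hv
      simp only [Finset.mem_coe, Finset.mem_range]
      have h1 := (hiv v hv).1
      have h2 := (hiv v hv).2
      have : v - w ≤ X := by omega
      have := Nat.div_le_div_right (c := M) this
      omega
    · intro v₁ h₁ v₂ h₂ heq
      simp only at heq
      -- both ≡ d mod M
      have hd : (v₁ : ℤ) ≡ (v₂ : ℤ) [ZMOD (M:ℤ)] := (hcl v₁ h₁).trans (hcl v₂ h₂).symm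
      rcases le_total v₁ v₂ with hle | hle
      · have hdvd : (M:ℤ) ∣ ((v₂ - v₁ : ℕ) : ℤ) := by
          have := (Int.ModEq.dvd hd)
          rwa [Nat.cast_sub hle]
        have hdvd' : M ∣ v₂ - v₁ := Int.natCast_dvd_natCast.mp hdvd
        have hw1 := (hiv v₁ h₁).1
        have hw2 := (hiv v₂ h₂).1
        -- a = v₁ - w, b = v₂ - w, a/M = b/M, M ∣ b - a
        have hab : (v₂ - w) - (v₁ - w) = v₂ - v₁ := by omega
        have hq : (v₁ - w) / M = (v₂ - w) / M := heq
        have h3 : v₂ - w = M * ((v₂ - w)/M) + (v₂ - w) % M := (Nat.div_add_mod _ _).symm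
        have h4 : v₁ - w = M * ((v₁ - w)/M) + (v₁ - w) % M := (Nat.div_add_mod _ _).symm
        have h5 : (v₂ - w) % M < M := Nat.mod_lt _ hM
        have h6 : (v₁ - w) % M < M := Nat.mod_lt _ hM
        have hlt : v₂ - v₁ < M := by
          rw [← hab]
          rw [hq] at h4
          omega
        have := Nat.eq_zero_of_dvd_of_lt hdvd'
        rcases Nat.eq_zero_or_pos (v₂ - v₁) with h0 | h0
        · omega
        · exact absurd (Nat.le_of_dvd h0 hdvd') (by omega)
      · have hdvd : (M:ℤ) ∣ ((v₁ - v₂ : ℕ) : ℤ) := by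
          have := (Int.ModEq.dvd hd.symm)
          rwa [Nat.cast_sub hle]
        have hdvd' : M ∣ v₁ - v₂ := Int.natCast_dvd_natCast.mp hdvd
        have hw1 := (hiv v₁ h₁).1
        have hw2 := (hiv v₂ h₂).1
        have hab : (v₁ - w) - (v₂ - w) = v₁ - v₂ := by omega
        have hq : (v₁ - w) / M = (v₂ - w) / M := heq
        have h3 : v₂ - w = M * ((v₂ - w)/M) + (v₂ - w) % M := (Nat.div_add_mod _ _).symm
        have h4 : v₁ - w = M * ((v₁ - w)/M) + (v₁ - w) % M := (Nat.div_add_mod _ _).symm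
        have h5 : (v₂ - w) % M < M := Nat.mod_lt _ hM
        have h6 : (v₁ - w) % M < M := Nat.mod_lt _ hM
        have hlt : v₁ - v₂ < M := by
          rw [← hab]
          rw [← hq] at h3
          omega
        rcases Nat.eq_zero_or_pos (v₁ - v₂) with h0 | h0
        · omega
        · exact absurd (Nat.le_of_dvd h0 hdvd') (by omega)
  simpa using this

/-- Two-class version. -/
lemma countAP2 (V : Finset ℕ) (d : ℤ) (M X w : ℕ) (hM : 0 < M)
    (hcl : ∀ v ∈ V, (v : ℤ) ≡ d [ZMOD (M : ℤ)] ∨ (v : ℤ) ≡ -d [ZMOD (M : ℤ)])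
    (hiv : ∀ v ∈ V, w ≤ v ∧ v ≤ w + X) :
    V.card ≤ 2 * (X / M + 1) := by
  classical
  have hsplit : V = V.filter (fun v : ℕ => (v:ℤ) ≡ d [ZMOD (M:ℤ)]) ∪
      V.filter (fun v : ℕ => ¬ ((v:ℤ) ≡ d [ZMOD (M:ℤ)])) := by
    simp [Finset.filter_union_filter_not_eq]
  have h1 : (V.filter (fun v : ℕ => (v:ℤ) ≡ d [ZMOD (M:ℤ)])).card ≤ X / M + 1 := by
    apply countAP _ d M X w hM
    · intro v hv; exact (Finset.mem_filter.mp hv).2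
    · intro v hv; exact hiv v (Finset.mem_filter.mp hv).1
  have h2 : (V.filter (fun v : ℕ => ¬((v:ℤ) ≡ d [ZMOD (M:ℤ)]))).card ≤ X / M + 1 := by
    apply countAP _ (-d) M X w hM
    · intro v hv
      have hm := Finset.mem_filter.mp hv
      rcases hcl v hm.1 with h | h
      · exact absurd h hm.2
      · exact h
    · intro v hv; exact hiv v (Finset.mem_filter.mp hv).1
  have hcard : V.card ≤ (V.filter (fun v : ℕ => (v:ℤ) ≡ d [ZMOD (M:ℤ)])).card +
      (V.filter (fun v : ℕ => ¬((v:ℤ) ≡ d [ZMOD (M:ℤ)]))).card := by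
    conv_lhs => rw [hsplit]
    exact Finset.card_union_le _ _
  omega

section Pipeline

/-- From a window of products with fixed sum `u`, extract the difference set. -/
lemma vimg (M : ℕ) (R : Finset ℕ) (L u c₀ : ℕ)
    (F : Finset ℕ)
    (hF : F = (Finset.Ico c₀ (c₀ + L)).filter
      (fun c => ∃ s s' : ℕ, s % M ∈ R ∧ s' % M ∈ R ∧ s + s' = u ∧ s * s' = c))
    (hne : F.Nonempty) :
    ∃ (V : Finset ℕ) (w : ℕ), F.card = V.card ∧
      (∀ v ∈ V, w ≤ v ∧ v ≤ w + Nat.sqrt (4 * L)) ∧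
      (∀ v ∈ V, ∃ s s' : ℕ, s % M ∈ R ∧ s' % M ∈ R ∧ s' ≤ s ∧ s + s' = u ∧ v = s - s') := by
  classical
  -- every c in F has an ordered pair representation with the key identity
  have hrep : ∀ c ∈ F, ∃ s s' : ℕ, s % M ∈ R ∧ s' % M ∈ R ∧ s' ≤ s ∧ s + s' = u ∧ s * s' = c
      ∧ u * u = 4 * c + (s - s') * (s - s') := by
    intro c hc
    rw [hF] at hc
    obtain ⟨-, s, s', h1, h2, h3, h4⟩ := Finset.mem_filter.mp hc
    have key : ∀ a b : ℕ, b ≤ a → (a + b) * (a + b) = 4 * (a * b) + (a - b) * (a - b) := by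
      intro a b hba
      obtain ⟨e, rfl⟩ := Nat.exists_eq_add_of_le hba
      have : b + e - b = e := by omega
      rw [this]
      ring
    rcases le_total s' s with hle | hle
    · exact ⟨s, s', h1, h2, hle, h3, h4, by rw [← h3, ← h4]; exact key s s' hle⟩
    · refine ⟨s', s, h2, h1, hle, by omega, by rw [← h4]; ring, ?_⟩
      rw [← h3, ← h4]
      have := key s' s hle
      calc (s + s') * (s + s') = (s' + s) * (s' + s) := by ring
      _ = 4 * (s' * s) + (s' - s) * (s' - s) := this
      _ = 4 * (s * s') + (s' - s) * (s' - s) := by ring_nf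
  set vf : ℕ → ℕ := fun c => Nat.sqrt (u * u - 4 * c) with hvf
  have hvfc : ∀ c ∈ F, ∀ s s' : ℕ, s' ≤ s → s + s' = u → s * s' = c → vf c = s - s' := by
    intro c hc s s' hle hsum hprod
    have key : (s + s') * (s + s') = 4 * (s * s') + (s - s') * (s - s') := by
      obtain ⟨e, rfl⟩ := Nat.exists_eq_add_of_le hle
      have : s' + e - s' = e := by omega
      rw [this]; ring
    rw [hsum, hprod] at key
    have : u * u - 4 * c = (s - s') * (s - s') := by omega
    rw [hvf]
    simp only
    rw [this, show (s - s') * (s - s') = (s - s')^2 by ring, Nat.sqrt_eq']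
  have hid : ∀ c ∈ F, u * u = 4 * c + (vf c) * (vf c) := by
    intro c hc
    obtain ⟨s, s', _, _, hle, hsum, hprod, hkey⟩ := hrep c hc
    rw [hvfc c hc s s' hle hsum hprod]
    exact hkey
  have hinj : Set.InjOn vf F := by
    intro c₁ h₁ c₂ h₂ heq
    have e₁ := hid c₁ h₁
    have e₂ := hid c₂ h₂
    rw [heq] at e₁
    omega
  refine ⟨F.image vf, (F.image vf).min' (hne.image vf), ?_, ?_, ?_⟩
  · exact (Finset.card_image_of_injOn hinj).symm
  · intro v hv
    constructor
    · exact Finset.min'_le _ _ hv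
    · -- v ≤ min + sqrt(4L)
      obtain ⟨c, hc, rfl⟩ := Finset.mem_image.mp hv
      have hwmem := Finset.min'_mem (F.image vf) (hne.image vf)
      obtain ⟨cw, hcw, hweq⟩ := Finset.mem_image.mp hwmem
      set w := (F.image vf).min' (hne.image vf) with hwdef
      have e₁ := hid c hc
      have e₂ := hid cw hcw
      rw [hweq] at e₂
      have hcI : c₀ ≤ c ∧ c < c₀ + L := by
        rw [hF] at hc; have := (Finset.mem_filter.mp hc).1; exact ⟨(Finset.mem_Ico.mp this).1, (Finset.mem_Ico.mp this).2⟩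
      have hcwI : c₀ ≤ cw ∧ cw < c₀ + L := by
        rw [hF] at hcw; have := (Finset.mem_filter.mp hcw).1; exact ⟨(Finset.mem_Ico.mp this).1, (Finset.mem_Ico.mp this).2⟩
      have hwle : w ≤ vf c := Finset.min'_le _ _ (Finset.mem_image_of_mem vf hc)
      -- vf c * vf c ≤ w * w + 4 * L - 4
      have hsq : vf c * vf c + 4 * c = w * w + 4 * cw := by omega
      obtain ⟨e, he⟩ := Nat.exists_eq_add_of_le hwle
      have hee : e * e ≤ 4 * L := by
        have expand : (w + e) * (w + e) = w * w + e * (2 * w + e) := by ring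
        rw [he, expand] at hsq
        have h1 : e * (2 * w + e) ≤ 4 * L := by omega
        have h2 : e * e ≤ e * (2 * w + e) := Nat.mul_le_mul_left e (by omega)
        omega
      have : e ≤ Nat.sqrt (4 * L) := Nat.le_sqrt.mpr hee
      omega
  · intro v hv
    obtain ⟨c, hc, rfl⟩ := Finset.mem_image.mp hv
    obtain ⟨s, s', h1, h2, hle, hsum, hprod, -⟩ := hrep c hc
    exact ⟨s, s', h1, h2, hle, hsum, (hvfc c hc s s' hle hsum hprod)⟩

/-- Window count, single congruence class version. -/
lemma window_count_single (M : ℕ) (hM : 0 < M) (R : Finset ℕ) (L u c₀ t : ℕ)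
    (hcl : ∃ d : ℤ, ∀ s s' : ℕ, s % M ∈ R → s' % M ∈ R → s' ≤ s → s + s' = u →
        ((s : ℤ) - (s' : ℤ)) ≡ d [ZMOD (M : ℤ)])
    (hKEY : Nat.sqrt (4 * L) / M + 1 ≤ t) :
    ((Finset.Ico c₀ (c₀ + L)).filter
      (fun c => ∃ s s' : ℕ, s % M ∈ R ∧ s' % M ∈ R ∧ s + s' = u ∧ s * s' = c)).card ≤ t := by
  classical
  set F := (Finset.Ico c₀ (c₀ + L)).filter
      (fun c => ∃ s s' : ℕ, s % M ∈ R ∧ s' % M ∈ R ∧ s + s' = u ∧ s * s' = c) with hF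
  rcases F.eq_empty_or_nonempty with h | hne
  · rw [h]; simp
  obtain ⟨V, w, hcard, hiv, hvrep⟩ := vimg M R L u c₀ F hF hne
  obtain ⟨d, hd⟩ := hcl
  rw [hcard]
  refine le_trans (countAP V d M (Nat.sqrt (4*L)) w hM ?_ hiv) hKEY
  intro v hv
  obtain ⟨s, s', h1, h2, hle, hsum, rfl⟩ := hvrep v hv
  have := hd s s' h1 h2 hle hsum
  rwa [← Nat.cast_sub hle] at this

/-- Window count, two congruence classes version. -/
lemma window_count_double (M : ℕ) (hM : 0 < M) (R : Finset ℕ) (L u c₀ t : ℕ)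
    (hcl : ∃ d : ℤ, ∀ s s' : ℕ, s % M ∈ R → s' % M ∈ R → s' ≤ s → s + s' = u →
        (((s : ℤ) - (s' : ℤ)) ≡ d [ZMOD (M : ℤ)] ∨ ((s : ℤ) - (s' : ℤ)) ≡ -d [ZMOD (M : ℤ)]))
    (hKEY : 2 * (Nat.sqrt (4 * L) / M + 1) ≤ t) :
    ((Finset.Ico c₀ (c₀ + L)).filter
      (fun c => ∃ s s' : ℕ, s % M ∈ R ∧ s' % M ∈ R ∧ s + s' = u ∧ s * s' = c)).card ≤ t := by
  classical
  set F := (Finset.Ico c₀ (c₀ + L)).filter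
      (fun c => ∃ s s' : ℕ, s % M ∈ R ∧ s' % M ∈ R ∧ s + s' = u ∧ s * s' = c) with hF
  rcases F.eq_empty_or_nonempty with h | hne
  · rw [h]; simp
  obtain ⟨V, w, hcard, hiv, hvrep⟩ := vimg M R L u c₀ F hF hne
  obtain ⟨d, hd⟩ := hcl
  rw [hcard]
  refine le_trans (countAP2 V d M (Nat.sqrt (4*L)) w hM ?_ hiv) hKEY
  intro v hv
  obtain ⟨s, s', h1, h2, hle, hsum, rfl⟩ := hvrep v hv
  have := hd s s' h1 h2 hle hsum
  rwa [← Nat.cast_sub hle] at this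

end Pipeline

section ET

/-- The Erdős–Turán Sidon set for an odd prime `p`. -/
def etset (p : ℕ) : Finset ℕ := (Finset.range p).image (fun k => 2*p*k + (k*k % p))

lemma etset_lt (p : ℕ) (hp : 0 < p) : ∀ r ∈ etset p, r < 2*p*p := by
  intro r hr
  obtain ⟨k, hk, rfl⟩ := Finset.mem_image.mp hr
  have h1 : k*k % p < p := Nat.mod_lt _ hp
  have h2 : k < p := Finset.mem_range.mp hk
  nlinarith

lemma etset_mono (p : ℕ) (hp : 0 < p) : ∀ a b : ℕ, a < b →
    2*p*a + a*a % p < 2*p*b + b*b % p := by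
  intro a b h
  have h1 : a*a % p < p := Nat.mod_lt _ hp
  have h2 : 0 ≤ b*b % p := Nat.zero_le _
  nlinarith

lemma etset_card (p : ℕ) (hp : 0 < p) : (etset p).card = p := by
  rw [etset, Finset.card_image_of_injOn, Finset.card_range]
  intro a ha b hb hab
  simp only at hab
  by_contra hne
  rcases Nat.lt_or_ge a b with h | h
  · exact absurd hab (Nat.ne_of_lt (etset_mono p hp a b h))
  · have hlt : b < a := by omega
    exact absurd hab.symm (Nat.ne_of_lt (etset_mono p hp b a hlt))

lemma etset_sidon (p : ℕ) (hp : p.Prime) (hodd : p ≠ 2) :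
    ∀ r₁ ∈ etset p, ∀ r₂ ∈ etset p, ∀ r₃ ∈ etset p, ∀ r₄ ∈ etset p,
      r₁ + r₂ = r₃ + r₄ → (r₁ = r₃ ∧ r₂ = r₄) ∨ (r₁ = r₄ ∧ r₂ = r₃) := by
  have hp0 : 0 < p := hp.pos
  intro r₁ h₁ r₂ h₂ r₃ h₃ r₄ h₄ heq
  obtain ⟨k₁, hk₁, rfl⟩ := Finset.mem_image.mp h₁
  obtain ⟨k₂, hk₂, rfl⟩ := Finset.mem_image.mp h₂
  obtain ⟨k₃, hk₃, rfl⟩ := Finset.mem_image.mp h₃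
  obtain ⟨k₄, hk₄, rfl⟩ := Finset.mem_image.mp h₄
  rw [Finset.mem_range] at hk₁ hk₂ hk₃ hk₄
  -- split the equation into sum part and mod part
  have hm₁ : k₁*k₁ % p < p := Nat.mod_lt _ hp0
  have hm₂ : k₂*k₂ % p < p := Nat.mod_lt _ hp0
  have hm₃ : k₃*k₃ % p < p := Nat.mod_lt _ hp0
  have hm₄ : k₄*k₄ % p < p := Nat.mod_lt _ hp0
  have heq' : 2*p*(k₁+k₂) + (k₁*k₁ % p + k₂*k₂ % p) = 2*p*(k₃+k₄) + (k₃*k₃ % p + k₄*k₄ % p) := by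
    ring_nf
    ring_nf at heq
    omega
  have hc₁ : k₁*k₁ % p + k₂*k₂ % p < 2*p := by omega
  have hc₂ : k₃*k₃ % p + k₄*k₄ % p < 2*p := by omega
  have hW : k₁ + k₂ = k₃ + k₄ ∧ k₁*k₁ % p + k₂*k₂ % p = k₃*k₃ % p + k₄*k₄ % p := by
    have e1 : (k₁*k₁ % p + k₂*k₂ % p) % (2*p) = k₁*k₁ % p + k₂*k₂ % p := Nat.mod_eq_of_lt hc₁
    have e2 : (k₃*k₃ % p + k₄*k₄ % p) % (2*p) = k₃*k₃ % p + k₄*k₄ % p := Nat.mod_eq_of_lt hc₂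
    have e3 : (2*p*(k₁+k₂) + (k₁*k₁ % p + k₂*k₂ % p)) % (2*p) = k₁*k₁ % p + k₂*k₂ % p := by
      rw [Nat.mul_add_mod]
      exact e1
    have e4 : (2*p*(k₃+k₄) + (k₃*k₃ % p + k₄*k₄ % p)) % (2*p) = k₃*k₃ % p + k₄*k₄ % p := by
      rw [Nat.mul_add_mod]
      exact e2
    have ec : k₁*k₁ % p + k₂*k₂ % p = k₃*k₃ % p + k₄*k₄ % p := by
      rw [← e3, ← e4, heq']
    constructor
    · have : 2*p*(k₁+k₂) = 2*p*(k₃+k₄) := by omega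
      have hpp : 0 < 2*p := by omega
      exact Nat.eq_of_mul_eq_mul_left hpp this
    · exact ec
  obtain ⟨hsum, hmod⟩ := hW
  -- pass to ZMod p
  haveI : Fact p.Prime := ⟨hp⟩
  have hzsum : (k₁ : ZMod p) + k₂ = k₃ + k₄ := by
    have := congrArg (fun n : ℕ => (n : ZMod p)) hsum
    push_cast at this
    exact this
  have hzsq : (k₁ : ZMod p)*k₁ + k₂*k₂ = k₃*k₃ + k₄*k₄ := by
    have := congrArg (fun n : ℕ => (n : ZMod p)) hmod
    push_cast [ZMod.natCast_mod] at this
    exact this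
  have h2ne : (2 : ZMod p) ≠ 0 := by
    intro h
    have : ((2:ℕ) : ZMod p) = 0 := by push_cast; exact h
    rw [ZMod.natCast_eq_zero_iff] at this
    have hle := Nat.le_of_dvd (by norm_num) this
    have h2le := hp.two_le
    omega
  have hprodeq : (k₁ : ZMod p) * k₂ = (k₃ : ZMod p) * k₄ := by
    have e : (2 : ZMod p) * ((k₁:ZMod p)*k₂) = 2 * ((k₃:ZMod p)*k₄) := by
      have expand : ((k₁:ZMod p)+k₂)*((k₁:ZMod p)+k₂) - ((k₁:ZMod p)*k₁ + k₂*k₂)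
          = 2*((k₁:ZMod p)*k₂) := by ring
      have expand' : ((k₃:ZMod p)+k₄)*((k₃:ZMod p)+k₄) - ((k₃:ZMod p)*k₃ + k₄*k₄)
          = 2*((k₃:ZMod p)*k₄) := by ring
      rw [← expand, ← expand', hzsum, hzsq]
    exact mul_left_cancel₀ h2ne e
  -- (k₁ - k₃)(k₁ - k₄) = 0
  have hroot : ((k₁:ZMod p) - k₃) * ((k₁:ZMod p) - k₄) = 0 := by
    have : ((k₁:ZMod p) - k₃) * ((k₁:ZMod p) - k₄)
        = (k₁:ZMod p)*k₁ - ((k₃:ZMod p)+k₄)*k₁ + (k₃:ZMod p)*k₄ := by ring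
    rw [this, ← hzsum, ← hprodeq]
    ring
  have hcast : ∀ a b : ℕ, a < p → b < p → (a : ZMod p) = (b : ZMod p) → a = b := by
    intro a b ha hb h
    have := congrArg ZMod.val h
    rwa [ZMod.val_cast_of_lt ha, ZMod.val_cast_of_lt hb] at this
  rcases mul_eq_zero.mp hroot with h | h
  · have h13 : k₁ = k₃ := hcast _ _ hk₁ hk₃ (by rwa [sub_eq_zero] at h)
    left
    constructor
    · rw [h13]
    · have : k₂ = k₄ := by omega
      rw [this]
  · have h14 : k₁ = k₄ := hcast _ _ hk₁ hk₄ (by rwa [sub_eq_zero] at h)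
    right
    constructor
    · rw [h14]
    · have : k₂ = k₃ := by omega
      rw [this]

end ET

section Blocks

/-- Block lengths. -/
def KK (M k : ℕ) : ℕ := (k+1) * M

/-- Block positions. -/
def xx (M L : ℕ) : ℕ → ℕ
  | 0 => (L + 3*M + 3)^2
  | (k+1) => (xx M L k + KK M k)^2 + L

variable {M L : ℕ}

lemma xx_ge (hM : 0 < M) : ∀ k, L + 3*M*(k+1) + 3 ≤ xx M L k := by
  intro k
  induction k with
  | zero =>
    show L + 3*M*1 + 3 ≤ (L + 3*M + 3)^2
    nlinarith
  | succ k ih =>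
    show L + 3*M*(k+2) + 3 ≤ (xx M L k + KK M k)^2 + L
    have h1 : 3*M*(k+1) + 3 ≤ xx M L k + KK M k := by
      have : 0 ≤ KK M k := Nat.zero_le _
      omega
    have h2 : (3*M*(k+1)+3) * (3*M*(k+1)+3) ≤ (xx M L k + KK M k)^2 := by
      rw [pow_two]
      exact Nat.mul_le_mul h1 h1
    calc L + 3*M*(k+2) + 3 ≤ (3*M*(k+1)+3) * (3*M*(k+1)+3) + L := by
          have e : (3*M*(k+1)+3) * (3*M*(k+1)+3)
              = 9*(M*(k+1))*(M*(k+1)) + 18*(M*(k+1)) + 9 := by ring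
          have e2 : 3*M*(k+2) = 3*(M*(k+1)) + 3*M := by ring
          have h5 : M ≤ M*(k+1) := Nat.le_mul_of_pos_right M (by omega)
          have h6 : 0 ≤ 9*(M*(k+1))*(M*(k+1)) := Nat.zero_le _
          rw [e, e2]
          generalize M*(k+1) = W at *
          nlinarith
    _ ≤ (xx M L k + KK M k)^2 + L := Nat.add_le_add_right h2 L

lemma xx_pos (hM : 0 < M) (k : ℕ) : 0 < xx M L k := by
  have := xx_ge (L := L) hM k
  omega

lemma xx_ge_L (hM : 0 < M) (k : ℕ) : L + 1 ≤ xx M L k := by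
  have := xx_ge (L := L) hM k
  have : 0 < 3*M*(k+1) := by positivity
  omega

lemma KK_pos (hM : 0 < M) (k : ℕ) : 0 < KK M k := by
  simp [KK]; omega

lemma xx_ge_KL (hM : 0 < M) (k : ℕ) : L + KK M k + 1 ≤ xx M L k := by
  have := xx_ge (L := L) hM k
  have hKK : KK M k = (k+1)*M := rfl
  nlinarith

lemma xx_ge_KK1 (hM : 0 < M) (k : ℕ) : KK M (k+1) + M ≤ xx M L k := by
  have := xx_ge (L := L) hM k
  have hKK : KK M (k+1) = (k+2)*M := rfl
  nlinarith

lemma xx_succ_ge (hM : 0 < M) (k : ℕ) : xx M L k + KK M k ≤ xx M L (k+1) := by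
  show xx M L k + KK M k ≤ (xx M L k + KK M k)^2 + L
  have h1 : 1 ≤ xx M L k + KK M k := by
    have := xx_pos (L := L) hM k
    omega
  nlinarith

lemma xx_mono (hM : 0 < M) : Monotone (xx M L) := by
  apply monotone_nat_of_le_succ
  intro k
  have := xx_succ_ge (L := L) hM k
  omega

lemma xxKK_mono (hM : 0 < M) {j k : ℕ} (h : j ≤ k) :
    xx M L j + KK M j ≤ xx M L k + KK M k := by
  induction k with
  | zero =>
    have : j = 0 := by omega
    subst this
    exact le_refl _
  | succ k ih =>
    rcases Nat.lt_or_ge j (k+1) with h' | h'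
    · have h2 := ih (by omega)
      have h3 := xx_succ_ge (L := L) hM k
      have h4 : KK M (k+1) + M ≤ xx M L k := xx_ge_KK1 hM k
      have : KK M k ≤ KK M (k+1) := by simp [KK]; nlinarith
      omega
    · have : j = k+1 := by omega
      subst this; omega

lemma G1 (hM : 0 < M) (k : ℕ) : L + KK M k * KK M k ≤ xx M L k := by
  induction k with
  | zero =>
    show L + (1*M) * (1*M) ≤ (L + 3*M + 3)^2
    nlinarith
  | succ k ih =>
    show L + KK M (k+1) * KK M (k+1) ≤ (xx M L k + KK M k)^2 + L
    have h1 : KK M (k+1) ≤ xx M L k + KK M k := by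
      have := xx_ge_KK1 (L := L) hM k
      omega
    nlinarith

lemma G5 (hM : 0 < M) {j k : ℕ} (h : j < k) :
    L + KK M k * (xx M L j + KK M j) ≤ xx M L k := by
  obtain ⟨m, rfl⟩ : ∃ m, k = m + 1 := ⟨k - 1, by omega⟩
  show L + KK M (m+1) * (xx M L j + KK M j) ≤ (xx M L m + KK M m)^2 + L
  have h1 : KK M (m+1) ≤ xx M L m + KK M m := by
    have := xx_ge_KK1 (L := L) hM m
    omega
  have h2 : xx M L j + KK M j ≤ xx M L m + KK M m := xxKK_mono hM (by omega)
  nlinarith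

lemma G6 (hM : 0 < M) {j k : ℕ} (h : j < k) :
    (xx M L j + KK M j) * (xx M L k + KK M k) + L ≤ xx M L (j+1) * xx M L k := by
  have hP2 : 2 ≤ xx M L j + KK M j := by
    have := xx_pos (L := L) hM j
    have := KK_pos (M := M) hM j
    omega
  have hstep : (xx M L j + KK M j) * (xx M L j + KK M j) ≤ xx M L (j+1) := by
    show _ ≤ (xx M L j + KK M j)^2 + L
    nlinarith
  have hxk : L + KK M k + 1 ≤ xx M L k := xx_ge_KL (L := L) hM k
  -- (P)^2 * xk ≥ P*(xk + Kk) + L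
  have key : (xx M L j + KK M j) * (xx M L j + KK M j) * xx M L k
      ≥ (xx M L j + KK M j) * (xx M L k + KK M k) + L := by
    set P := xx M L j + KK M j
    set xk := xx M L k
    set Kk := KK M k
    have h1 : P * xk ≥ P * Kk + P * L := by
      have hx : Kk + L ≤ xk := by omega
      calc P * Kk + P * L = P * (Kk + L) := by ring
      _ ≤ P * xk := Nat.mul_le_mul_left _ hx
    have h3 : 2*(P*xk) ≤ P*P*xk := by
      have : 2*P ≤ P*P := Nat.mul_le_mul_right _ hP2
      calc 2*(P*xk) = (2*P)*xk := by ring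
      _ ≤ (P*P)*xk := Nat.mul_le_mul_right _ this
    have h4 : L ≤ P * L := Nat.le_mul_of_pos_left L (by omega)
    linarith
  calc (xx M L j + KK M j) * (xx M L k + KK M k) + L
      ≤ (xx M L j + KK M j) * (xx M L j + KK M j) * xx M L k := key
  _ ≤ xx M L (j+1) * xx M L k := Nat.mul_le_mul_right _ hstep

lemma G7 (hM : 0 < M) (k : ℕ) :
    (xx M L k + KK M k) * (xx M L k + KK M k) + L ≤ xx M L 0 * xx M L (k+1) := by
  have h0 : 1 ≤ xx M L 0 := xx_pos hM 0
  have : xx M L (k+1) = (xx M L k + KK M k)^2 + L := rfl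
  calc (xx M L k + KK M k) * (xx M L k + KK M k) + L = xx M L (k+1) := by rw [this]; ring
  _ ≤ xx M L 0 * xx M L (k+1) := Nat.le_mul_of_pos_left _ h0

/-- Separation of product regions. -/
lemma SEP (hM : 0 < M) {j k j' k' : ℕ} (hjk : j ≤ k) (hj'k' : j' ≤ k') (hlex : k < k' ∨ (k = k' ∧ j < j')) :
    (xx M L j + KK M j) * (xx M L k + KK M k) + L ≤ xx M L j' * xx M L k' := by
  rcases hlex with h | ⟨rfl, h⟩
  · calc (xx M L j + KK M j) * (xx M L k + KK M k) + L
        ≤ (xx M L k + KK M k) * (xx M L k + KK M k) + L := by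
          have := xxKK_mono (L := L) hM hjk
          have h0 : 0 < xx M L k + KK M k := by
            have := xx_pos (L := L) hM k; omega
          exact Nat.add_le_add_right (Nat.mul_le_mul_right _ this) L
    _ ≤ xx M L 0 * xx M L (k+1) := G7 hM k
    _ ≤ xx M L j' * xx M L k' := by
        apply Nat.mul_le_mul
        · exact xx_mono hM (Nat.zero_le j')
        · exact xx_mono hM (show k+1 ≤ k' by omega)
  · calc (xx M L j + KK M j) * (xx M L k + KK M k) + L
        ≤ xx M L (j+1) * xx M L k := G6 hM (show j < k by omega)
    _ ≤ xx M L j' * xx M L k := Nat.mul_le_mul_right _ (xx_mono hM (show j+1 ≤ j' by omega))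

end Blocks

section Density

lemma count_period (M : ℕ) (hM : 0 < M) (R : Finset ℕ) (hRM : ∀ r ∈ R, r < M) :
    ∀ n : ℕ, ((Finset.range (n*M)).filter (fun s => s % M ∈ R)).card = n * R.card := by
  intro n
  induction n with
  | zero => simp
  | succ n ih =>
    have hexp : (n+1)*M = n*M + M := by ring
    rw [hexp]
    have hsplit : Finset.range (n*M + M) = Finset.range (n*M) ∪ Finset.Ico (n*M) (n*M + M) := by
      simp only [Finset.range_eq_Ico]
      exact (Finset.Ico_union_Ico_eq_Ico (Nat.zero_le _) (Nat.le_add_right _ _)).symm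
    have hdisj : Disjoint (Finset.range (n*M)) (Finset.Ico (n*M) (n*M + M)) := by
      rw [Finset.range_eq_Ico]
      exact Finset.Ico_disjoint_Ico_consecutive 0 (n*M) (n*M + M)
    have himg : (Finset.Ico (n*M) (n*M + M)).filter (fun s => s % M ∈ R)
        = R.image (fun r => n*M + r) := by
      ext s
      simp only [Finset.mem_filter, Finset.mem_Ico, Finset.mem_image]
      constructor
      · rintro ⟨⟨h1, h2⟩, h3⟩
        refine ⟨s % M, ?_, ?_⟩
        · exact h3
        · have hlt : s - n*M < M := by omega
          have hmod : s % M = s - n*M := by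
            conv_lhs => rw [show s = M*n + (s - n*M) by rw [mul_comm]; omega]
            rw [Nat.mul_add_mod]
            exact Nat.mod_eq_of_lt hlt
          omega
      · rintro ⟨r, hr, rfl⟩
        have hrM := hRM r hr
        have hmod : (n*M + r) % M = r := by
          rw [show n*M + r = M*n + r by ring, Nat.mul_add_mod]
          exact Nat.mod_eq_of_lt hrM
        refine ⟨⟨by omega, by omega⟩, by rw [hmod]; exact hr⟩
    rw [hsplit, Finset.filter_union, Finset.card_union_of_disjoint
      (Finset.disjoint_filter_filter hdisj), ih, himg, Finset.card_image_of_injective _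
      (fun a b hab => by omega)]
    ring

end Density

section Main

theorem main_abstract (α : ℝ) (hα0 : 0 < α) (t L M : ℕ) (R : Finset ℕ)
    (ht : 2 ≤ t) (hM : 0 < M) (hL : 0 < L)
    (hTle : (t:ℝ)^2 / (2^22 * α^4) ≤ (L:ℝ))
    (hRM : ∀ r ∈ R, r < M)
    (hden : α < (R.card : ℝ) / (M:ℝ))
    (HW : ∀ u c₀ : ℕ, ((Finset.Ico c₀ (c₀ + L)).filter
        (fun c => ∃ s s' : ℕ, s % M ∈ R ∧ s' % M ∈ R ∧ s + s' = u ∧ s * s' = c)).card ≤ t) :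
    ∃ A : Set ℕ, 0 ∉ A ∧ α < upperBanachDensity A ∧
      ∀ b : ℕ → ℕ, StrictMono b →
        (∀ m, m ∈ Set.range b ↔ ∃ a ∈ A, ∃ a' ∈ A, m = a * a') →
        ∀ n : ℕ, (t : ℝ) ^ 2 / (2 ^ 22 * α ^ 4) ≤ (b (n + t) : ℝ) - b n := by
  classical
  set A : Set ℕ := {n | ∃ k s : ℕ, s % M ∈ R ∧ s < KK M k ∧ n = xx M L k + s} with hA
  -- 0 ∉ A
  have h0A : 0 ∉ A := by
    rintro ⟨k, s, -, -, h⟩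
    have := xx_pos (M := M) (L := L) hM k
    omega
  -- window lemma
  have WL : ∀ a : ℕ, ((Finset.Ico a (a+L)).filter
      (fun m => ∃ a₁ ∈ A, ∃ a₂ ∈ A, m = a₁ * a₂)).card ≤ t := by
    intro a
    set W := (Finset.Ico a (a+L)).filter
      (fun m => ∃ a₁ ∈ A, ∃ a₂ ∈ A, m = a₁ * a₂) with hW
    rcases W.eq_empty_or_nonempty with hE | ⟨m₀, hm₀⟩
    · rw [hE]; simp
    have hwin : ∀ m ∈ W, a ≤ m ∧ m < a + L := by
      intro m hm
      have := (Finset.mem_filter.mp hm).1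
      exact ⟨(Finset.mem_Ico.mp this).1, (Finset.mem_Ico.mp this).2⟩
    have REP : ∀ m : ℕ, (∃ a₁ ∈ A, ∃ a₂ ∈ A, m = a₁ * a₂) →
        ∃ j k s s', j ≤ k ∧ s % M ∈ R ∧ s' % M ∈ R ∧ s < KK M j ∧ s' < KK M k ∧
          m = (xx M L j + s) * (xx M L k + s') := by
      rintro m ⟨a₁, ⟨j, s, hs1, hs2, rfl⟩, a₂, ⟨k, s', ht1, ht2, rfl⟩, rfl⟩
      rcases le_total j k with h | h
      · exact ⟨j, k, s, s', h, hs1, ht1, hs2, ht2, rfl⟩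
      · exact ⟨k, j, s', s, h, ht1, hs1, ht2, hs2, mul_comm _ _⟩
    -- no two window elements in lex-ordered distinct regions
    have NOLEX : ∀ m₁ ∈ W, ∀ m₂ ∈ W, ∀ j k s s' j' k' τ τ' : ℕ,
        j ≤ k → j' ≤ k' →
        s < KK M j → s' < KK M k → τ < KK M j' → τ' < KK M k' →
        m₁ = (xx M L j + s) * (xx M L k + s') →
        m₂ = (xx M L j' + τ) * (xx M L k' + τ') →
        (k < k' ∨ (k = k' ∧ j < j')) → False := by
      intro m₁ h₁ m₂ h₂ j k s s' j' k' τ τ' hjk hj'k' hs hs' hτ hτ' hm₁ hm₂ hlex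
      have hm₁lt : m₁ < (xx M L j + KK M j) * (xx M L k + KK M k) := by
        rw [hm₁]
        apply Nat.mul_lt_mul_of_lt_of_lt <;> omega
      have hm₂ge : xx M L j' * xx M L k' ≤ m₂ := by
        rw [hm₂]
        exact Nat.mul_le_mul (Nat.le_add_right _ _) (Nat.le_add_right _ _)
      have hsep := SEP (L := L) hM hjk hj'k' hlex
      have w₁ := hwin m₁ h₁
      have w₂ := hwin m₂ h₂
      omega
    obtain ⟨j₀, k₀, s₀, s₀', hjk₀, hs₀R, hs₀'R, hs₀, hs₀', hm₀eq⟩ :=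
      REP m₀ (Finset.mem_filter.mp hm₀).2
    -- every window element has its (normalized) region equal to (j₀, k₀)
    have REG : ∀ m ∈ W, ∀ j k s s' : ℕ, j ≤ k → s < KK M j → s' < KK M k →
        m = (xx M L j + s) * (xx M L k + s') → j = j₀ ∧ k = k₀ := by
      intro m hm j k s s' hjk hs hs' hme
      rcases Nat.lt_trichotomy k k₀ with h | h | h
      · exact absurd (NOLEX m hm m₀ hm₀ j k s s' j₀ k₀ s₀ s₀' hjk hjk₀ hs hs' hs₀ hs₀'
          hme hm₀eq (Or.inl h)) (fun x => x)
      · rcases Nat.lt_trichotomy j j₀ with h' | h' | h'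
        · exact absurd (NOLEX m hm m₀ hm₀ j k s s' j₀ k₀ s₀ s₀' hjk hjk₀ hs hs' hs₀ hs₀'
            hme hm₀eq (Or.inr ⟨h, h'⟩)) (fun x => x)
        · exact ⟨h', h⟩
        · exact absurd (NOLEX m₀ hm₀ m hm j₀ k₀ s₀ s₀' j k s s' hjk₀ hjk hs₀ hs₀' hs hs'
            hm₀eq hme (Or.inr ⟨h.symm, h'⟩)) (fun x => x)
      · exact absurd (NOLEX m₀ hm₀ m hm j₀ k₀ s₀ s₀' j k s s' hjk₀ hjk hs₀ hs₀' hs hs'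
          hm₀eq hme (Or.inl h)) (fun x => x)
    rcases Nat.lt_or_ge j₀ k₀ with hcase | hcase
    · -- cross-block region: at most one element
      have hone : ∀ m₁ ∈ W, ∀ m₂ ∈ W, m₁ = m₂ := by
        have keyσ : ∀ m₁ ∈ W, ∀ m₂ ∈ W, ∀ s₁ σ₁ s₂ σ₂ : ℕ,
            s₁ < KK M j₀ → σ₁ < KK M k₀ → s₂ < KK M j₀ → σ₂ < KK M k₀ →
            m₁ = (xx M L j₀ + s₁) * (xx M L k₀ + σ₁) →
            m₂ = (xx M L j₀ + s₂) * (xx M L k₀ + σ₂) →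
            s₁ = s₂ → σ₁ < σ₂ → False := by
          intro m₁ h₁ m₂ h₂ s₁ σ₁ s₂ σ₂ hs₁ hσ₁ hs₂ hσ₂ hm₁ hm₂ hss hσσ
          subst hss
          have hstep : m₁ + (xx M L j₀ + s₁) ≤ m₂ := by
            rw [hm₁, hm₂]
            calc (xx M L j₀ + s₁) * (xx M L k₀ + σ₁) + (xx M L j₀ + s₁)
                = (xx M L j₀ + s₁) * (xx M L k₀ + σ₁ + 1) := by ring
            _ ≤ (xx M L j₀ + s₁) * (xx M L k₀ + σ₂) := Nat.mul_le_mul_left _ (by omega)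
          have hxL := xx_ge_L (M := M) (L := L) hM j₀
          have w₁ := hwin m₁ h₁
          have w₂ := hwin m₂ h₂
          omega
        have keys : ∀ m₁ ∈ W, ∀ m₂ ∈ W, ∀ s₁ σ₁ s₂ σ₂ : ℕ,
            s₁ < KK M j₀ → σ₁ < KK M k₀ → s₂ < KK M j₀ → σ₂ < KK M k₀ →
            m₁ = (xx M L j₀ + s₁) * (xx M L k₀ + σ₁) →
            m₂ = (xx M L j₀ + s₂) * (xx M L k₀ + σ₂) →
            s₁ < s₂ → False := by
          intro m₁ h₁ m₂ h₂ s₁ σ₁ s₂ σ₂ hs₁ hσ₁ hs₂ hσ₂ hm₁ hm₂ hss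
          have h₁' : (xx M L j₀ + s₁) * xx M L k₀ + xx M L k₀ ≤ m₂ := by
            rw [hm₂]
            calc (xx M L j₀ + s₁) * xx M L k₀ + xx M L k₀
                = (xx M L j₀ + s₁ + 1) * xx M L k₀ := by ring
            _ ≤ (xx M L j₀ + s₂) * xx M L k₀ := Nat.mul_le_mul_right _ (by omega)
            _ ≤ (xx M L j₀ + s₂) * (xx M L k₀ + σ₂) := Nat.mul_le_mul_left _ (by omega)
          have h₂' : m₁ ≤ (xx M L j₀ + s₁) * xx M L k₀ + KK M k₀ * (xx M L j₀ + KK M j₀) := by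
            rw [hm₁]
            calc (xx M L j₀ + s₁) * (xx M L k₀ + σ₁)
                = (xx M L j₀ + s₁) * xx M L k₀ + (xx M L j₀ + s₁) * σ₁ := by ring
            _ ≤ (xx M L j₀ + s₁) * xx M L k₀ + KK M k₀ * (xx M L j₀ + KK M j₀) := by
                have : (xx M L j₀ + s₁) * σ₁ ≤ (xx M L j₀ + KK M j₀) * KK M k₀ :=
                  Nat.mul_le_mul (by omega) (by omega)
                rw [mul_comm (xx M L j₀ + KK M j₀) (KK M k₀)] at this
                omega
          have h₃ := G5 (L := L) hM hcase
          have w₁ := hwin m₁ h₁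
          have w₂ := hwin m₂ h₂
          omega
        intro m₁ h₁ m₂ h₂
        obtain ⟨j₁, k₁, s₁, σ₁, hjk₁, hR₁, hR₁', hlt₁, hlt₁', he₁⟩ :=
          REP m₁ (Finset.mem_filter.mp h₁).2
        obtain ⟨hj₁, hk₁⟩ := REG m₁ h₁ j₁ k₁ s₁ σ₁ hjk₁ hlt₁ hlt₁' he₁
        rw [hj₁] at hlt₁
        rw [hk₁] at hlt₁'
        rw [hj₁, hk₁] at he₁
        obtain ⟨j₂, k₂, s₂, σ₂, hjk₂, hR₂, hR₂', hlt₂, hlt₂', he₂⟩ :=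
          REP m₂ (Finset.mem_filter.mp h₂).2
        obtain ⟨hj₂, hk₂⟩ := REG m₂ h₂ j₂ k₂ s₂ σ₂ hjk₂ hlt₂ hlt₂' he₂
        rw [hj₂] at hlt₂
        rw [hk₂] at hlt₂'
        rw [hj₂, hk₂] at he₂
        rcases Nat.lt_trichotomy s₁ s₂ with h | h | h
        · exact absurd (keys m₁ h₁ m₂ h₂ s₁ σ₁ s₂ σ₂ hlt₁ hlt₁' hlt₂ hlt₂' he₁ he₂ h)
            (fun x => x)
        · subst h
          rcases Nat.lt_trichotomy σ₁ σ₂ with h' | h' | h'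
          · exact absurd (keyσ m₁ h₁ m₂ h₂ s₁ σ₁ s₁ σ₂ hlt₁ hlt₁' hlt₂ hlt₂' he₁ he₂ rfl h')
              (fun x => x)
          · rw [he₁, he₂, h']
          · exact absurd (keyσ m₂ h₂ m₁ h₁ s₁ σ₂ s₁ σ₁ hlt₂ hlt₂' hlt₁ hlt₁' he₂ he₁ rfl h')
              (fun x => x)
        · exact absurd (keys m₂ h₂ m₁ h₁ s₂ σ₂ s₁ σ₁ hlt₂ hlt₂' hlt₁ hlt₁' he₂ he₁ h)
            (fun x => x)
      have : W.card ≤ 1 := Finset.card_le_one.mpr (fun m₁ h₁ m₂ h₂ => hone m₁ h₁ m₂ h₂)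
      omega
    · -- same-block region
      have hk₀ : j₀ = k₀ := by omega
      subst hk₀
      set X := xx M L j₀ with hX
      -- all elements share the same u
      have keyU : ∀ m₁ ∈ W, ∀ m₂ ∈ W, ∀ s₁ σ₁ s₂ σ₂ : ℕ,
          s₁ < KK M j₀ → σ₁ < KK M j₀ → s₂ < KK M j₀ → σ₂ < KK M j₀ →
          m₁ = (X + s₁) * (X + σ₁) → m₂ = (X + s₂) * (X + σ₂) →
          s₁ + σ₁ < s₂ + σ₂ → False := by
        intro m₁ h₁ m₂ h₂ s₁ σ₁ s₂ σ₂ hs₁ hσ₁ hs₂ hσ₂ hm₁ hm₂ huu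
        have e₁ : m₁ = X*X + (s₁+σ₁)*X + s₁*σ₁ := by rw [hm₁]; ring
        have e₂ : m₂ = X*X + (s₂+σ₂)*X + s₂*σ₂ := by rw [hm₂]; ring
        have h₁' : X*X + (s₁+σ₁)*X + X ≤ m₂ := by
          rw [e₂]
          have : (s₁+σ₁)*X + X = (s₁+σ₁+1)*X := by ring
          have h2 : (s₁+σ₁+1)*X ≤ (s₂+σ₂)*X := Nat.mul_le_mul_right _ (by omega)
          omega
        have h₂' : s₁*σ₁ ≤ KK M j₀ * KK M j₀ := Nat.mul_le_mul (by omega) (by omega)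
        have h₃ := G1 (L := L) hM j₀
        have w₁ := hwin m₁ h₁
        have w₂ := hwin m₂ h₂
        omega
      set u₀ := s₀ + s₀' with hu₀
      set base := X*X + u₀*X with hbase
      -- each element of W equals base + s*σ with s+σ=u₀
      have hdecomp : ∀ m ∈ W, ∃ s σ : ℕ, s % M ∈ R ∧ σ % M ∈ R ∧ s + σ = u₀ ∧
          m = base + s*σ := by
        intro m hm
        obtain ⟨j, k, s, σ, hjk, hR₁, hR₂, hlt, hlt', he⟩ :=
          REP m (Finset.mem_filter.mp hm).2
        obtain ⟨hj, hk⟩ := REG m hm j k s σ hjk hlt hlt' he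
        rw [hj] at hlt
        rw [hk] at hlt'
        rw [hj, hk, ← hX] at he
        have hueq : s + σ = u₀ := by
          rcases Nat.lt_trichotomy (s + σ) u₀ with h | h | h
          · exact absurd (keyU m hm m₀ hm₀ s σ s₀ s₀' hlt hlt' hs₀ hs₀' he hm₀eq (by omega))
              (fun x => x)
          · exact h
          · exact absurd (keyU m₀ hm₀ m hm s₀ s₀' s σ hs₀ hs₀' hlt hlt' hm₀eq he (by omega))
              (fun x => x)
        refine ⟨s, σ, hR₁, hR₂, hueq, ?_⟩
        rw [he, hbase, ← hueq]
        ring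
      have hcardle : W.card ≤ ((Finset.Ico (a - base) (a - base + L)).filter
          (fun c => ∃ s s' : ℕ, s % M ∈ R ∧ s' % M ∈ R ∧ s + s' = u₀ ∧ s * s' = c)).card := by
        apply Finset.card_le_card_of_injOn (fun m => m - base)
        · intro m hm
          obtain ⟨s, σ, hR₁, hR₂, hsum, he⟩ := hdecomp m hm
          have w := hwin m hm
          simp only [Finset.mem_coe, Finset.mem_filter, Finset.mem_Ico]
          refine ⟨⟨by omega, by omega⟩, s, σ, hR₁, hR₂, hsum, by omega⟩
        · intro m₁ h₁ m₂ h₂ he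
          obtain ⟨s, σ, -, -, -, he₁⟩ := hdecomp m₁ h₁
          obtain ⟨s', σ', -, -, -, he₂⟩ := hdecomp m₂ h₂
          simp only at he
          omega
      exact le_trans hcardle (HW u₀ (a - base))
  -- density
  have hdenA : α < upperBanachDensity A := by
    have hub : ∀ K x : ℕ, (Nat.card (A ∩ Set.Ioc x (x + K) : Set ℕ) : ℝ) / K ≤ 1 := by
      intro K x
      rcases Nat.eq_zero_or_pos K with rfl | hK
      · simp
      have hfin : (Set.Ioc x (x + K)).Finite := Set.finite_Ioc _ _
      have hcard : Nat.card (A ∩ Set.Ioc x (x + K) : Set ℕ) ≤ K := by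
        calc Nat.card (A ∩ Set.Ioc x (x + K) : Set ℕ)
            ≤ Nat.card (Set.Ioc x (x + K) : Set ℕ) :=
              Nat.card_mono hfin Set.inter_subset_right
        _ = K := by
              rw [Nat.card_coe_set_eq, ← Finset.coe_Ioc, Set.ncard_coe_finset,
                Nat.card_Ioc]
              omega
      rw [div_le_one (by exact_mod_cast hK)]
      exact_mod_cast hcard
    have hbdd : Filter.IsBoundedUnder (· ≤ ·) Filter.atTop
        (fun K : ℕ => ⨆ x : ℕ, (Nat.card (A ∩ Set.Ioc x (x + K) : Set ℕ) : ℝ) / K) := by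
      refine Filter.isBoundedUnder_of ⟨1, fun K => ?_⟩
      exact ciSup_le (fun x => hub K x)
    have hfreq : ∃ᶠ K in Filter.atTop, (R.card : ℝ) / M ≤
        ⨆ x : ℕ, (Nat.card (A ∩ Set.Ioc x (x + K) : Set ℕ) : ℝ) / K := by
      rw [Filter.frequently_atTop]
      intro N
      refine ⟨(N+1) * M, by nlinarith, ?_⟩
      set K := (N+1) * M with hK
      set x₀ := xx M L N - 1 with hx₀
      have hxpos := xx_pos (M := M) (L := L) hM N
      -- the block N is inside the window
      have hcnt : (N+1) * R.card ≤ Nat.card (A ∩ Set.Ioc x₀ (x₀ + K) : Set ℕ) := by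
        set G₀ := ((Finset.range K).filter (fun s => s % M ∈ R)).image
          (fun s => xx M L N + s) with hG₀
        have hsub : ↑G₀ ⊆ A ∩ Set.Ioc x₀ (x₀ + K) := by
          intro n hn
          simp only [hG₀, Finset.coe_image, Set.mem_image, Finset.mem_coe,
            Finset.mem_filter, Finset.mem_range] at hn
          obtain ⟨s, ⟨hsK, hsR⟩, rfl⟩ := hn
          constructor
          · exact ⟨N, s, hsR, by rw [KK]; omega, rfl⟩
          · simp only [Set.mem_Ioc]
            omega
        have hfin : (A ∩ Set.Ioc x₀ (x₀ + K)).Finite :=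
          Set.Finite.subset (Set.finite_Ioc _ _) Set.inter_subset_right
        have h1 : G₀.card ≤ (A ∩ Set.Ioc x₀ (x₀ + K)).ncard := by
          rw [← Set.ncard_coe_finset]
          exact Set.ncard_le_ncard hsub hfin
        have h2 : G₀.card = (N+1) * R.card := by
          rw [hG₀, Finset.card_image_of_injective _ (fun a b hab => by omega)]
          exact count_period M hM R hRM (N+1)
        rw [Nat.card_coe_set_eq]
        omega
      have hKpos : 0 < K := by positivity
      have hterm : (R.card : ℝ) / M ≤
          (Nat.card (A ∩ Set.Ioc x₀ (x₀ + K) : Set ℕ) : ℝ) / K := by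
        have hM' : (0:ℝ) < M := by exact_mod_cast hM
        have he : (R.card : ℝ) / M = ((N+1) * R.card : ℕ) / (K : ℝ) := by
          rw [hK]
          push_cast
          rw [div_eq_div_iff (ne_of_gt hM') (mul_ne_zero (by positivity) (ne_of_gt hM'))]
          ring
        rw [he]
        have hcnt' : (((N+1) * R.card : ℕ) : ℝ) ≤ (Nat.card (A ∩ Set.Ioc x₀ (x₀ + K) : Set ℕ) : ℝ) := by
          exact_mod_cast hcnt
        gcongr
      refine le_trans hterm ?_
      exact le_ciSup (f := fun x : ℕ => (Nat.card (A ∩ Set.Ioc x (x + K) : Set ℕ) : ℝ) / K)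
        ⟨1, by rintro y ⟨x, rfl⟩; exact hub K x⟩ x₀
    calc α < (R.card : ℝ) / M := hden
    _ ≤ upperBanachDensity A := by
      rw [upperBanachDensity]
      exact Filter.le_limsup_of_frequently_le hfreq hbdd
  -- conclusion
  refine ⟨A, h0A, hdenA, ?_⟩
  intro b hb hbr n
  by_contra hgap
  push_neg at hgap
  have hTL : (t : ℝ)^2 / (2^22 * α^4) ≤ (L : ℝ) := hTle
  have hblt : b (n + t) < b n + L := by
    have h1 : (b (n + t) : ℝ) < (b n : ℝ) + L := by linarith
    exact_mod_cast h1
  have hmono : ∀ i, n ≤ i → b n ≤ b i := fun i hi => hb.le_iff_le.mpr hi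
  have hG : (Finset.Icc n (n + t)).image b ⊆ (Finset.Ico (b n) (b n + L)).filter
      (fun m => ∃ a₁ ∈ A, ∃ a₂ ∈ A, m = a₁ * a₂) := by
    intro m hm
    obtain ⟨i, hi, rfl⟩ := Finset.mem_image.mp hm
    rw [Finset.mem_Icc] at hi
    rw [Finset.mem_filter, Finset.mem_Ico]
    refine ⟨⟨hmono i hi.1, ?_⟩, ?_⟩
    · have : b i ≤ b (n + t) := hb.le_iff_le.mpr hi.2
      omega
    · exact (hbr (b i)).mp ⟨i, rfl⟩
  have hcardG : ((Finset.Icc n (n + t)).image b).card = t + 1 := by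
    rw [Finset.card_image_of_injective _ hb.injective, Nat.card_Icc]
    omega
  have := Finset.card_le_card hG
  have := WL (b n)
  omega

end Main

section Assemble

lemma natcast_modeq_mod (M c : ℕ) : (c:ℤ) ≡ ((c % M : ℕ) : ℤ) [ZMOD (M:ℤ)] := by
  rw [Int.modEq_iff_dvd]
  refine ⟨-((c / M : ℕ) : ℤ), ?_⟩
  have h : (c:ℤ) = (M:ℤ) * ((c/M : ℕ):ℤ) + ((c % M : ℕ):ℤ) := by
    exact_mod_cast (Nat.div_add_mod c M).symm
  linarith

set_option maxHeartbeats 2000000 in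
theorem stmt4' (α : ℝ) (hα0 : 0 < α) (hα1 : α < 1) (t : ℕ) (ht : 2 ≤ t) :
    ∃ A : Set ℕ, 0 ∉ A ∧ α < upperBanachDensity A ∧
      ∀ b : ℕ → ℕ, StrictMono b →
        (∀ m, m ∈ Set.range b ↔ ∃ a ∈ A, ∃ a' ∈ A, m = a * a') →
        ∀ n : ℕ, (t : ℝ) ^ 2 / (2 ^ 22 * α ^ 4) ≤ (b (n + t) : ℝ) - b n := by
  classical
  set T : ℝ := (t : ℝ)^2 / (2^22 * α^4) with hT
  have hTpos : 0 < T := by positivity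
  by_cases hT2 : T ≤ 2
  · -- trivial construction
    refine ⟨{n : ℕ | 1 ≤ n}, by simp, ?_, ?_⟩
    · have hev : (fun K : ℕ => ⨆ x : ℕ,
          (Nat.card ({n : ℕ | 1 ≤ n} ∩ Set.Ioc x (x + K) : Set ℕ) : ℝ) / K)
          =ᶠ[Filter.atTop] (fun _ => (1:ℝ)) := by
        filter_upwards [Filter.eventually_ge_atTop 1] with K hK
        have hset : ∀ x : ℕ, {n : ℕ | 1 ≤ n} ∩ Set.Ioc x (x + K) = Set.Ioc x (x + K) := by
          intro x
          ext n
          simp only [Set.mem_inter_iff, Set.mem_setOf_eq, Set.mem_Ioc]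
          omega
        have hval : ∀ x : ℕ,
            (Nat.card ({n : ℕ | 1 ≤ n} ∩ Set.Ioc x (x + K) : Set ℕ) : ℝ) / K = 1 := by
          intro x
          rw [hset x]
          have : Nat.card (Set.Ioc x (x + K) : Set ℕ) = K := by
            rw [Nat.card_coe_set_eq, ← Finset.coe_Ioc, Set.ncard_coe_finset, Nat.card_Ioc]
            omega
          rw [this, div_self (by positivity : (K:ℝ) ≠ 0)]
        simp only [hval]
        exact ciSup_const
      rw [upperBanachDensity, Filter.limsup_congr hev, Filter.limsup_const]
      exact hα1
    · intro b hb _ n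
      have hstep : ∀ i : ℕ, b n + i ≤ b (n + i) := by
        intro i
        induction i with
        | zero => simp
        | succ i ih =>
          have h1 := hb (show n + i < n + i + 1 by omega)
          have h2 : b (n + (i+1)) = b (n + i + 1) := rfl
          omega
      have h1 : (b n : ℝ) + t ≤ (b (n + t) : ℝ) := by exact_mod_cast hstep t
      have h2 : (2 : ℝ) ≤ (t : ℝ) := by exact_mod_cast ht
      linarith
  · push_neg at hT2
    set L := ⌈T⌉₊ with hLdef
    have hLT : T ≤ (L : ℝ) := Nat.le_ceil T
    have hL1 : (L : ℝ) < T + 1 := Nat.ceil_lt_add_one (le_of_lt hTpos)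
    have hLpos : 0 < L := by
      rw [hLdef]
      exact Nat.ceil_pos.mpr hTpos
    have h4L : ((4 * L : ℕ) : ℝ) ≤ 6 * T := by
      push_cast
      linarith
    set X := Nat.sqrt (4 * L) with hXdef
    have hXsq : ((X : ℝ))^2 ≤ 6 * T := by
      have h1 : X * X ≤ 4 * L := by
        have := Nat.sqrt_le' (4 * L)
        rwa [pow_two] at this
      have h2 : ((X * X : ℕ) : ℝ) ≤ ((4 * L : ℕ) : ℝ) := by exact_mod_cast h1
      rw [pow_two]
      push_cast at h2 ⊢
      linarith
    by_cases hα : α ≤ 1/32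
    · -- Erdős–Turán construction
      have hαinv : (32:ℝ) ≤ α⁻¹ := by
        have h := inv_anti₀ hα0 hα
        simpa using h
      have hu0 : (0:ℝ) < α⁻¹ := by positivity
      set n₀ := ⌊α⁻¹/16⌋₊ with hn₀def
      have hn₀2 : 2 ≤ n₀ := Nat.le_floor (by push_cast; linarith)
      obtain ⟨p, hp, hpgt, hple⟩ := Nat.exists_prime_lt_and_le_two_mul n₀ (by omega)
      have hp3 : 3 ≤ p := by omega
      have hp2 : p ≠ 2 := by omega
      have hppos : 0 < p := by omega
      have hplow : α⁻¹/16 < (p:ℝ) := by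
        have h1 : α⁻¹/16 < (n₀:ℝ) + 1 := Nat.lt_floor_add_one _
        have h2 : (n₀:ℝ) + 1 ≤ p := by exact_mod_cast hpgt
        linarith
      have hphigh : (p:ℝ) ≤ α⁻¹/8 := by
        have h1 : (n₀:ℝ) ≤ α⁻¹/16 := Nat.floor_le (by positivity)
        have h2 : (p:ℝ) ≤ 2*(n₀:ℝ) := by exact_mod_cast hple
        linarith
      set M := 4*p*p with hMdef
      have hM : 0 < M := by positivity
      set R := etset p with hRdef
      have hcardR : R.card = p := etset_card p hppos
      have h2p4p : 2*p*p < 4*p*p := by nlinarith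
      have hRM : ∀ r ∈ R, r < M := by
        intro r hr
        have := etset_lt p hppos r hr
        omega
      have htR : (0:ℝ) < (t:ℝ) := by exact_mod_cast (by omega : 0 < t)
      have hMr : ((M:ℕ):ℝ) = 4*(p:ℝ)*p := by rw [hMdef]; push_cast; ring
      have hden : α < (R.card:ℝ)/(M:ℝ) := by
        rw [hcardR, hMr]
        rw [lt_div_iff₀ (by positivity)]
        have hpα : (p:ℝ)*α ≤ 1/8 := by
          have h1 := mul_le_mul_of_nonneg_right hphigh (le_of_lt hα0)
          have hinv : α⁻¹*α = 1 := inv_mul_cancel₀ (ne_of_gt hα0)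
          calc (p:ℝ)*α ≤ α⁻¹/8*α := h1
          _ = (α⁻¹*α)/8 := by ring
          _ = 1/8 := by rw [hinv]
        have hpR : (0:ℝ) < (p:ℝ) := by exact_mod_cast hppos
        nlinarith
      -- rigidity
      have hrig : ∀ u : ℕ, ∃ d : ℤ, ∀ s s' : ℕ, s % M ∈ R → s' % M ∈ R → s' ≤ s → s + s' = u →
          (((s:ℤ)-(s':ℤ)) ≡ d [ZMOD (M:ℤ)] ∨ ((s:ℤ)-(s':ℤ)) ≡ -d [ZMOD (M:ℤ)]) := by
        intro u
        by_cases hex : ∃ s s' : ℕ, s % M ∈ R ∧ s' % M ∈ R ∧ s' ≤ s ∧ s + s' = u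
        · obtain ⟨s₀, s₀', h₀, h₀', hle₀, hsum₀⟩ := hex
          refine ⟨((s₀ % M : ℕ):ℤ) - ((s₀' % M : ℕ):ℤ), ?_⟩
          intro s s' hsR hs'R hle hsum
          have hmodsum : ∀ a b : ℕ, a % M ∈ R → b % M ∈ R → a + b = u →
              a % M + b % M = u % M := by
            intro a b ha hb hab
            have h1 : a % M < 2*p*p := etset_lt p hppos _ ha
            have h2 : b % M < 2*p*p := etset_lt p hppos _ hb
            have h4 : 4*p*p = 2*p*p + 2*p*p := by ring
            have h3 : a % M + b % M < M := by omega
            calc a % M + b % M = (a % M + b % M) % M := (Nat.mod_eq_of_lt h3).symm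
            _ = (a + b) % M := (Nat.add_mod a b M).symm
            _ = u % M := by rw [hab]
          have hsum1 : s % M + s' % M = u % M := hmodsum s s' hsR hs'R hsum
          have hsum2 : s₀ % M + s₀' % M = u % M := hmodsum s₀ s₀' h₀ h₀' hsum₀
          have hsid := etset_sidon p hp hp2 (s % M) hsR (s' % M) hs'R (s₀ % M) h₀
            (s₀' % M) h₀' (by omega)
          have hmain : ((s:ℤ) - (s':ℤ)) ≡ ((s % M : ℕ):ℤ) - ((s' % M : ℕ):ℤ) [ZMOD (M:ℤ)] :=
            (natcast_modeq_mod M s).sub (natcast_modeq_mod M s')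
          rcases hsid with ⟨e1, e2⟩ | ⟨e1, e2⟩
          · left
            rw [e1, e2] at hmain
            exact hmain
          · right
            rw [e1, e2] at hmain
            refine hmain.trans ?_
            rw [show (((s₀' % M : ℕ):ℤ) - ((s₀ % M : ℕ):ℤ))
              = -(((s₀ % M : ℕ):ℤ) - ((s₀' % M : ℕ):ℤ)) by ring]
        · refine ⟨0, ?_⟩
          intro s s' h1 h2 h3 h4
          exact absurd ⟨s, s', h1, h2, h3, h4⟩ hex
      -- the counting key
      have hq4 : t ≤ 4*((t-2)/2 + 1) := by omega
      set q := (t-2)/2 + 1 with hqdef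
      have hqr : (t:ℝ)/4 ≤ (q:ℝ) := by
        have h1 : (t:ℝ) ≤ 4*(q:ℝ) := by exact_mod_cast hq4
        linarith
      have hXlt : X < M * q := by
        have hB : α⁻¹^2*(t:ℝ)/256 < (M:ℝ)*(q:ℝ) := by
          have h3 : α⁻¹^2/256 < (p:ℝ)*(p:ℝ) := by
            have h3' : (α⁻¹/16)*(α⁻¹/16) < (p:ℝ)*(p:ℝ) :=
              mul_self_lt_mul_self (by positivity) hplow
            calc α⁻¹^2/256 = (α⁻¹/16)*(α⁻¹/16) := by ring
            _ < (p:ℝ)*(p:ℝ) := h3'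
          calc α⁻¹^2*(t:ℝ)/256 = (α⁻¹^2/256)*(t:ℝ) := by ring
          _ < ((p:ℝ)*(p:ℝ))*(t:ℝ) := by exact mul_lt_mul_of_pos_right h3 htR
          _ ≤ (M:ℝ)*(q:ℝ) := by
              rw [hMr]
              have he : (p:ℝ)*(p:ℝ)*(t:ℝ) = 4*(p:ℝ)*p*((t:ℝ)/4) := by ring
              rw [he]
              exact mul_le_mul_of_nonneg_left hqr (by positivity)
        have hC : 6*T < (α⁻¹^2*(t:ℝ)/256)^2 := by
          have hpos : (0:ℝ) < (t:ℝ)^2*α⁻¹^4 := by positivity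
          have hTα : 6*T = (6/2^22)*((t:ℝ)^2*α⁻¹^4) := by
            rw [hT]
            field_simp
            try ring
          calc 6*T = (6/2^22)*((t:ℝ)^2*α⁻¹^4) := hTα
          _ < (1/2^16)*((t:ℝ)^2*α⁻¹^4) := by
              apply mul_lt_mul_of_pos_right _ hpos
              norm_num
          _ = (α⁻¹^2*(t:ℝ)/256)^2 := by ring
        have hsq2 : (X:ℝ)^2 < ((M:ℝ)*(q:ℝ))^2 := by
          have h5 : (α⁻¹^2*(t:ℝ)/256)^2 ≤ ((M:ℝ)*(q:ℝ))^2 := by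
            apply pow_le_pow_left₀ (by positivity) (le_of_lt hB)
          linarith [hXsq]
        have hfin : (X:ℝ) < (M:ℝ)*(q:ℝ) :=
          lt_of_pow_lt_pow_left₀ 2 (by positivity) hsq2
        exact_mod_cast hfin
      have hKEY : 2 * (X / M + 1) ≤ t := by
        have hdl : X / M < q := Nat.div_lt_of_lt_mul hXlt
        omega
      refine main_abstract α hα0 t L M R ht hM hLpos hLT hRM hden ?_
      intro u c₀
      exact window_count_double M hM R L u c₀ t (hrig u) hKEY
    · -- α > 1/32 : use M = 2, R = {0,1}
      push_neg at hα
      have hα4 : (1:ℝ)/2^20 < α^4 := by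
        have h := pow_lt_pow_left₀ hα (by norm_num : (0:ℝ) ≤ 1/32) (by norm_num : 4 ≠ 0)
        calc (1:ℝ)/2^20 = (1/32)^4 := by norm_num
        _ < α^4 := h
      have ht3 : 3 ≤ t := by
        by_contra h
        have ht2 : t = 2 := by omega
        have hTval : T = 4 / (2^22 * α^4) := by rw [hT, ht2]; norm_num
        have : T < 2 := by
          rw [hTval, div_lt_iff₀ (by positivity)]
          nlinarith [hα4]
        linarith
      have hKEY : X / 2 + 1 ≤ t := by
        have hXle : X ≤ 2*t - 2 := by
          by_contra h
          push_neg at h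
          have h1 : 2*t - 1 ≤ X := by omega
          have h2 : ((2*t - 1 : ℕ) : ℝ) ≤ (X:ℝ) := by exact_mod_cast h1
          have h3 : ((2*t - 1 : ℕ) : ℝ) = 2*(t:ℝ) - 1 := by
            push_cast [Nat.cast_sub (by omega : 1 ≤ 2*t)]
            ring
          rw [h3] at h2
          have h4 : (3:ℝ) ≤ (t:ℝ) := by exact_mod_cast ht3
          have hden2 : (4:ℝ) < 2^22*α^4 := by nlinarith [hα4]
          have hTlt : T < (t:ℝ)^2/4 := by
            rw [hT]
            exact div_lt_div_of_pos_left (by positivity) (by norm_num) hden2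
          have h7 : (2*(t:ℝ)-1)*(2*(t:ℝ)-1) ≤ (X:ℝ)*(X:ℝ) :=
            mul_le_mul h2 h2 (by linarith) (Nat.cast_nonneg X)
          have h8 : (X:ℝ)*(X:ℝ) ≤ 6*T := by
            have := hXsq
            rw [pow_two] at this
            exact this
          nlinarith [h7, h8, hTlt, h4]
        omega
      have hrig : ∀ u : ℕ, ∃ d : ℤ, ∀ s s' : ℕ,
          s % 2 ∈ ({0, 1} : Finset ℕ) → s' % 2 ∈ ({0, 1} : Finset ℕ) → s' ≤ s → s + s' = u →
          ((s : ℤ) - (s' : ℤ)) ≡ d [ZMOD ((2:ℕ) : ℤ)] := by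
        intro u
        refine ⟨(u : ℤ), ?_⟩
        intro s s' _ _ _ hsum
        rw [Int.ModEq]
        have : (s:ℤ) - s' = (u:ℤ) - 2*s' := by
          have h9 : ((s + s' : ℕ) : ℤ) = (u : ℤ) := by rw [hsum]
          push_cast at h9
          linarith
        rw [this]
        omega
      refine main_abstract α hα0 t L 2 {0, 1} ht (by norm_num) hLpos hLT ?_ ?_ ?_
      · intro r hr
        fin_cases hr <;> norm_num
      · norm_num
        exact hα1
      · intro u c₀
        exact window_count_single 2 (by norm_num) {0,1} L u c₀ t (hrig u) hKEY

end Assemble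


/-- For every `0 < α < 1` and `t ≥ 2` there is a set `A` with `d*(A) > α` such that
the increasing enumeration `b` of `B = A·A` satisfies
`b (n+t) - b n ≥ 2⁻²² t² α⁻⁴` for every `n`. -/
theorem stmt4 (α : ℝ) (hα0 : 0 < α) (hα1 : α < 1) (t : ℕ) (ht : 2 ≤ t) :
    ∃ A : Set ℕ, 0 ∉ A ∧ α < upperBanachDensity A ∧
      ∀ b : ℕ → ℕ, StrictMono b →
        (∀ m, m ∈ Set.range b ↔ ∃ a ∈ A, ∃ a' ∈ A, m = a * a') →
        ∀ n : ℕ, (t : ℝ) ^ 2 / (2 ^ 22 * α ^ 4) ≤ (b (n + t) : ℝ) - b n := by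
  exact stmt4' α hα0 hα1 t ht
end

section
/- Let p be an odd prime and let S = {2pi + (i² mod p) : i = 0, 1, ..., p-1}, where (x mod p) ∈ [0, p-1]. Then S is a Sidon set contained in [0, 2p²) with p elements, and |s - s'| ≥ p for any two distinct s, s' ∈ S. -/
private lemma gap5 (p i j : ℕ) (hp : 0 < p) (hi : i < p) (hj : j < p) (hij : i < j) :
    (p : ℤ) ≤ (2 * p * j + j ^ 2 % p : ℕ) - (2 * p * i + i ^ 2 % p : ℕ) := by
  have h1 : i ^ 2 % p < p := Nat.mod_lt _ hp
  have h2 : j ^ 2 % p < p := Nat.mod_lt _ hp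
  have h3 : i + 1 ≤ j := hij
  have hm : 2 * p * (i + 1) ≤ 2 * p * j := Nat.mul_le_mul (le_refl (2 * p)) h3
  have hnat : (2 * p * i + i ^ 2 % p) + p ≤ 2 * p * j + j ^ 2 % p := by
    have e : 2 * p * (i + 1) = 2 * p * i + 2 * p := by ring
    omega
  have := Int.ofNat_le.mpr hnat
  push_cast at this
  push_cast
  linarith

private lemma cast_inj5 (p a c : ℕ) [NeZero p] (ha : a < p) (hc : c < p)
    (h : (a : ZMod p) = (c : ZMod p)) : a = c := by
  have := congrArg ZMod.val h
  rwa [ZMod.val_natCast, ZMod.val_natCast, Nat.mod_eq_of_lt ha, Nat.mod_eq_of_lt hc] at this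


private lemma split5 (p a b c d ra rb rc rd : ℕ) (hra : ra < p) (hrb : rb < p)
    (hrc : rc < p) (hrd : rd < p)
    (hsum : 2 * p * a + ra + (2 * p * b + rb) = 2 * p * c + rc + (2 * p * d + rd)) :
    a + b = c + d ∧ ra + rb = rc + rd := by
  have hkey : a + b = c + d := by
    by_contra hne
    rcases Nat.lt_or_ge (a + b) (c + d) with hlt | hge
    · have hm : 2 * p * (a + b + 1) ≤ 2 * p * (c + d) :=
        Nat.mul_le_mul (le_refl (2 * p)) hlt
      linarith
    · have hlt : c + d < a + b := lt_of_le_of_ne hge (Ne.symm hne)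
      have hm : 2 * p * (c + d + 1) ≤ 2 * p * (a + b) :=
        Nat.mul_le_mul (le_refl (2 * p)) hlt
      linarith
  refine ⟨hkey, ?_⟩
  have e : 2 * p * a + 2 * p * b = 2 * p * c + 2 * p * d := by
    rw [← Nat.mul_add, ← Nat.mul_add, hkey]
  linarith

/-- The Erdős–Turán construction: for an odd prime `p`, the set
`S = {2pi + (i² mod p) : 0 ≤ i ≤ p-1}` is a Sidon set in `[0, 2p²)` with `p`
elements, and distinct elements of `S` differ by at least `p`. -/
theorem stmt5 (p : ℕ) (hp : p.Prime) (hodd : Odd p)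
    (S : Finset ℕ) (hS : S = (Finset.range p).image fun i => 2 * p * i + i ^ 2 % p) :
    (∀ s ∈ S, s < 2 * p ^ 2) ∧ S.card = p ∧
      (∀ s₁ ∈ S, ∀ s₂ ∈ S, ∀ s₃ ∈ S, ∀ s₄ ∈ S, s₁ + s₂ = s₃ + s₄ →
        (s₁ = s₃ ∧ s₂ = s₄) ∨ (s₁ = s₄ ∧ s₂ = s₃)) ∧
      ∀ s ∈ S, ∀ s' ∈ S, s ≠ s' → (p : ℤ) ≤ |(s : ℤ) - s'| := by
  haveI : Fact p.Prime := ⟨hp⟩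
  have hp0 : 0 < p := hp.pos
  -- injectivity on range p
  have hinj : ∀ i < p, ∀ j < p, (2 * p * i + i ^ 2 % p : ℕ) = 2 * p * j + j ^ 2 % p → i = j := by
    intro i hi j hj h
    by_contra hne
    rcases Nat.lt_or_ge i j with hlt | hge
    · have := gap5 p i j hp0 hi hj hlt
      rw [← h] at this
      simp only [sub_self] at this
      omega
    · have hlt : j < i := lt_of_le_of_ne hge (Ne.symm hne)
      have := gap5 p j i hp0 hj hi hlt
      rw [h] at this
      simp only [sub_self] at this
      omega
  subst hS
  refine ⟨?_, ?_, ?_, ?_⟩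
  · intro s hs
    simp only [Finset.mem_image, Finset.mem_range] at hs
    obtain ⟨i, hi, rfl⟩ := hs
    have h1 : i ^ 2 % p < p := Nat.mod_lt _ hp0
    have h3 : i + 1 ≤ p := hi
    nlinarith [Nat.mul_le_mul (le_refl (2 * p)) h3]
  · rw [Finset.card_image_of_injOn, Finset.card_range]
    intro i hi j hj h
    exact hinj i (Finset.mem_range.mp hi) j (Finset.mem_range.mp hj) h
  · intro s₁ hs₁ s₂ hs₂ s₃ hs₃ s₄ hs₄ hsum
    simp only [Finset.mem_image, Finset.mem_range] at hs₁ hs₂ hs₃ hs₄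
    obtain ⟨a, ha, rfl⟩ := hs₁
    obtain ⟨b, hb, rfl⟩ := hs₂
    obtain ⟨c, hc, rfl⟩ := hs₃
    obtain ⟨d, hd, rfl⟩ := hs₄
    have hra : a ^ 2 % p < p := Nat.mod_lt _ hp0
    have hrb : b ^ 2 % p < p := Nat.mod_lt _ hp0
    have hrc : c ^ 2 % p < p := Nat.mod_lt _ hp0
    have hrd : d ^ 2 % p < p := Nat.mod_lt _ hp0
    obtain ⟨hkey, hrem⟩ := split5 p a b c d _ _ _ _ hra hrb hrc hrd hsum
    -- move to ZMod p
    have hsumZ : (a : ZMod p) + b = c + d := by exact_mod_cast congrArg (Nat.cast : ℕ → ZMod p) hkey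
    have hsqZ : (a : ZMod p) ^ 2 + b ^ 2 = c ^ 2 + d ^ 2 := by
      have := congrArg (Nat.cast : ℕ → ZMod p) hrem
      push_cast [ZMod.natCast_mod] at this
      exact_mod_cast this
    have h2 : (2 : ZMod p) ≠ 0 := by
      have : ((2 : ℕ) : ZMod p) ≠ 0 := by
        rw [Ne, ZMod.natCast_eq_zero_iff]
        intro hdvd
        have hpe := (Nat.prime_dvd_prime_iff_eq hp Nat.prime_two).mp hdvd
        rcases hodd with ⟨k, hk⟩; omega
      simpa using this
    have hprod : (a : ZMod p) * b = c * d := by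
      have h2ab : (2 : ZMod p) * ((a : ZMod p) * b) = 2 * ((c : ZMod p) * d) := by
        linear_combination ((a : ZMod p) + b + c + d) * hsumZ - hsqZ
      exact mul_left_cancel₀ h2 h2ab
    have hzero : ((a : ZMod p) - c) * ((a : ZMod p) - d) = 0 := by
      linear_combination (a : ZMod p) * hsumZ - hprod
    rcases mul_eq_zero.mp hzero with h | h
    · have hac : a = c := cast_inj5 p a c ha hc (sub_eq_zero.mp h)
      have hbd : b = d := by omega
      subst hac; subst hbd; exact Or.inl ⟨rfl, rfl⟩
    · have had : a = d := cast_inj5 p a d ha hd (sub_eq_zero.mp h)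
      have hbc : b = c := by omega
      subst had; subst hbc; exact Or.inr ⟨rfl, rfl⟩
  · intro s hs s' hs' hne
    simp only [Finset.mem_image, Finset.mem_range] at hs hs'
    obtain ⟨i, hi, rfl⟩ := hs
    obtain ⟨j, hj, rfl⟩ := hs'
    have hij : i ≠ j := fun h => hne (by rw [h])
    rcases Nat.lt_or_ge i j with hlt | hge
    · have := gap5 p i j hp0 hi hj hlt
      rw [abs_sub_comm]
      exact le_trans this (le_abs_self _)
    · have hlt : j < i := lt_of_le_of_ne hge (Ne.symm hij)
      have := gap5 p j i hp0 hj hi hlt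
      exact le_trans this (le_abs_self _)
end

section
/- Let a, a', a'', a''' be integers with 0 < a' < a, 0 < a''' < a'', all lying in an interval of length L², such that a - a' = a'' - a''' and a·a''' ≠ a'·a''. Then 0 < |a·a''' - a'·a''| ≤ (L-1)(L²-1). -/
/-- If `0 < a' < a`, `0 < a''' < a''` all lie in an interval of `L²` consecutive
integers, `a - a' = a'' - a''' < L` and `a·a''' ≠ a'·a''`, then
`0 < |a·a''' - a'·a''| ≤ (L-1)(L²-1)`. -/
theorem stmt9 (L : ℕ) (hL : 0 < L) (a a' a'' a''' : ℤ)
    (h1 : 0 < a') (h2 : a' < a) (h3 : 0 < a''') (h4 : a''' < a'')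
    (hI : ∃ u : ℤ, a ∈ Set.Icc u (u + L ^ 2 - 1) ∧ a' ∈ Set.Icc u (u + L ^ 2 - 1) ∧
      a'' ∈ Set.Icc u (u + L ^ 2 - 1) ∧ a''' ∈ Set.Icc u (u + L ^ 2 - 1))
    (hdiff : a - a' = a'' - a''') (hlt : a - a' < L)
    (hne : a * a''' ≠ a' * a'') :
    0 < |a * a''' - a' * a''| ∧ |a * a''' - a' * a''| ≤ ((L : ℤ) - 1) * ((L : ℤ) ^ 2 - 1) := by
  obtain ⟨u, ⟨_, _⟩, ⟨ha'l, ha'u⟩, _, ⟨ha3l, ha3u⟩⟩ := hI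
  have key : a * a''' - a' * a'' = (a - a') * (a''' - a') := by linear_combination a' * hdiff
  constructor
  · exact abs_pos.mpr (sub_ne_zero.mpr hne)
  · rw [key, abs_mul]
    have hd1 : |a - a'| ≤ (L : ℤ) - 1 := by
      rw [abs_of_pos (by omega)]; omega
    have hd2 : |a''' - a'| ≤ (L : ℤ) ^ 2 - 1 := by
      rw [abs_sub_le_iff]; omega
    have := abs_nonneg (a''' - a')
    have := abs_nonneg (a - a')
    nlinarith
end

section
/- Define a sequence of integers x_n by an arbitrary positive integer x_1 and, for n ≥ 2, x_n = x_1 + M_n² + M_n(x_{n-1} + M_{n-1}) + (x_{n-1} + M_{n-1})², where M_n is the largest element of a given finite set A_n of non-negative integers. Let A = ⋃_{n≥1} (x_n + A_n). Then every nonzero difference d = c_1·c_2 - c_3·c_4 with c_1, c_2, c_3, c_4 ∈ A, not all four lying in the same block x_n + A_n, satisfies |d| ≥ x_1. -/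
set_option maxHeartbeats 1000000

/-- The main quadratic inequality: `X² ≥ (X + Mn)·B + x1` when
`X = x1 + Mn² + Mn·B + B²`. -/
private lemma sq_key (x1 Mn B X : ℤ) (hX : X = x1 + Mn ^ 2 + Mn * B + B ^ 2)
    (hB : 1 ≤ B) (hM : 0 ≤ Mn) (h1 : 1 ≤ x1) : (X + Mn) * B + x1 ≤ X * X := by
  have p1 : 0 ≤ Mn * (B - 1) := mul_nonneg hM (by linarith)
  have p2 : 0 ≤ B * (B - 1) := mul_nonneg (by linarith) (by linarith)
  have p3 : 0 ≤ Mn ^ 2 := sq_nonneg _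
  have hxge : B + Mn + 1 ≤ X := by nlinarith
  have hX0 : 0 ≤ X := by linarith
  have hXB : B ≤ X := by linarith
  have hXx1 : x1 ≤ X := by nlinarith
  have e1 : X * (B + Mn + 1) ≤ X * X := mul_le_mul_of_nonneg_left hxge hX0
  have e2 : B * Mn ≤ X * Mn := mul_le_mul_of_nonneg_right hXB hM
  nlinarith

/-- The linear inequality: `X ≥ B·B + x1`. -/
private lemma lin_key (x1 Mn B X : ℤ) (hX : X = x1 + Mn ^ 2 + Mn * B + B ^ 2)
    (hB : 0 ≤ B) (hM : 0 ≤ Mn) : B * B + x1 ≤ X := by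
  nlinarith [sq_nonneg Mn, mul_nonneg hM hB]

/-- Auxiliary: the case where the first and third elements are in the maximal block `n₁`,
while the fourth is in a strictly smaller block. -/
private lemma key_one (x M : ℕ → ℕ) (hx1 : 0 < x 1)
    (L1 : ∀ m, 1 ≤ m → x 1 ≤ x m)
    (L3 : ∀ m k, 1 ≤ m → m ≤ k → x m + M m ≤ x k + M k)
    (hx : ∀ n, 2 ≤ n →
      x n = x 1 + (M n) ^ 2 + M n * (x (n - 1) + M (n - 1)) + (x (n - 1) + M (n - 1)) ^ 2)
    (n₁ n₂ n₄ a₁ a₂ a₃ a₄ : ℕ)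
    (hn₂ : 1 ≤ n₂) (hn₄ : 1 ≤ n₄)
    (ha₁ : a₁ ≤ M n₁) (ha₂ : a₂ ≤ M n₂) (ha₃ : a₃ ≤ M n₁) (ha₄ : a₄ ≤ M n₄)
    (hm₂ : n₂ ≤ n₁) (hm₄ : n₄ < n₁)
    (hne : (x n₁ + a₁) * (x n₂ + a₂) ≠ (x n₁ + a₃) * (x n₄ + a₄)) :
    (x 1 : ℤ) ≤ |((x n₁ : ℤ) + a₁) * ((x n₂ : ℤ) + a₂) - ((x n₁ : ℤ) + a₃) * ((x n₄ : ℤ) + a₄)| := by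
  have hN2 : 2 ≤ n₁ := by omega
  set B : ℕ := x (n₁ - 1) + M (n₁ - 1) with hB
  have hxN : x n₁ = x 1 + (M n₁) ^ 2 + M n₁ * B + B ^ 2 := hx n₁ hN2
  have hxNZ : (x n₁ : ℤ) = (x 1 : ℤ) + (M n₁ : ℤ) ^ 2 + (M n₁ : ℤ) * B + (B : ℤ) ^ 2 := by
    exact_mod_cast hxN
  have hB1 : 1 ≤ B := by
    have := L1 (n₁ - 1) (by omega); omega
  have hB1' : (1 : ℤ) ≤ (B : ℤ) := by exact_mod_cast hB1
  have hc₄ : x n₄ + a₄ ≤ B := by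
    have := L3 n₄ (n₁ - 1) hn₄ (by omega); omega
  have hxn₂ : x 1 ≤ x n₂ := L1 n₂ hn₂
  have hM0 : (0 : ℤ) ≤ (M n₁ : ℤ) := Int.ofNat_nonneg _
  have hx10 : (1 : ℤ) ≤ (x 1 : ℤ) := by exact_mod_cast hx1
  have hX0 : (0 : ℤ) ≤ (x n₁ : ℤ) := Int.ofNat_nonneg _
  have ha₁' : (a₁ : ℤ) ≤ (M n₁ : ℤ) := by exact_mod_cast ha₁
  have ha₃' : (a₃ : ℤ) ≤ (M n₁ : ℤ) := by exact_mod_cast ha₃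
  have ha₁0 : (0 : ℤ) ≤ (a₁ : ℤ) := Int.ofNat_nonneg _
  have ha₂0 : (0 : ℤ) ≤ (a₂ : ℤ) := Int.ofNat_nonneg _
  have ha₃0 : (0 : ℤ) ≤ (a₃ : ℤ) := Int.ofNat_nonneg _
  have ha₄0 : (0 : ℤ) ≤ (a₄ : ℤ) := Int.ofNat_nonneg _
  rw [le_abs]
  rcases eq_or_lt_of_le hm₂ with h2 | h2
  · -- n₂ = n₁ : c₁c₂ ≥ x N², c₃c₄ ≤ (x N + M N) * B
    left
    have hkey := sq_key (x 1 : ℤ) (M n₁ : ℤ) (B : ℤ) (x n₁ : ℤ) hxNZ hB1' hM0 hx10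
    have hbig : (x n₁ : ℤ) * (x n₁ : ℤ) ≤ ((x n₁ : ℤ) + a₁) * ((x n₂ : ℤ) + a₂) := by
      rw [h2]
      exact mul_le_mul (by linarith) (by linarith) hX0 (by linarith)
    have hsmall : ((x n₁ : ℤ) + a₃) * ((x n₄ : ℤ) + a₄) ≤ ((x n₁ : ℤ) + M n₁) * B := by
      have h4' : ((x n₄ : ℤ) + a₄) ≤ (B : ℤ) := by exact_mod_cast hc₄
      exact mul_le_mul (by linarith) h4' (by positivity) (by linarith)
    linarith
  · -- n₂ < n₁ : c₂ ≤ B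
    have hc₂ : x n₂ + a₂ ≤ B := by
      have := L3 n₂ (n₁ - 1) hn₂ (by omega); omega
    set u : ℤ := ((x n₂ : ℤ) + a₂) with hu
    set v : ℤ := ((x n₄ : ℤ) + a₄) with hv
    have hu1 : (x 1 : ℤ) ≤ u := by
      have : (x 1 : ℤ) ≤ (x n₂ : ℤ) := by exact_mod_cast hxn₂
      simp only [hu]; linarith
    have hv1 : (1 : ℤ) ≤ v := by
      have h0 : (x 1 : ℤ) ≤ (x n₄ : ℤ) := by exact_mod_cast L1 n₄ hn₄
      simp only [hv]; linarith
    have huB : u ≤ (B : ℤ) := by simp only [hu]; exact_mod_cast hc₂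
    have hvB : v ≤ (B : ℤ) := by simp only [hv]; exact_mod_cast hc₄
    have hXlb : (x 1 : ℤ) + (M n₁ : ℤ) * B ≤ (x n₁ : ℤ) := by
      nlinarith [sq_nonneg (M n₁ : ℤ), sq_nonneg (B : ℤ)]
    have hgoal : ((x n₁ : ℤ) + a₁) * u - ((x n₁ : ℤ) + a₃) * v
        = (x n₁ : ℤ) * (u - v) + (a₁ : ℤ) * u - (a₃ : ℤ) * v := by ring
    rcases lt_trichotomy u v with h | h | h
    · right
      rw [hgoal]
      have huv : (1 : ℤ) ≤ v - u := by linarith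
      have q1 : (a₁ : ℤ) * u ≤ (M n₁ : ℤ) * B := mul_le_mul ha₁' huB (by linarith) hM0
      have q2 : (x n₁ : ℤ) * 1 ≤ (x n₁ : ℤ) * (v - u) := mul_le_mul_of_nonneg_left huv hX0
      have q3 : (0 : ℤ) ≤ (a₃ : ℤ) * v := mul_nonneg ha₃0 (by linarith)
      nlinarith
    · -- u = v : difference is (a₁ - a₃) * u
      have hane : a₁ ≠ a₃ := by
        intro hEq
        apply hne
        have h' := h
        rw [hu, hv] at h'
        have huv : x n₂ + a₂ = x n₄ + a₄ := by exact_mod_cast h'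
        rw [hEq, huv]
      rcases lt_or_gt_of_ne hane with ha | ha
      · right
        rw [hgoal, ← h]
        have hlt : (a₁ : ℤ) + 1 ≤ (a₃ : ℤ) := by exact_mod_cast ha
        have q : (1 : ℤ) * u ≤ ((a₃ : ℤ) - a₁) * u := by
          apply mul_le_mul_of_nonneg_right (by linarith) (by linarith)
        nlinarith
      · left
        rw [hgoal, ← h]
        have hlt : (a₃ : ℤ) + 1 ≤ (a₁ : ℤ) := by exact_mod_cast ha
        have q : (1 : ℤ) * u ≤ ((a₁ : ℤ) - a₃) * u := by
          apply mul_le_mul_of_nonneg_right (by linarith) (by linarith)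
        nlinarith
    · left
      rw [hgoal]
      have huv : (1 : ℤ) ≤ u - v := by linarith
      have q1 : (a₃ : ℤ) * v ≤ (M n₁ : ℤ) * B := mul_le_mul ha₃' hvB (by linarith) hM0
      have q2 : (x n₁ : ℤ) * 1 ≤ (x n₁ : ℤ) * (u - v) := mul_le_mul_of_nonneg_left huv hX0
      have q3 : (0 : ℤ) ≤ (a₁ : ℤ) * u := mul_nonneg ha₁0 (by linarith)
      nlinarith

private lemma key_aux (x M : ℕ → ℕ) (hx1 : 0 < x 1)
    (L1 : ∀ m, 1 ≤ m → x 1 ≤ x m)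
    (L3 : ∀ m k, 1 ≤ m → m ≤ k → x m + M m ≤ x k + M k)
    (hx : ∀ n, 2 ≤ n →
      x n = x 1 + (M n) ^ 2 + M n * (x (n - 1) + M (n - 1)) + (x (n - 1) + M (n - 1)) ^ 2)
    (n₁ n₂ n₃ n₄ a₁ a₂ a₃ a₄ : ℕ)
    (hn₂ : 1 ≤ n₂) (hn₃ : 1 ≤ n₃) (hn₄ : 1 ≤ n₄)
    (ha₁ : a₁ ≤ M n₁) (ha₂ : a₂ ≤ M n₂) (ha₃ : a₃ ≤ M n₃) (ha₄ : a₄ ≤ M n₄)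
    (hm₂ : n₂ ≤ n₁) (hm₃ : n₃ ≤ n₁) (hm₄ : n₄ ≤ n₁)
    (hall : ¬(n₂ = n₁ ∧ n₃ = n₁ ∧ n₄ = n₁))
    (hne : (x n₁ + a₁) * (x n₂ + a₂) ≠ (x n₃ + a₃) * (x n₄ + a₄)) :
    (x 1 : ℤ) ≤ |((x n₁ : ℤ) + a₁) * ((x n₂ : ℤ) + a₂) - ((x n₃ : ℤ) + a₃) * ((x n₄ : ℤ) + a₄)| := by
  rcases eq_or_lt_of_le hm₃ with h3 | h3
  · rcases eq_or_lt_of_le hm₄ with h4 | h4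
    · -- n₃ = n₁, n₄ = n₁, so n₂ < n₁
      have h2 : n₂ < n₁ := by
        rcases lt_or_eq_of_le hm₂ with h | h
        · exact h
        · exact absurd ⟨h, h3, h4⟩ hall
      rw [h3] at ha₃ ⊢
      rw [h4] at ha₄ ⊢
      have hN2 : 2 ≤ n₁ := by omega
      set B : ℕ := x (n₁ - 1) + M (n₁ - 1) with hB
      have hxN : x n₁ = x 1 + (M n₁) ^ 2 + M n₁ * B + B ^ 2 := hx n₁ hN2
      have hxNZ : (x n₁ : ℤ) = (x 1 : ℤ) + (M n₁ : ℤ) ^ 2 + (M n₁ : ℤ) * B + (B : ℤ) ^ 2 := by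
        exact_mod_cast hxN
      have hB1 : 1 ≤ B := by have := L1 (n₁ - 1) (by omega); omega
      have hB1' : (1 : ℤ) ≤ (B : ℤ) := by exact_mod_cast hB1
      have hc₂ : x n₂ + a₂ ≤ B := by
        have := L3 n₂ (n₁ - 1) hn₂ (by omega); omega
      have hM0 : (0 : ℤ) ≤ (M n₁ : ℤ) := Int.ofNat_nonneg _
      have hx10 : (1 : ℤ) ≤ (x 1 : ℤ) := by exact_mod_cast hx1
      have hX0 : (0 : ℤ) ≤ (x n₁ : ℤ) := Int.ofNat_nonneg _
      have ha₁0 : (0 : ℤ) ≤ (a₁ : ℤ) := Int.ofNat_nonneg _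
      have ha₃0 : (0 : ℤ) ≤ (a₃ : ℤ) := Int.ofNat_nonneg _
      have ha₄0 : (0 : ℤ) ≤ (a₄ : ℤ) := Int.ofNat_nonneg _
      have ha₁' : (a₁ : ℤ) ≤ (M n₁ : ℤ) := by exact_mod_cast ha₁
      rw [le_abs]
      right
      have hkey := sq_key (x 1 : ℤ) (M n₁ : ℤ) (B : ℤ) (x n₁ : ℤ) hxNZ hB1' hM0 hx10
      have hbig : (x n₁ : ℤ) * (x n₁ : ℤ) ≤ ((x n₁ : ℤ) + a₃) * ((x n₁ : ℤ) + a₄) :=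
        mul_le_mul (by linarith) (by linarith) hX0 (by linarith)
      have hsmall : ((x n₁ : ℤ) + a₁) * ((x n₂ : ℤ) + a₂) ≤ ((x n₁ : ℤ) + M n₁) * B := by
        have h4' : ((x n₂ : ℤ) + a₂) ≤ (B : ℤ) := by exact_mod_cast hc₂
        exact mul_le_mul (by linarith) h4' (by positivity) (by linarith)
      linarith
    · -- n₃ = n₁, n₄ < n₁
      rw [h3] at ha₃ hne ⊢
      exact key_one x M hx1 L1 L3 hx n₁ n₂ n₄ a₁ a₂ a₃ a₄ hn₂ hn₄ ha₁ ha₂ ha₃ ha₄ hm₂ h4 hne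
  · rcases eq_or_lt_of_le hm₄ with h4 | h4
    · -- n₄ = n₁, n₃ < n₁ : swap roles of (n₃,a₃) and (n₄,a₄)
      rw [h4] at ha₄ hne ⊢
      have hne' : (x n₁ + a₁) * (x n₂ + a₂) ≠ (x n₁ + a₄) * (x n₃ + a₃) := by
        rw [mul_comm (x n₁ + a₄) (x n₃ + a₃)]; exact hne
      have hres := key_one x M hx1 L1 L3 hx n₁ n₂ n₃ a₁ a₂ a₄ a₃ hn₂ hn₃ ha₁ ha₂ ha₄ ha₃ hm₂ h3 hne'
      rw [mul_comm ((x n₁ : ℤ) + (a₄ : ℤ)) ((x n₃ : ℤ) + (a₃ : ℤ))] at hres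
      exact hres
    · -- n₃ < n₁ and n₄ < n₁ : easy case
      have hN2 : 2 ≤ n₁ := by omega
      set B : ℕ := x (n₁ - 1) + M (n₁ - 1) with hB
      have hxN : x n₁ = x 1 + (M n₁) ^ 2 + M n₁ * B + B ^ 2 := hx n₁ hN2
      have hxNZ : (x n₁ : ℤ) = (x 1 : ℤ) + (M n₁ : ℤ) ^ 2 + (M n₁ : ℤ) * B + (B : ℤ) ^ 2 := by
        exact_mod_cast hxN
      have hc₃ : x n₃ + a₃ ≤ B := by
        have := L3 n₃ (n₁ - 1) hn₃ (by omega); omega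
      have hc₄ : x n₄ + a₄ ≤ B := by
        have := L3 n₄ (n₁ - 1) hn₄ (by omega); omega
      have hB0 : (0 : ℤ) ≤ (B : ℤ) := Int.ofNat_nonneg _
      have hM0 : (0 : ℤ) ≤ (M n₁ : ℤ) := Int.ofNat_nonneg _
      have hX0 : (0 : ℤ) ≤ (x n₁ : ℤ) := Int.ofNat_nonneg _
      have ha₁0 : (0 : ℤ) ≤ (a₁ : ℤ) := Int.ofNat_nonneg _
      rw [le_abs]
      left
      have hc₂1 : 1 ≤ x n₂ + a₂ := by have := L1 n₂ hn₂; omega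
      have hc₂1' : (1 : ℤ) ≤ (x n₂ : ℤ) + a₂ := by exact_mod_cast hc₂1
      have h1 : (x n₁ : ℤ) * 1 ≤ ((x n₁ : ℤ) + a₁) * ((x n₂ : ℤ) + a₂) :=
        mul_le_mul (by linarith) hc₂1' (by linarith) (by linarith)
      have h2 : ((x n₃ : ℤ) + a₃) * ((x n₄ : ℤ) + a₄) ≤ (B : ℤ) * B := by
        have h3' : ((x n₃ : ℤ) + a₃) ≤ (B : ℤ) := by exact_mod_cast hc₃
        have h4' : ((x n₄ : ℤ) + a₄) ≤ (B : ℤ) := by exact_mod_cast hc₄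
        exact mul_le_mul h3' h4' (by positivity) hB0
      have hkey := lin_key (x 1 : ℤ) (M n₁ : ℤ) (B : ℤ) (x n₁ : ℤ) hxNZ hB0 hM0
      linarith

/-- Block construction: with `x n = x 1 + M n ² + M n (x (n-1) + M (n-1)) + (x (n-1) + M (n-1))²`
for `n ≥ 2`, where `M n = max (A n)`, and `𝒜 = ⋃_{n ≥ 1} (x n + A n)`, every nonzero
difference `c₁c₂ - c₃c₄` of products of elements of `𝒜` not all lying in the same
block `x n + A n` has absolute value at least `x 1`. -/
theorem stmt13 (A : ℕ → Finset ℕ) (hA : ∀ n, (A n).Nonempty)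
    (M : ℕ → ℕ) (hM : ∀ n, M n = (A n).max' (hA n))
    (x : ℕ → ℕ) (hx1 : 0 < x 1)
    (hx : ∀ n, 2 ≤ n →
      x n = x 1 + (M n) ^ 2 + M n * (x (n - 1) + M (n - 1)) + (x (n - 1) + M (n - 1)) ^ 2)
    (𝒜 : Set ℕ) (h𝒜 : 𝒜 = {c | ∃ n, 1 ≤ n ∧ ∃ a ∈ A n, c = x n + a})
    (c₁ c₂ c₃ c₄ : ℕ) (h₁ : c₁ ∈ 𝒜) (h₂ : c₂ ∈ 𝒜) (h₃ : c₃ ∈ 𝒜) (h₄ : c₄ ∈ 𝒜)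
    (hnot : ¬ ∃ n, 1 ≤ n ∧ (∃ a ∈ A n, c₁ = x n + a) ∧ (∃ a ∈ A n, c₂ = x n + a) ∧
      (∃ a ∈ A n, c₃ = x n + a) ∧ (∃ a ∈ A n, c₄ = x n + a))
    (hne : c₁ * c₂ ≠ c₃ * c₄) :
    (x 1 : ℤ) ≤ |(c₁ * c₂ : ℤ) - (c₃ * c₄ : ℤ)| := by
  subst h𝒜
  obtain ⟨n₁, hn₁, a₁, haA₁, hc₁⟩ := h₁
  obtain ⟨n₂, hn₂, a₂, haA₂, hc₂⟩ := h₂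
  obtain ⟨n₃, hn₃, a₃, haA₃, hc₃⟩ := h₃
  obtain ⟨n₄, hn₄, a₄, haA₄, hc₄⟩ := h₄
  have ha₁ : a₁ ≤ M n₁ := by rw [hM]; exact Finset.le_max' _ _ haA₁
  have ha₂ : a₂ ≤ M n₂ := by rw [hM]; exact Finset.le_max' _ _ haA₂
  have ha₃ : a₃ ≤ M n₃ := by rw [hM]; exact Finset.le_max' _ _ haA₃
  have ha₄ : a₄ ≤ M n₄ := by rw [hM]; exact Finset.le_max' _ _ haA₄
  have L1 : ∀ m, 1 ≤ m → x 1 ≤ x m := by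
    intro m hm
    rcases eq_or_lt_of_le hm with h | h
    · rw [← h]
    · rw [hx m (by omega)]
      exact le_trans (le_trans (Nat.le_add_right _ _) (Nat.le_add_right _ _))
        (Nat.le_add_right _ _)
  have L2 : ∀ m, 1 ≤ m → x m + M m ≤ x (m + 1) := by
    intro m hm
    have h := hx (m + 1) (by omega)
    simp only [Nat.add_sub_cancel] at h
    have h1 : 1 ≤ x m := le_trans hx1 (L1 m hm)
    nlinarith [sq_nonneg (x m + M m)]
  have L3 : ∀ m k, 1 ≤ m → m ≤ k → x m + M m ≤ x k + M k := by
    intro m k hm hmk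
    induction k, hmk using Nat.le_induction with
    | base => exact le_rfl
    | succ k hk ih =>
      have := L2 k (by omega)
      omega
  subst hc₁; subst hc₂; subst hc₃; subst hc₄
  have hALL : ¬(n₁ = n₂ ∧ n₂ = n₃ ∧ n₃ = n₄) := by
    rintro ⟨e1, e2, e3⟩
    refine hnot ⟨n₁, hn₁, ⟨a₁, haA₁, rfl⟩, ⟨a₂, ?_, by rw [e1]⟩, ⟨a₃, ?_, ?_⟩, ⟨a₄, ?_, ?_⟩⟩
    · rw [e1]; exact haA₂
    · rw [e1, e2]; exact haA₃
    · rw [e1, e2]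
    · rw [e1, e2, e3]; exact haA₄
    · rw [e1, e2, e3]
  have hcast : ∀ m a : ℕ, ((x m + a : ℕ) : ℤ) = (x m : ℤ) + (a : ℤ) := by
    intro m a; push_cast; ring
  set N := max (max n₁ n₂) (max n₃ n₄) with hN
  have hcases : N = n₁ ∨ N = n₂ ∨ N = n₃ ∨ N = n₄ := by omega
  push_cast
  rcases hcases with h | h | h | h
  · exact key_aux x M hx1 L1 L3 hx n₁ n₂ n₃ n₄ a₁ a₂ a₃ a₄ hn₂ hn₃ hn₄
      ha₁ ha₂ ha₃ ha₄ (by omega) (by omega) (by omega)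
      (by rintro ⟨u, v, w⟩; exact hALL ⟨by omega, by omega, by omega⟩) hne
  · have hres := key_aux x M hx1 L1 L3 hx n₂ n₁ n₃ n₄ a₂ a₁ a₃ a₄ hn₁ hn₃ hn₄
      ha₂ ha₁ ha₃ ha₄ (by omega) (by omega) (by omega)
      (by rintro ⟨u, v, w⟩; exact hALL ⟨by omega, by omega, by omega⟩)
      (by rw [mul_comm]; exact hne)
    rw [mul_comm ((x n₂ : ℤ) + (a₂ : ℤ)) ((x n₁ : ℤ) + (a₁ : ℤ))] at hres
    exact hres
  · have hres := key_aux x M hx1 L1 L3 hx n₃ n₄ n₁ n₂ a₃ a₄ a₁ a₂ hn₄ hn₁ hn₂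
      ha₃ ha₄ ha₁ ha₂ (by omega) (by omega) (by omega)
      (by rintro ⟨u, v, w⟩; exact hALL ⟨by omega, by omega, by omega⟩)
      (fun e => hne e.symm)
    rw [abs_sub_comm] at hres
    exact hres
  · have hres := key_aux x M hx1 L1 L3 hx n₄ n₃ n₁ n₂ a₄ a₃ a₁ a₂ hn₃ hn₁ hn₂
      ha₄ ha₃ ha₁ ha₂ (by omega) (by omega) (by omega)
      (by rintro ⟨u, v, w⟩; exact hALL ⟨by omega, by omega, by omega⟩)
      (by rw [mul_comm]; exact fun e => hne e.symm)
    rw [mul_comm ((x n₄ : ℤ) + (a₄ : ℤ)) ((x n₃ : ℤ) + (a₃ : ℤ)), abs_sub_comm] at hres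
    exact hres
end

section
/- Let p be an odd prime, m = 2p², and S = {2pi + (i² mod p) : 0 ≤ i ≤ p-1}. Let A_n = ⋃_{k=1}^{n} (2km + S). If a_1, a_2, a_3, a_4 ∈ A_n satisfy a_1 + a_2 = a_3 + a_4 and a_1·a_2 ≠ a_3·a_4, then |a_1·a_2 - a_3·a_4| ≥ 4p³. -/
lemma sidon_aux (p : ℕ) (hp : p.Prime) (hodd : Odd p) {i j i' j' : ℕ}
    (hi : i < p) (hj : j < p) (hi' : i' < p) (hj' : j' < p)
    (h : 2*p*i + i^2 % p + (2*p*j + j^2 % p) = 2*p*i' + i'^2 % p + (2*p*j' + j'^2 % p)) :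
    (i = i' ∧ j = j') ∨ (i = j' ∧ j = i') := by
  have hp0 : 0 < p := hp.pos
  have r1 : i^2 % p < p := Nat.mod_lt _ hp0
  have r2 : j^2 % p < p := Nat.mod_lt _ hp0
  have r3 : i'^2 % p < p := Nat.mod_lt _ hp0
  have r4 : j'^2 % p < p := Nat.mod_lt _ hp0
  have hsum : i + j = i' + j' := by
    rcases Nat.lt_trichotomy (i+j) (i'+j') with hlt | he | hgt
    · exfalso
      have hm : 2*p*(i+j+1) ≤ 2*p*(i'+j') := Nat.mul_le_mul_left _ hlt
      zify at h hm r1 r2 r3 r4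
      nlinarith [hm, Int.emod_nonneg ((i:ℤ)^2) (by exact_mod_cast hp0.ne' : (p:ℤ) ≠ 0), Int.emod_nonneg ((j:ℤ)^2) (by exact_mod_cast hp0.ne' : (p:ℤ) ≠ 0), Int.emod_nonneg ((i':ℤ)^2) (by exact_mod_cast hp0.ne' : (p:ℤ) ≠ 0), Int.emod_nonneg ((j':ℤ)^2) (by exact_mod_cast hp0.ne' : (p:ℤ) ≠ 0)]
    · exact he
    · exfalso
      have hm : 2*p*(i'+j'+1) ≤ 2*p*(i+j) := Nat.mul_le_mul_left _ hgt
      zify at h hm r1 r2 r3 r4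
      nlinarith [hm, Int.emod_nonneg ((i:ℤ)^2) (by exact_mod_cast hp0.ne' : (p:ℤ) ≠ 0), Int.emod_nonneg ((j:ℤ)^2) (by exact_mod_cast hp0.ne' : (p:ℤ) ≠ 0), Int.emod_nonneg ((i':ℤ)^2) (by exact_mod_cast hp0.ne' : (p:ℤ) ≠ 0), Int.emod_nonneg ((j':ℤ)^2) (by exact_mod_cast hp0.ne' : (p:ℤ) ≠ 0)]
  have h2' : 2*p*i + 2*p*j = 2*p*i' + 2*p*j' := by
    have : 2*p*(i+j) = 2*p*(i'+j') := by rw [hsum]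
    nlinarith [this]
  have hrsum : i^2 % p + j^2 % p = i'^2 % p + j'^2 % p := by linarith
  haveI := Fact.mk hp
  have c1 : (i : ZMod p) + j = (i' : ZMod p) + j' := by
    have := congrArg (Nat.cast : ℕ → ZMod p) hsum
    push_cast at this; exact this
  have c2 : (i : ZMod p)^2 + (j : ZMod p)^2 = (i' : ZMod p)^2 + (j' : ZMod p)^2 := by
    have := congrArg (Nat.cast : ℕ → ZMod p) hrsum
    push_cast [ZMod.natCast_mod] at this; exact this
  have key : (((i:ZMod p) - j) - ((i':ZMod p) - j')) * (((i:ZMod p) - j) + ((i':ZMod p) - j')) = 0 := by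
    linear_combination 2*c2 - ((i:ZMod p)+j+i'+j')*c1
  have two_ne : (2 : ZMod p) ≠ 0 := by
    have hp2 : p ≠ 2 := by rintro rfl; exact (by decide : ¬ Odd 2) hodd
    intro h0
    have : ((2:ℕ) : ZMod p) = 0 := by exact_mod_cast h0
    have hdvd := (ZMod.natCast_eq_zero_iff 2 p).mp this
    have := Nat.le_of_dvd (by norm_num) hdvd
    have := hp.two_le
    omega
  have inj : ∀ a b : ℕ, a < p → b < p → (a : ZMod p) = b → a = b := by
    intro a b ha hb hab
    have := congrArg ZMod.val hab
    rwa [ZMod.val_cast_of_lt ha, ZMod.val_cast_of_lt hb] at this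
  rcases mul_eq_zero.mp key with h0 | h0
  · left
    have e1 : (2:ZMod p) * i = 2 * i' := by linear_combination h0 + c1
    have e2 : (2:ZMod p) * j = 2 * j' := by linear_combination c1 - h0
    exact ⟨inj _ _ hi hi' (mul_left_cancel₀ two_ne e1),
           inj _ _ hj hj' (mul_left_cancel₀ two_ne e2)⟩
  · right
    have e1 : (2:ZMod p) * i = 2 * j' := by linear_combination h0 + c1
    have e2 : (2:ZMod p) * j = 2 * i' := by linear_combination c1 - h0
    exact ⟨inj _ _ hi hj' (mul_left_cancel₀ two_ne e1),
           inj _ _ hj hi' (mul_left_cancel₀ two_ne e2)⟩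

lemma sdiff_aux (p i j : ℕ) (hp0 : 0 < p) (hij : i < j) (hj : j < p) :
    2*p*i + i^2 % p + (p+1) ≤ 2*p*j + j^2 % p := by
  have r1 : i^2 % p < p := Nat.mod_lt _ hp0
  have hm : 2*p*(i+1) ≤ 2*p*j := Nat.mul_le_mul_left _ hij
  zify at hm r1 ⊢
  nlinarith [hm, Int.emod_nonneg ((j:ℤ)^2) (by exact_mod_cast hp0.ne' : (p:ℤ) ≠ 0)]

lemma within_abs (p i j : ℕ) (hp0 : 0 < p) (hij : i ≠ j) (hi : i < p) (hj : j < p) :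
    (p:ℤ) + 1 ≤ |((2*p*j + j^2 % p : ℕ):ℤ) - ((2*p*i + i^2 % p : ℕ):ℤ)| := by
  rcases hij.lt_or_gt with h | h
  · refine le_abs.mpr (Or.inl ?_)
    have : ((2*p*i + i^2 % p : ℕ):ℤ) + ((p:ℤ)+1) ≤ ((2*p*j + j^2 % p : ℕ):ℤ) := by
      exact_mod_cast sdiff_aux p i j hp0 h hj
    linarith
  · refine le_abs.mpr (Or.inr ?_)
    have : ((2*p*j + j^2 % p : ℕ):ℤ) + ((p:ℤ)+1) ≤ ((2*p*i + i^2 % p : ℕ):ℤ) := by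
      exact_mod_cast sdiff_aux p j i hp0 h hi
    linarith

lemma sval_le (p i : ℕ) (hp0 : 0 < p) (hi : i < p) :
    ((2*p*i + i^2 % p : ℕ) : ℤ) ≤ 2*(p:ℤ)^2 - p - 1 := by
  have r1 : i^2 % p < p := Nat.mod_lt _ hp0
  have hi' : i + 1 ≤ p := hi
  zify at r1 hi'
  push_cast
  nlinarith [Int.emod_nonneg ((i:ℤ)^2) (by exact_mod_cast hp0.ne' : (p:ℤ) ≠ 0)]

lemma split_aux (p K₁ K₂ K₃ K₄ S₁ S₂ S₃ S₄ : ℤ) (hp : 3 ≤ p)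
    (h1 : 0 ≤ S₁) (h1' : S₁ ≤ 2*p^2 - p - 1)
    (h2 : 0 ≤ S₂) (h2' : S₂ ≤ 2*p^2 - p - 1)
    (h3 : 0 ≤ S₃) (h3' : S₃ ≤ 2*p^2 - p - 1)
    (h4 : 0 ≤ S₄) (h4' : S₄ ≤ 2*p^2 - p - 1)
    (heq : 4*p^2*K₁ + S₁ + (4*p^2*K₂ + S₂) = 4*p^2*K₃ + S₃ + (4*p^2*K₄ + S₄)) :
    S₁ + S₂ = S₃ + S₄ := by
  have hD : 4*p^2*(K₁+K₂-K₃-K₄) = S₃+S₄-S₁-S₂ := by linear_combination heq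
  have hDz : K₁+K₂-K₃-K₄ = 0 := by
    rcases lt_trichotomy (K₁+K₂-K₃-K₄) 0 with h | h | h
    · exfalso
      have h' : K₁+K₂-K₃-K₄ ≤ -1 := by omega
      nlinarith [mul_le_mul_of_nonneg_left h' (show (0:ℤ) ≤ 4*p^2 by positivity)]
    · exact h
    · exfalso
      have h' : 1 ≤ K₁+K₂-K₃-K₄ := by omega
      nlinarith [mul_le_mul_of_nonneg_left h' (show (0:ℤ) ≤ 4*p^2 by positivity)]
  rw [hDz, mul_zero] at hD
  linarith

lemma cross_abs (p K K' S S' : ℤ) (hp : 3 ≤ p)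
    (hK : K + 1 ≤ K' ∨ K' + 1 ≤ K)
    (h1 : 0 ≤ S) (h2 : S ≤ 2*p^2 - p - 1) (h3 : 0 ≤ S') (h4 : S' ≤ 2*p^2 - p - 1) :
    2*p^2 + p + 1 ≤ |(4*p^2*K' + S') - (4*p^2*K + S)| := by
  rcases hK with h | h
  · refine le_abs.mpr (Or.inl ?_)
    nlinarith [mul_le_mul_of_nonneg_left h (show (0:ℤ) ≤ 4*p^2 by positivity)]
  · refine le_abs.mpr (Or.inr ?_)
    nlinarith [mul_le_mul_of_nonneg_left h (show (0:ℤ) ≤ 4*p^2 by positivity)]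

lemma bnd1 (P : ℤ) (h : 3 ≤ P) : 4*P^3 ≤ (P+1)*(4*P^2) := by nlinarith

lemma bnd2 (P : ℤ) (h : 3 ≤ P) : 4*P^3 ≤ (4*P^2)*(P+1) := by nlinarith

lemma bnd3 (P : ℤ) (h : 3 ≤ P) : 4*P^3 ≤ (2*P^2+P+1)*(2*P^2+P+1) := by nlinarith

lemma blockdiff (P K K' : ℤ) (hP : 3 ≤ P) (h : K + 1 ≤ K') : 4*P^2 ≤ 4*P^2*(K' - K) := by
  nlinarith

set_option maxHeartbeats 1000000 in
/-- For an odd prime `p`, `m = 2p²`, `S` the Erdős–Turán Sidon set and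
`A_n = ⋃_{k=1}^n (2km + S)`: if `a₁ + a₂ = a₃ + a₄` with all `aᵢ ∈ A_n` and
`a₁a₂ ≠ a₃a₄`, then `|a₁a₂ - a₃a₄| ≥ 4p³`. -/
theorem stmt14 (p : ℕ) (hp : p.Prime) (hodd : Odd p) (m : ℕ) (hm : m = 2 * p ^ 2)
    (S : Finset ℕ) (hS : S = (Finset.range p).image fun i => 2 * p * i + i ^ 2 % p)
    (n : ℕ) (hn : 1 ≤ n) (An : Finset ℕ)
    (hAn : An = (Finset.Icc 1 n).biUnion fun k => S.image fun s => 2 * k * m + s)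
    (a₁ a₂ a₃ a₄ : ℕ) (h₁ : a₁ ∈ An) (h₂ : a₂ ∈ An) (h₃ : a₃ ∈ An) (h₄ : a₄ ∈ An)
    (hsum : a₁ + a₂ = a₃ + a₄) (hne : a₁ * a₂ ≠ a₃ * a₄) :
    (4 * p ^ 3 : ℤ) ≤ |(a₁ * a₂ : ℤ) - (a₃ * a₄ : ℤ)| := by
  have hp0 : 0 < p := hp.pos
  have hpne2 : p ≠ 2 := by rintro rfl; exact (by decide : ¬ Odd 2) hodd
  have hp3 : 3 ≤ p := by have := hp.two_le; omega
  have hp3z : (3:ℤ) ≤ (p:ℤ) := by exact_mod_cast hp3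
  have hmem : ∀ a ∈ An, ∃ k i, 1 ≤ k ∧ k ≤ n ∧ i < p ∧
      a = 2*k*(2*p^2) + (2*p*i + i^2 % p) := by
    subst hAn hS hm
    intro a ha
    simp only [Finset.mem_biUnion, Finset.mem_Icc, Finset.mem_image, Finset.mem_range] at ha
    obtain ⟨k, ⟨hk1, hk2⟩, s, ⟨i, hip, rfl⟩, rfl⟩ := ha
    exact ⟨k, i, hk1, hk2, hip, rfl⟩
  obtain ⟨k₁, i₁, hk₁, -, hi₁, he₁⟩ := hmem a₁ h₁
  obtain ⟨k₂, i₂, hk₂, -, hi₂, he₂⟩ := hmem a₂ h₂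
  obtain ⟨k₃, i₃, hk₃, -, hi₃, he₃⟩ := hmem a₃ h₃
  obtain ⟨k₄, i₄, hk₄, -, hi₄, he₄⟩ := hmem a₄ h₄
  set P : ℤ := (p : ℤ) with hPdef
  set S₁ : ℤ := ((2*p*i₁ + i₁^2 % p : ℕ) : ℤ) with hS₁
  set S₂ : ℤ := ((2*p*i₂ + i₂^2 % p : ℕ) : ℤ) with hS₂
  set S₃ : ℤ := ((2*p*i₃ + i₃^2 % p : ℕ) : ℤ) with hS₃
  set S₄ : ℤ := ((2*p*i₄ + i₄^2 % p : ℕ) : ℤ) with hS₄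
  have hz₁ : (a₁:ℤ) = 4*P^2*(k₁:ℤ) + S₁ := by rw [he₁, hS₁, hPdef]; push_cast; ring
  have hz₂ : (a₂:ℤ) = 4*P^2*(k₂:ℤ) + S₂ := by rw [he₂, hS₂, hPdef]; push_cast; ring
  have hz₃ : (a₃:ℤ) = 4*P^2*(k₃:ℤ) + S₃ := by rw [he₃, hS₃, hPdef]; push_cast; ring
  have hz₄ : (a₄:ℤ) = 4*P^2*(k₄:ℤ) + S₄ := by rw [he₄, hS₄, hPdef]; push_cast; ring
  have hb₁ : 0 ≤ S₁ ∧ S₁ ≤ 2*P^2 - P - 1 :=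
    ⟨by rw [hS₁]; positivity, by rw [hS₁, hPdef]; exact sval_le p i₁ hp0 hi₁⟩
  have hb₂ : 0 ≤ S₂ ∧ S₂ ≤ 2*P^2 - P - 1 :=
    ⟨by rw [hS₂]; positivity, by rw [hS₂, hPdef]; exact sval_le p i₂ hp0 hi₂⟩
  have hb₃ : 0 ≤ S₃ ∧ S₃ ≤ 2*P^2 - P - 1 :=
    ⟨by rw [hS₃]; positivity, by rw [hS₃, hPdef]; exact sval_le p i₃ hp0 hi₃⟩
  have hb₄ : 0 ≤ S₄ ∧ S₄ ≤ 2*P^2 - P - 1 :=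
    ⟨by rw [hS₄]; positivity, by rw [hS₄, hPdef]; exact sval_le p i₄ hp0 hi₄⟩
  have hsumZ : (a₁:ℤ) + a₂ = a₃ + a₄ := by exact_mod_cast hsum
  rw [hz₁, hz₂, hz₃, hz₄] at hsumZ
  have hSsum : S₁ + S₂ = S₃ + S₄ :=
    split_aux P _ _ _ _ _ _ _ _ hp3z hb₁.1 hb₁.2 hb₂.1 hb₂.2 hb₃.1 hb₃.2 hb₄.1 hb₄.2 hsumZ
  have hSsumN : 2*p*i₁ + i₁^2 % p + (2*p*i₂ + i₂^2 % p)
      = 2*p*i₃ + i₃^2 % p + (2*p*i₄ + i₄^2 % p) := by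
    rw [hS₁, hS₂, hS₃, hS₄] at hSsum
    exact_mod_cast hSsum
  have hsid := sidon_aux p hp hodd hi₁ hi₂ hi₃ hi₄ hSsumN
  set x : ℤ := (a₃:ℤ) - a₁ with hxd
  set y : ℤ := (a₄:ℤ) - a₁ with hyd
  have ha₂' : (a₂:ℤ) = a₃ + a₄ - a₁ := by
    have : (a₁:ℤ) + a₂ = a₃ + a₄ := by exact_mod_cast hsum
    linarith
  have hprod : (a₁:ℤ) * a₂ - (a₃:ℤ) * a₄ = -(x*y) := by rw [ha₂', hxd, hyd]; ring
  have hneZ : (a₁:ℤ) * a₂ ≠ (a₃:ℤ) * a₄ := fun h0 => hne (by exact_mod_cast h0)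
  have hxy0 : x * y ≠ 0 := by
    intro h0
    apply hneZ
    rw [h0] at hprod
    linarith
  have hx0 : x ≠ 0 := left_ne_zero_of_mul hxy0
  have hy0 : y ≠ 0 := right_ne_zero_of_mul hxy0
  rw [hprod, abs_neg, abs_mul]
  by_cases h13 : k₁ = k₃
  · by_cases h14 : k₁ = k₄
    · exfalso
      rcases hsid with ⟨e1, -⟩ | ⟨e1, -⟩
      · apply hx0
        have hSe : S₁ = S₃ := by rw [hS₁, hS₃, e1]
        rw [hxd, hz₁, hz₃, hSe, h13]; ring
      · apply hy0
        have hSe : S₁ = S₄ := by rw [hS₁, hS₄, e1]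
        rw [hyd, hz₁, hz₄, hSe, h14]; ring
    · -- within-block for x, cross-block for y
      have hxS : x = S₃ - S₁ := by rw [hxd, hz₁, hz₃, h13]; ring
      have hi13 : i₁ ≠ i₃ := by
        rintro rfl
        apply hx0
        have hSe : S₁ = S₃ := by rw [hS₁, hS₃]
        rw [hxS, hSe]; ring
      rcases hsid with ⟨e1, -⟩ | ⟨e1, -⟩
      · exact absurd e1 hi13
      · have hS14 : S₁ = S₄ := by rw [hS₁, hS₄, e1]
        have hyv : y = 4*P^2*((k₄:ℤ) - (k₁:ℤ)) := by rw [hyd, hz₁, hz₄, ← hS14]; ring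
        have hyb : 4*P^2 ≤ |y| := by
          rcases (Ne.lt_or_gt h14) with hlt | hlt
          · refine le_abs.mpr (Or.inl ?_)
            have hk := blockdiff P (k₁:ℤ) (k₄:ℤ) hp3z (by exact_mod_cast hlt)
            rw [hyv]; linarith
          · refine le_abs.mpr (Or.inr ?_)
            have hk := blockdiff P (k₄:ℤ) (k₁:ℤ) hp3z (by exact_mod_cast hlt)
            rw [hyv]; linarith
        have hxb : P + 1 ≤ |x| := by
          rw [hxS, hS₁, hS₃, hPdef]
          exact within_abs p i₁ i₃ hp0 hi13 hi₁ hi₃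
        calc (4:ℤ) * P^3 ≤ (P+1) * (4*P^2) := bnd1 P hp3z
          _ ≤ |x| * |y| := mul_le_mul hxb hyb (by positivity) (abs_nonneg x)
  · by_cases h14 : k₁ = k₄
    · -- cross-block for x, within-block for y
      have hyS : y = S₄ - S₁ := by rw [hyd, hz₁, hz₄, h14]; ring
      have hi14 : i₁ ≠ i₄ := by
        rintro rfl
        apply hy0
        have hSe : S₁ = S₄ := by rw [hS₁, hS₄]
        rw [hyS, hSe]; ring
      rcases hsid with ⟨e1, -⟩ | ⟨e1, -⟩
      · have hS13 : S₁ = S₃ := by rw [hS₁, hS₃, e1]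
        have hxv : x = 4*P^2*((k₃:ℤ) - (k₁:ℤ)) := by rw [hxd, hz₁, hz₃, ← hS13]; ring
        have hxb : 4*P^2 ≤ |x| := by
          rcases (Ne.lt_or_gt h13) with hlt | hlt
          · refine le_abs.mpr (Or.inl ?_)
            have hk := blockdiff P (k₁:ℤ) (k₃:ℤ) hp3z (by exact_mod_cast hlt)
            rw [hxv]; linarith
          · refine le_abs.mpr (Or.inr ?_)
            have hk := blockdiff P (k₃:ℤ) (k₁:ℤ) hp3z (by exact_mod_cast hlt)
            rw [hxv]; linarith
        have hyb : P + 1 ≤ |y| := by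
          rw [hyS, hS₁, hS₄, hPdef]
          exact within_abs p i₁ i₄ hp0 hi14 hi₁ hi₄
        calc (4:ℤ) * P^3 ≤ (4*P^2) * (P+1) := bnd2 P hp3z
          _ ≤ |x| * |y| := mul_le_mul hxb hyb (by positivity) (abs_nonneg x)
      · exact absurd e1 hi14
    · -- both cross-block
      have hxe : x = (4*P^2*(k₃:ℤ) + S₃) - (4*P^2*(k₁:ℤ) + S₁) := by rw [hxd, hz₁, hz₃]
      have hye : y = (4*P^2*(k₄:ℤ) + S₄) - (4*P^2*(k₁:ℤ) + S₁) := by rw [hyd, hz₁, hz₄]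
      have hk13 : (k₁:ℤ) + 1 ≤ (k₃:ℤ) ∨ (k₃:ℤ) + 1 ≤ (k₁:ℤ) := by
        rcases (Ne.lt_or_gt h13) with h | h
        · exact Or.inl (by exact_mod_cast h)
        · exact Or.inr (by exact_mod_cast h)
      have hk14 : (k₁:ℤ) + 1 ≤ (k₄:ℤ) ∨ (k₄:ℤ) + 1 ≤ (k₁:ℤ) := by
        rcases (Ne.lt_or_gt h14) with h | h
        · exact Or.inl (by exact_mod_cast h)
        · exact Or.inr (by exact_mod_cast h)
      have hxb : 2*P^2 + P + 1 ≤ |x| := by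
        rw [hxe]
        exact cross_abs P _ _ _ _ hp3z hk13 hb₁.1 hb₁.2 hb₃.1 hb₃.2
      have hyb : 2*P^2 + P + 1 ≤ |y| := by
        rw [hye]
        exact cross_abs P _ _ _ _ hp3z hk14 hb₁.1 hb₁.2 hb₄.1 hb₄.2
      calc (4:ℤ) * P^3 ≤ (2*P^2 + P + 1) * (2*P^2 + P + 1) := bnd3 P hp3z
        _ ≤ |x| * |y| := mul_le_mul hxb hyb (by positivity) (abs_nonneg x)
end

section
/- Let x_n, A_n, A be as in the block construction with A_n = {1, ..., n} and x_1 = t², for an integer t ≥ 7. If c_0·c_0', ..., c_t·c_t' are t+1 distinct elements of A·A with all c_i, c_i' lying in the same block x_n + A_n, then there exist indices i ≠ j with |c_i·c_i' - c_j·c_j'| ≥ t²/36. -/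
private lemma gap_lemma16 {t : ℕ} (f : Fin (t+1) → ℕ) (hf : Function.Injective f) :
    ∃ i j, f j + t ≤ f i := by
  obtain ⟨i, hi⟩ := Finite.exists_max f
  obtain ⟨j, hj⟩ := Finite.exists_min f
  refine ⟨i, j, ?_⟩
  have hsub : Finset.univ.image f ⊆ Finset.Icc (f j) (f i) := by
    intro y hy
    simp only [Finset.mem_image] at hy
    obtain ⟨k, _, rfl⟩ := hy
    exact Finset.mem_Icc.mpr ⟨hj k, hi k⟩
  have hcard := Finset.card_le_card hsub
  rw [Finset.card_image_of_injective _ hf, Nat.card_Icc] at hcard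
  simp at hcard
  omega

set_option maxHeartbeats 1000000 in
/-- Block construction with `A n = {1, …, n}` and `x 1 = t²`, `t ≥ 7`: among any
`t + 1` distinct products `cᵢ cᵢ'` with all factors in the same block
`x n + {1, …, n}`, two differ by at least `t²/36`. -/
theorem stmt16 (t : ℕ) (ht : 7 ≤ t)
    (x : ℕ → ℕ) (hx1 : x 1 = t ^ 2)
    (hx : ∀ n, 2 ≤ n →
      x n = x 1 + n ^ 2 + n * (x (n - 1) + (n - 1)) + (x (n - 1) + (n - 1)) ^ 2)
    (n : ℕ) (hn : 1 ≤ n) (c c' : Fin (t + 1) → ℕ)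
    (hc : ∀ i, ∃ a ∈ Finset.Icc 1 n, c i = x n + a)
    (hc' : ∀ i, ∃ a ∈ Finset.Icc 1 n, c' i = x n + a)
    (hdist : Function.Injective fun i => c i * c' i) :
    ∃ i j, i ≠ j ∧ (t : ℝ) ^ 2 / 36 ≤ |(c i * c' i : ℝ) - (c j * c' j : ℝ)| := by
  choose a ha hca using hc
  choose b hb hcb using hc'
  simp only [Finset.mem_Icc] at ha hb
  have hX : t ^ 2 + n ^ 2 ≤ x n + 1 := by
    rcases eq_or_lt_of_le hn with h1 | h2
    · rw [← h1, hx1]; nlinarith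
    · have h := hx n h2
      rw [hx1] at h
      nlinarith
  have hXr : (t : ℝ) ^ 2 + (n : ℝ) ^ 2 - 1 ≤ (x n : ℝ) := by
    have h := (Nat.cast_le (α := ℝ)).mpr hX
    push_cast at h
    linarith
  by_cases hS : ∀ i j, a i + b i = a j + b j
  · -- all sums equal
    set d : Fin (t+1) → ℕ := fun i => ((a i : ℤ) - b i).natAbs with hd
    have hdsq : ∀ i, ((d i : ℝ)) ^ 2 = ((a i : ℝ) - b i) ^ 2 := by
      intro i
      have : ((d i : ℤ)) ^ 2 = ((a i : ℤ) - b i) ^ 2 := by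
        simp only [hd]
        rw [sq, sq, Int.natAbs_mul_self']
      exact_mod_cast congrArg (fun z : ℤ => (z : ℝ)) this
    have hdinj : Function.Injective d := by
      intro i j hij
      apply hdist
      have hsq : ((a i : ℤ) - b i) ^ 2 = ((a j : ℤ) - b j) ^ 2 := by
        have h1 : ((d i : ℤ)) ^ 2 = ((a i : ℤ) - b i) ^ 2 := by
          simp only [hd]; rw [sq, sq, Int.natAbs_mul_self']
        have h2 : ((d j : ℤ)) ^ 2 = ((a j : ℤ) - b j) ^ 2 := by
          simp only [hd]; rw [sq, sq, Int.natAbs_mul_self']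
        rw [← h1, ← h2, hij]
      have hs : ((a i : ℤ) + b i) = (a j : ℤ) + b j := by exact_mod_cast hS i j
      have hab' : (a i : ℤ) * b i = (a j : ℤ) * b j := by nlinarith [hsq, hs]
      have hab : a i * b i = a j * b j := by exact_mod_cast hab'
      show c i * c' i = c j * c' j
      rw [hca i, hcb i, hca j, hcb j]
      calc (x n + a i) * (x n + b i)
          = x n * x n + (a i + b i) * x n + a i * b i := by ring
        _ = x n * x n + (a j + b j) * x n + a j * b j := by rw [hS i j, hab]
        _ = (x n + a j) * (x n + b j) := by ring
    obtain ⟨i, j, hij⟩ := gap_lemma16 d hdinj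
    have hne : i ≠ j := by
      intro h; subst h; omega
    refine ⟨i, j, hne, ?_⟩
    have hdiff : (c i * c' i : ℝ) - (c j * c' j : ℝ)
        = ((d j : ℝ) ^ 2 - (d i : ℝ) ^ 2) / 4 := by
      rw [hca i, hcb i, hca j, hcb j]
      have hs : (a i : ℝ) + b i = (a j : ℝ) + b j := by exact_mod_cast hS i j
      have h1 := hdsq i
      have h2 := hdsq j
      push_cast
      linear_combination (h1 - h2) / 4 + hs * ((x n : ℝ) + ((a i : ℝ) + b i + a j + b j) / 4)
    rw [hdiff]
    have hdr : (d j : ℝ) + t ≤ (d i : ℝ) := by exact_mod_cast hij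
    have hdj : (0 : ℝ) ≤ (d j : ℝ) := by positivity
    have htr : (7 : ℝ) ≤ (t : ℝ) := by exact_mod_cast ht
    have hdin : (0 : ℝ) ≤ (d i : ℝ) := by positivity
    have hmul : ((d j : ℝ) + t) * ((d j : ℝ) + t) ≤ (d i : ℝ) * (d i : ℝ) :=
      mul_le_mul hdr hdr (by linarith) hdin
    have htdj : (0 : ℝ) ≤ (t : ℝ) * (d j : ℝ) := by positivity
    have h8 : (d j : ℝ) ^ 2 + (t : ℝ) ^ 2 ≤ (d i : ℝ) ^ 2 := by nlinarith [hmul, htdj]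
    rw [abs_of_nonpos (by nlinarith [htr, h8] : ((d j : ℝ) ^ 2 - (d i : ℝ) ^ 2) / 4 ≤ 0)]
    have h9 : (t : ℝ) ^ 2 / 36 ≤ (t : ℝ) ^ 2 / 4 := by nlinarith [htr]
    linarith
  · push_neg at hS
    obtain ⟨i, j, hne⟩ := hS
    have key : ∀ i j : Fin (t+1), a j + b j < a i + b i →
        (t : ℝ) ^ 2 / 36 ≤ |(c i * c' i : ℝ) - (c j * c' j : ℝ)| := by
      intro i j hlt
      have h1 : (1 : ℝ) ≤ a i := by exact_mod_cast (ha i).1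
      have h2 : (1 : ℝ) ≤ b i := by exact_mod_cast (hb i).1
      have h3 : (a j : ℝ) ≤ n := by exact_mod_cast (ha j).2
      have h4 : (b j : ℝ) ≤ n := by exact_mod_cast (hb j).2
      have h5 : (1 : ℝ) ≤ a j := by exact_mod_cast (ha j).1
      have h6 : (1 : ℝ) ≤ b j := by exact_mod_cast (hb j).1
      have hlt' : (a j : ℝ) + b j + 1 ≤ (a i : ℝ) + b i := by exact_mod_cast hlt
      have hXnn : (0 : ℝ) ≤ (x n : ℝ) := by positivity
      have htr : (7 : ℝ) ≤ (t : ℝ) := by exact_mod_cast ht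
      have hbig : (t : ℝ) ^ 2 ≤ (c i * c' i : ℝ) - (c j * c' j : ℝ) := by
        rw [hca i, hcb i, hca j, hcb j]
        push_cast
        nlinarith [mul_le_mul_of_nonneg_right hlt' hXnn,
          mul_le_mul h3 h4 (by linarith) (by linarith : (0:ℝ) ≤ (n:ℝ)),
          mul_le_mul h1 h2 (by norm_num) (by linarith)]
      have h10 := le_abs_self ((c i * c' i : ℝ) - (c j * c' j : ℝ))
      have h11 : (t : ℝ) ^ 2 / 36 ≤ (t : ℝ) ^ 2 := by nlinarith [htr]
      linarith
    rcases lt_or_gt_of_ne hne with h | h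
    · have hij : i ≠ j := by intro hh; subst hh; omega
      exact ⟨j, i, hij.symm, key j i h⟩
    · have hij : i ≠ j := by intro hh; subst hh; omega
      exact ⟨i, j, hij, key i j h⟩
end
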